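/- arXiv:1206.5705 — 11 statements merged into one kernel-verified Lean document; each statement's English description precedes it below -/
import Mathlib

section
/- Let H be a real Hilbert space, α ∈ ]0,+∞[, let (ηₙ) be a summable sequence in [0,+∞[, and let (Wₙ) be a sequence of bounded self-adjoint operators on H with Wₙ ≽ α·Id for all n and sup_n ‖Wₙ‖ < +∞. Suppose (1+ηₙ)Wₙ ≽ Wₙ₊₁ for all n. Then there exists a bounded self-adjoint operator W with W ≽ α·Id such that Wₙx → Wx (strongly) for every x ∈ H. -/
open Filter Topology

lemma cs_pos_aux {H : Type*} [NormedAddCommGroup H] [InnerProductSpace ℝ H]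
    (A : H →L[ℝ] H) (hsymm : ∀ x y : H, (inner ℝ (A x) y : ℝ) = inner ℝ x (A y))
    (hpos : ∀ x : H, 0 ≤ (inner ℝ (A x) x : ℝ)) (x : H) :
    ‖A x‖ ^ 2 ≤ ‖A‖ * (inner ℝ (A x) x : ℝ) := by
  have cs : ∀ y : H, (inner ℝ (A x) y : ℝ) ^ 2 ≤ (inner ℝ (A x) x : ℝ) * (inner ℝ (A y) y : ℝ) := by
    intro y
    have hq : ∀ t : ℝ, 0 ≤ (inner ℝ (A y) y : ℝ) * (t * t) + (2 * (inner ℝ (A x) y : ℝ)) * t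
        + (inner ℝ (A x) x : ℝ) := by
      intro t
      have h0 := hpos (x + t • y)
      have expand : (inner ℝ (A (x + t • y)) (x + t • y) : ℝ)
          = (inner ℝ (A y) y : ℝ) * (t * t) + (2 * (inner ℝ (A x) y : ℝ)) * t
            + (inner ℝ (A x) x : ℝ) := by
        have hyx : (inner ℝ (A y) x : ℝ) = (inner ℝ (A x) y : ℝ) := by
          rw [hsymm y x, real_inner_comm]
        simp only [map_add, map_smul, inner_add_left, inner_add_right,
          real_inner_smul_left, real_inner_smul_right, hyx]
        ring
      linarith [expand ▸ h0]
    have hd := discrim_le_zero hq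
    rw [discrim] at hd
    nlinarith [hd]
  rcases eq_or_lt_of_le (norm_nonneg (A x)) with h0 | h0
  · rw [← h0]
    simpa using mul_nonneg (norm_nonneg A) (hpos x)
  · have key := cs (A x)
    have h1 : (inner ℝ (A x) (A x) : ℝ) = ‖A x‖ ^ 2 := real_inner_self_eq_norm_sq _
    have h2 : (inner ℝ (A (A x)) (A x) : ℝ) ≤ ‖A‖ * ‖A x‖ * ‖A x‖ := by
      calc (inner ℝ (A (A x)) (A x) : ℝ) ≤ ‖A (A x)‖ * ‖A x‖ := real_inner_le_norm _ _
        _ ≤ ‖A‖ * ‖A x‖ * ‖A x‖ := by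
            have := A.le_opNorm (A x)
            nlinarith [norm_nonneg (A x)]
    have hpx := hpos x
    have hc0 := hpos (A x)
    have step : ‖A x‖ ^ 2 * ‖A x‖ ^ 2 ≤ (‖A‖ * (inner ℝ (A x) x : ℝ)) * ‖A x‖ ^ 2 := by
      nlinarith [mul_le_mul_of_nonneg_left h2 hpx]
    have h02 : (0:ℝ) < ‖A x‖ ^ 2 := by positivity
    exact le_of_mul_le_mul_right step h02

set_option maxHeartbeats 2000000 in
theorem stmt_3 {H : Type*} [NormedAddCommGroup H] [InnerProductSpace ℝ H] [CompleteSpace H]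
    (α : ℝ) (hα : 0 < α)
    (η : ℕ → ℝ) (hη0 : ∀ n, 0 ≤ η n) (hη : Summable η)
    (W : ℕ → H →L[ℝ] H) (hsa : ∀ n, IsSelfAdjoint (W n))
    (hlb : ∀ n (x : H), α * ‖x‖ ^ 2 ≤ (inner ℝ (W n x) x : ℝ))
    (hbd : ∃ μ : ℝ, ∀ n, ‖W n‖ ≤ μ)
    (hmono : ∀ n (x : H), (inner ℝ (W (n + 1) x) x : ℝ) ≤ (1 + η n) * (inner ℝ (W n x) x : ℝ)) :
    ∃ Wl : H →L[ℝ] H, IsSelfAdjoint Wl ∧ (∀ x : H, α * ‖x‖ ^ 2 ≤ (inner ℝ (Wl x) x : ℝ)) ∧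
      ∀ x : H, Tendsto (fun n => W n x) atTop (𝓝 (Wl x)) := by
  obtain ⟨μ, hμ⟩ := hbd
  have hμ0 : 0 ≤ μ := le_trans (norm_nonneg (W 0)) (hμ 0)
  set S : ℝ := ∑' n, η n with hS
  set r : ℕ → ℝ := fun m => ∑' k, η (k + m) with hrdef
  set c : ℕ → ℝ := fun n => ∑ k ∈ Finset.range n, η k with hcdef
  have hr0 : ∀ m, 0 ≤ r m := fun m => tsum_nonneg fun k => hη0 _
  have hcr : ∀ n, c n + r n = S := fun n => Summable.sum_add_tsum_nat_add n hη
  have hcmono : Monotone c := fun m n hmn =>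
    Finset.sum_le_sum_of_subset_of_nonneg (Finset.range_subset_range.mpr hmn) fun i _ _ => hη0 i
  have hrmono : Antitone r := fun m n hmn => by
    have h1 := hcr m; have h2 := hcr n; have := hcmono hmn; linarith
  have hcS : ∀ n, c n ≤ S := fun n => by have := hcr n; have := hr0 n; linarith
  have hrtend : Tendsto r atTop (𝓝 0) := tendsto_sum_nat_add η
  set q : ℕ → H → ℝ := fun n x => (inner ℝ (W n x) x : ℝ) with hqdef
  have hq0 : ∀ n (x : H), 0 ≤ q n x := fun n x => le_trans (by positivity) (hlb n x)
  have hqK : ∀ n (x : H), q n x ≤ μ * ‖x‖ ^ 2 := by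
    intro n x
    calc q n x ≤ ‖W n x‖ * ‖x‖ := real_inner_le_norm _ _
      _ ≤ (μ * ‖x‖) * ‖x‖ := by
          have h1 := (W n).le_opNorm x
          have h2 := hμ n
          have h3 : ‖W n x‖ ≤ μ * ‖x‖ :=
            h1.trans (mul_le_mul_of_nonneg_right h2 (norm_nonneg x))
          exact mul_le_mul_of_nonneg_right h3 (norm_nonneg x)
      _ = μ * ‖x‖ ^ 2 := by ring
  have hstep : ∀ n (x : H), q (n + 1) x ≤ q n x + η n * (μ * ‖x‖ ^ 2) := by
    intro n x
    have h1 := hmono n x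
    have h2 := hqK n x
    have h3 := hη0 n
    have h4 := hq0 n x
    nlinarith [mul_le_mul_of_nonneg_left h2 h3]
  -- per-x convergence and inequalities
  have hx : ∀ x : H, ∃ L : ℝ, Tendsto (fun n => q n x) atTop (𝓝 L) ∧
      ∀ m n, m ≤ n → q n x ≤ q m x + r m * (μ * ‖x‖ ^ 2) ∧
        q m x - q n x ≤ (q m x - L) + r m * (μ * ‖x‖ ^ 2) := by
    intro x
    set K : ℝ := μ * ‖x‖ ^ 2 with hKdef
    have hK0 : 0 ≤ K := by positivity
    set a : ℕ → ℝ := fun n => q n x - c n * K with hadef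
    have hamono : Antitone a := antitone_nat_of_succ_le fun n => by
      have h1 := hstep n x
      have h2 : c (n + 1) = c n + η n := Finset.sum_range_succ _ _
      rw [← hKdef] at h1
      simp only [hadef]
      rw [h2]
      nlinarith
    have habdd : BddBelow (Set.range a) := by
      refine ⟨-(S * K), ?_⟩
      rintro _ ⟨n, rfl⟩
      have h1 := hq0 n x
      have h2 := hcS n
      simp only [hadef]
      nlinarith
    have hatend : Tendsto a atTop (𝓝 (⨅ n, a n)) := tendsto_atTop_ciInf hamono habdd
    set La : ℝ := ⨅ n, a n with hLa
    have haLa : ∀ n, La ≤ a n := fun n => ciInf_le habdd n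
    refine ⟨La + S * K, ?_, ?_⟩
    · have hctend : Tendsto c atTop (𝓝 S) := hη.hasSum.tendsto_sum_nat
      have h := hatend.add (hctend.mul_const K)
      have heq : (fun n => a n + c n * K) = fun n => q n x := by
        funext n; simp only [hadef]; ring
      rw [heq] at h
      exact h
    · intro m n hmn
      have h1 : a n ≤ a m := hamono hmn
      have h2 : La ≤ a n := haLa n
      have h3 : c m ≤ c n := hcmono hmn
      have h4 : c n ≤ S := hcS n
      have h5 := hcr m
      have h6 := mul_le_mul_of_nonneg_right h3 hK0
      have h7 := mul_le_mul_of_nonneg_right h4 hK0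
      constructor
      · simp only [hadef] at h1; nlinarith
      · simp only [hadef] at h2; nlinarith
  choose L hL1 hL2 using hx
  set C : ℝ := 2 * μ + μ * r 0 with hCdef
  have hC0 : 0 ≤ C := by
    have := hr0 0
    nlinarith
  -- Cauchy sequences
  have hcauchy : ∀ x : H, CauchySeq fun n => W n x := by
    intro x
    have hK0 : 0 ≤ μ * ‖x‖ ^ 2 := by positivity
    set b : ℕ → ℝ := fun N =>
      r N * (μ * ‖x‖) + Real.sqrt (C * ((q N x - L x) + 3 * (r N * (μ * ‖x‖ ^ 2)))) with hbdef
    have hbtend : Tendsto b atTop (𝓝 0) := by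
      have h1 : Tendsto (fun N => r N * (μ * ‖x‖)) atTop (𝓝 0) := by
        simpa using hrtend.mul_const (μ * ‖x‖)
      have h2 : Tendsto (fun N => C * ((q N x - L x) + 3 * (r N * (μ * ‖x‖ ^ 2)))) atTop
          (𝓝 (C * ((L x - L x) + 3 * (0 * (μ * ‖x‖ ^ 2))))) :=
        tendsto_const_nhds.mul (((hL1 x).sub_const (L x)).add
          ((hrtend.mul_const (μ * ‖x‖ ^ 2)).const_mul 3))
      have h3 : Tendsto (fun N => Real.sqrt (C * ((q N x - L x) + 3 * (r N * (μ * ‖x‖ ^ 2))))) atTop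
          (𝓝 0) := by
        have := h2.sqrt
        simpa using this
      simpa using h1.add h3
    refine cauchySeq_of_le_tendsto_0 b ?_ hbtend
    have main : ∀ p s N, N ≤ p → p ≤ s → dist (W p x) (W s x) ≤ b N := by
      intro p s N hNp hps
      set A : H →L[ℝ] H := W p - W s + (μ * r p) • (1 : H →L[ℝ] H) with hAdef
      have hAsa : IsSelfAdjoint A :=
        ((hsa p).sub (hsa s)).add (IsSelfAdjoint.smul (star_trivial _) (IsSelfAdjoint.one (H →L[ℝ] H)))
      have hAsymm : ∀ y z : H, (inner ℝ (A y) z : ℝ) = inner ℝ y (A z) := fun y z =>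
        (ContinuousLinearMap.isSelfAdjoint_iff_isSymmetric.mp hAsa) y z
      have hAval : ∀ y : H, (inner ℝ (A y) y : ℝ) = q p y - q s y + (μ * r p) * ‖y‖ ^ 2 := by
        intro y
        simp only [hAdef, ContinuousLinearMap.add_apply, ContinuousLinearMap.sub_apply,
          ContinuousLinearMap.smul_apply, ContinuousLinearMap.one_apply,
          inner_add_left, inner_sub_left, real_inner_smul_left,
          real_inner_self_eq_norm_sq, hqdef]
      have hApos : ∀ y : H, 0 ≤ (inner ℝ (A y) y : ℝ) := by
        intro y
        rw [hAval]
        have h := (hL2 y p s hps).1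
        nlinarith
      have hAnorm : ‖A‖ ≤ C := by
        have h1 : ‖A‖ ≤ ‖W p - W s‖ + ‖(μ * r p) • (1 : H →L[ℝ] H)‖ := norm_add_le _ _
        have h2 : ‖W p - W s‖ ≤ ‖W p‖ + ‖W s‖ := norm_sub_le _ _
        have h3 : ‖(μ * r p) • (1 : H →L[ℝ] H)‖ ≤ μ * r p := by
          have h4 : ‖(μ * r p) • (1 : H →L[ℝ] H)‖ ≤ ‖(μ * r p : ℝ)‖ * ‖(1 : H →L[ℝ] H)‖ :=
            ContinuousLinearMap.opNorm_smul_le _ _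
          have h5 : ‖(1 : H →L[ℝ] H)‖ ≤ 1 := ContinuousLinearMap.norm_id_le
          have h6 : 0 ≤ μ * r p := mul_nonneg hμ0 (hr0 p)
          have h7 : ‖(μ * r p : ℝ)‖ = μ * r p := by
            rw [Real.norm_eq_abs, abs_of_nonneg h6]
          rw [h7] at h4
          nlinarith [norm_nonneg (1 : H →L[ℝ] H), h4]
        have h6 := hμ p; have h7 := hμ s
        have h8 : r p ≤ r 0 := hrmono (Nat.zero_le p)
        have h9 : μ * r p ≤ μ * r 0 := mul_le_mul_of_nonneg_left h8 hμ0
        simp only [hCdef]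
        linarith
      have key := cs_pos_aux A hAsymm hApos x
      have hinner : (inner ℝ (A x) x : ℝ) ≤ (q N x - L x) + 3 * (r N * (μ * ‖x‖ ^ 2)) := by
        have hv := hAval x
        have h1 := (hL2 x p s hps).2
        have h2 := (hL2 x N p hNp).1
        have h3 : r p ≤ r N := hrmono hNp
        have h4 : r p * (μ * ‖x‖ ^ 2) ≤ r N * (μ * ‖x‖ ^ 2) :=
          mul_le_mul_of_nonneg_right h3 hK0
        have h5 : (μ * r p) * ‖x‖ ^ 2 = r p * (μ * ‖x‖ ^ 2) := by ring
        rw [hv, h5]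
        linarith
      have hAx : ‖A x‖ ≤ Real.sqrt (C * ((q N x - L x) + 3 * (r N * (μ * ‖x‖ ^ 2)))) := by
        have h1 : ‖A x‖ ^ 2 ≤ C * ((q N x - L x) + 3 * (r N * (μ * ‖x‖ ^ 2))) := by
          have h2 : ‖A‖ * (inner ℝ (A x) x : ℝ) ≤ C * ((q N x - L x) + 3 * (r N * (μ * ‖x‖ ^ 2))) := by
            have := hApos x
            nlinarith [norm_nonneg A, mul_le_mul_of_nonneg_left hinner hC0]
          linarith [key]
        calc ‖A x‖ = Real.sqrt (‖A x‖ ^ 2) := (Real.sqrt_sq (norm_nonneg _)).symm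
          _ ≤ Real.sqrt (C * ((q N x - L x) + 3 * (r N * (μ * ‖x‖ ^ 2)))) := Real.sqrt_le_sqrt h1
      have hdist : dist (W p x) (W s x) ≤ ‖A x‖ + μ * r p * ‖x‖ := by
        have heq : W p x - W s x = A x - (μ * r p) • x := by
          simp [hAdef, ContinuousLinearMap.add_apply, ContinuousLinearMap.sub_apply]
        rw [dist_eq_norm, heq]
        calc ‖A x - (μ * r p) • x‖ ≤ ‖A x‖ + ‖(μ * r p) • x‖ := norm_sub_le _ _
          _ = ‖A x‖ + μ * r p * ‖x‖ := by
              rw [norm_smul, Real.norm_eq_abs, abs_of_nonneg (mul_nonneg hμ0 (hr0 p))]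
      have hlast : μ * r p * ‖x‖ ≤ r N * (μ * ‖x‖) := by
        have h3 : r p ≤ r N := hrmono hNp
        have h4 : μ * r p * ‖x‖ ≤ μ * r N * ‖x‖ :=
          mul_le_mul_of_nonneg_right (mul_le_mul_of_nonneg_left h3 hμ0) (norm_nonneg x)
        linarith
      simp only [hbdef]
      linarith
    intro m n N hm hn
    rcases le_total m n with h | h
    · exact main m n N hm h
    · rw [dist_comm]; exact main n m N hn h
  -- construct the limit operator
  have hlim : ∀ x : H, ∃ y : H, Tendsto (fun n => W n x) atTop (𝓝 y) := fun x =>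
    cauchySeq_tendsto_of_complete (hcauchy x)
  choose f hf using hlim
  have hadd : ∀ x y : H, f (x + y) = f x + f y := by
    intro x y
    refine tendsto_nhds_unique ?_ ((hf x).add (hf y))
    simpa [map_add] using hf (x + y)
  have hsmul : ∀ (t : ℝ) (x : H), f (t • x) = t • f x := by
    intro t x
    refine tendsto_nhds_unique ?_ ((hf x).const_smul t)
    simpa [map_smul] using hf (t • x)
  have hnorm : ∀ x : H, ‖f x‖ ≤ μ * ‖x‖ := by
    intro x
    refine le_of_tendsto (hf x).norm (Eventually.of_forall fun n => ?_)
    calc ‖W n x‖ ≤ ‖W n‖ * ‖x‖ := (W n).le_opNorm x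
      _ ≤ μ * ‖x‖ := mul_le_mul_of_nonneg_right (hμ n) (norm_nonneg x)
  let Wl : H →L[ℝ] H := LinearMap.mkContinuous
    { toFun := f
      map_add' := hadd
      map_smul' := hsmul } μ hnorm
  have hWl : ∀ x : H, Wl x = f x := fun x => rfl
  refine ⟨Wl, ?_, ?_, fun x => by rw [hWl]; exact hf x⟩
  · rw [ContinuousLinearMap.isSelfAdjoint_iff_isSymmetric]
    intro x y
    have h1 : Tendsto (fun n => (inner ℝ (W n x) y : ℝ)) atTop (𝓝 (inner ℝ (f x) y : ℝ)) :=
      (hf x).inner tendsto_const_nhds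
    have h2 : Tendsto (fun n => (inner ℝ x (W n y) : ℝ)) atTop (𝓝 (inner ℝ x (f y) : ℝ)) :=
      tendsto_const_nhds.inner (hf y)
    have heq : (fun n => (inner ℝ (W n x) y : ℝ)) = fun n => (inner ℝ x (W n y) : ℝ) := by
      funext n
      exact (ContinuousLinearMap.isSelfAdjoint_iff_isSymmetric.mp (hsa n)) x y
    rw [heq] at h1
    exact tendsto_nhds_unique h1 h2
  · intro x
    have h1 : Tendsto (fun n => (inner ℝ (W n x) x : ℝ)) atTop (𝓝 (inner ℝ (f x) x : ℝ)) :=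
      (hf x).inner tendsto_const_nhds
    exact ge_of_tendsto h1 (Eventually.of_forall fun n => hlb n x)
end

section
/- Let H be a real Hilbert space, α ∈ ]0,+∞[, let (ηₙ) be a summable sequence in [0,+∞[, and let (Wₙ) be a uniformly bounded sequence of bounded self-adjoint operators with Wₙ ≽ α·Id and (1+ηₙ)Wₙ₊₁ ≽ Wₙ for all n. Then there exists a bounded self-adjoint operator W with W ≽ α·Id such that Wₙ → W pointwise strongly. -/
open Filter Topology

lemma aux_cs {H : Type*} [NormedAddCommGroup H] [InnerProductSpace ℝ H]
    (A : H →L[ℝ] H) (hsym : ∀ u v : H, (inner ℝ (A u) v : ℝ) = inner ℝ u (A v))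
    (hpos : ∀ u : H, 0 ≤ (inner ℝ (A u) u : ℝ)) (x y : H) :
    (inner ℝ (A x) y : ℝ) ^ 2 ≤ (inner ℝ (A x) x : ℝ) * (inner ℝ (A y) y : ℝ) := by
  have key : ∀ t : ℝ, 0 ≤ (inner ℝ (A y) y : ℝ) * (t * t) +
      (2 * (inner ℝ (A x) y : ℝ)) * t + (inner ℝ (A x) x : ℝ) := by
    intro t
    have h := hpos (x + t • y)
    have hyx : (inner ℝ (A y) x : ℝ) = inner ℝ (A x) y := by
      rw [hsym y x, real_inner_comm]
    simp only [map_add, map_smul, inner_add_left, inner_add_right, real_inner_smul_left,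
      real_inner_smul_right] at h
    rw [hyx] at h
    nlinarith [h]
  have hd := discrim_le_zero key
  rw [discrim] at hd
  nlinarith [hd]

lemma aux_norm_sq {H : Type*} [NormedAddCommGroup H] [InnerProductSpace ℝ H]
    (A : H →L[ℝ] H) (hsym : ∀ u v : H, (inner ℝ (A u) v : ℝ) = inner ℝ u (A v))
    (hpos : ∀ u : H, 0 ≤ (inner ℝ (A u) u : ℝ)) (M : ℝ) (hM0 : 0 ≤ M)
    (hM : ∀ u : H, ‖A u‖ ≤ M * ‖u‖) (x : H) :
    ‖A x‖ ^ 2 ≤ M * (inner ℝ (A x) x : ℝ) := by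
  have h := aux_cs A hsym hpos x (A x)
  have h1 : (inner ℝ (A x) (A x) : ℝ) = ‖A x‖ ^ 2 := real_inner_self_eq_norm_sq _
  have h2 : (inner ℝ (A (A x)) (A x) : ℝ) ≤ M * ‖A x‖ ^ 2 := by
    calc (inner ℝ (A (A x)) (A x) : ℝ) ≤ ‖A (A x)‖ * ‖A x‖ := real_inner_le_norm _ _
    _ ≤ (M * ‖A x‖) * ‖A x‖ := mul_le_mul_of_nonneg_right (hM _) (norm_nonneg _)
    _ = M * ‖A x‖ ^ 2 := by ring
  rcases eq_or_lt_of_le (norm_nonneg (A x)) with h0 | h0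
  · have : ‖A x‖ ^ 2 = 0 := by rw [← h0]; ring
    rw [this]
    exact mul_nonneg hM0 (hpos x)
  · have h3 : ‖A x‖ ^ 2 * ‖A x‖ ^ 2 ≤ (inner ℝ (A x) x : ℝ) * (M * ‖A x‖ ^ 2) := by
      calc ‖A x‖ ^ 2 * ‖A x‖ ^ 2 = (inner ℝ (A x) (A x) : ℝ) ^ 2 := by rw [h1]; ring
      _ ≤ (inner ℝ (A x) x : ℝ) * (inner ℝ (A (A x)) (A x) : ℝ) := h
      _ ≤ (inner ℝ (A x) x : ℝ) * (M * ‖A x‖ ^ 2) := mul_le_mul_of_nonneg_left h2 (hpos x)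
    have hsq : 0 < ‖A x‖ ^ 2 := by positivity
    nlinarith [h3, hsq]


theorem stmt_4 {H : Type*} [NormedAddCommGroup H] [InnerProductSpace ℝ H] [CompleteSpace H]
    (α : ℝ) (hα : 0 < α)
    (η : ℕ → ℝ) (hη0 : ∀ n, 0 ≤ η n) (hη : Summable η)
    (W : ℕ → H →L[ℝ] H) (hsa : ∀ n, IsSelfAdjoint (W n))
    (hlb : ∀ n (x : H), α * ‖x‖ ^ 2 ≤ (inner ℝ (W n x) x : ℝ))
    (hbd : ∃ μ : ℝ, ∀ n, ‖W n‖ ≤ μ)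
    (hmono : ∀ n (x : H), (inner ℝ (W n x) x : ℝ) ≤ (1 + η n) * (inner ℝ (W (n + 1) x) x : ℝ)) :
    ∃ Wl : H →L[ℝ] H, IsSelfAdjoint Wl ∧ (∀ x : H, α * ‖x‖ ^ 2 ≤ (inner ℝ (Wl x) x : ℝ)) ∧
      ∀ x : H, Tendsto (fun n => W n x) atTop (𝓝 (Wl x)) := by
  obtain ⟨μ, hμ⟩ := hbd
  have hμ0 : 0 ≤ μ := le_trans (norm_nonneg _) (hμ 0)
  have hsymW : ∀ n (u v : H), (inner ℝ (W n u) v : ℝ) = inner ℝ u (W n v) := fun n =>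
    (ContinuousLinearMap.isSelfAdjoint_iff_isSymmetric.mp (hsa n))
  -- the partial products
  set p : ℕ → ℝ := fun n => ∏ k ∈ Finset.range n, (1 + η k) with hpdef
  have hp1 : ∀ n, 1 ≤ p n := by
    intro n
    show (1:ℝ) ≤ ∏ k ∈ Finset.range n, (1 + η k)
    calc (1:ℝ) = ∏ _k ∈ Finset.range n, (1:ℝ) := Finset.prod_const_one.symm
    _ ≤ ∏ k ∈ Finset.range n, (1 + η k) :=
      Finset.prod_le_prod (fun k _ => zero_le_one) (fun k _ => by linarith [hη0 k])
  have hp0 : ∀ n, (0:ℝ) < p n := fun n => lt_of_lt_of_le one_pos (hp1 n)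
  have hpsucc : ∀ n, p (n + 1) = p n * (1 + η n) := fun n => Finset.prod_range_succ _ n
  have hpmono : Monotone p := monotone_nat_of_le_succ (fun n => by
    rw [hpsucc]; nlinarith [hp0 n, hη0 n])
  set P := Real.exp (∑' k, η k) with hPdef
  have hP0 : (0:ℝ) < P := Real.exp_pos _
  have hpbd : ∀ n, p n ≤ P := by
    intro n
    calc p n ≤ ∏ k ∈ Finset.range n, Real.exp (η k) :=
          Finset.prod_le_prod (fun k _ => by linarith [hη0 k])
            (fun k _ => by linarith [Real.add_one_le_exp (η k)])
    _ = Real.exp (∑ k ∈ Finset.range n, η k) := (Real.exp_sum _ _).symm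
    _ ≤ P := Real.exp_le_exp.mpr (Summable.sum_le_tsum _ (fun k _ => hη0 k) hη)
  clear hPdef
  clear_value P
  have hpbdd : BddAbove (Set.range p) := ⟨P, by rintro _ ⟨n, rfl⟩; exact hpbd n⟩
  set pl := ⨆ n, p n with hpl
  have hplconv : Tendsto p atTop (𝓝 pl) := tendsto_atTop_ciSup hpmono hpbdd
  have hple : ∀ n, p n ≤ pl := fun n => le_ciSup hpbdd n
  -- quadratic forms
  have hq0 : ∀ n (x : H), 0 ≤ (inner ℝ (W n x) x : ℝ) := fun n x =>
    le_trans (by positivity) (hlb n x)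
  have hqbd : ∀ n (x : H), (inner ℝ (W n x) x : ℝ) ≤ μ * ‖x‖ ^ 2 := by
    intro n x
    calc (inner ℝ (W n x) x : ℝ) ≤ ‖W n x‖ * ‖x‖ := real_inner_le_norm _ _
    _ ≤ (μ * ‖x‖) * ‖x‖ := mul_le_mul_of_nonneg_right
        (le_trans ((W n).le_opNorm x)
          (mul_le_mul_of_nonneg_right (hμ n) (norm_nonneg x))) (norm_nonneg x)
    _ = μ * ‖x‖ ^ 2 := by ring
  set s : ℕ → H → ℝ := fun n x => p n * inner ℝ (W n x) x with hsdef
  have hsmono : ∀ x : H, Monotone fun n => s n x := by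
    intro x
    apply monotone_nat_of_le_succ
    intro n
    show p n * inner ℝ (W n x) x ≤ p (n + 1) * inner ℝ (W (n + 1) x) x
    rw [hpsucc]
    calc p n * inner ℝ (W n x) x ≤ p n * ((1 + η n) * inner ℝ (W (n + 1) x) x) :=
          mul_le_mul_of_nonneg_left (hmono n x) (hp0 n).le
    _ = p n * (1 + η n) * inner ℝ (W (n + 1) x) x := by ring
  have hsbd : ∀ (x : H) (n : ℕ), s n x ≤ P * (μ * ‖x‖ ^ 2) := fun x n =>
    mul_le_mul (hpbd n) (hqbd n x) (hq0 n x) hP0.le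
  have hSbdd : ∀ x : H, BddAbove (Set.range fun n => s n x) := fun x =>
    ⟨_, by rintro _ ⟨n, rfl⟩; exact hsbd x n⟩
  set S : H → ℝ := fun x => ⨆ n, s n x with hSdef
  have hsconv : ∀ x : H, Tendsto (fun n => s n x) atTop (𝓝 (S x)) :=
    fun x => tendsto_atTop_ciSup (hsmono x) (hSbdd x)
  have hsle : ∀ (x : H) (n : ℕ), s n x ≤ S x := fun x n => le_ciSup (hSbdd x) n
  have hseq : ∀ (n : ℕ) (x : H), s n x = p n * inner ℝ (W n x) x := fun _ _ => rfl
  clear hpdef hsdef hSdef hpl hpsucc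
  clear_value p s S pl
  -- the key distance estimate
  have key : ∀ (x : H) (n m : ℕ), n ≤ m →
      dist (W n x) (W m x) ≤
        Real.sqrt ((P * μ + μ) * (S x - s n x)) + (pl - p n) * (μ * ‖x‖) := by
    intro x n m hnm
    set c : ℝ := p m / p n with hc
    clear_value c
    have hc1 : 1 ≤ c := by rw [hc]; exact (one_le_div (hp0 n)).mpr (hpmono hnm)
    have hcP : c ≤ P := by
      rw [hc, div_le_iff₀ (hp0 n)]
      nlinarith [hp1 n, hpbd m, (Real.exp_pos (∑' k, η k)).le]
    set A : H →L[ℝ] H := c • W m - W n with hA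
    clear_value A
    have hAsym : ∀ u v : H, (inner ℝ (A u) v : ℝ) = inner ℝ u (A v) := by
      intro u v
      simp only [hA, ContinuousLinearMap.sub_apply, ContinuousLinearMap.smul_apply,
        inner_sub_left, inner_sub_right, real_inner_smul_left, real_inner_smul_right,
        hsymW]
    have hAq : ∀ u : H, (inner ℝ (A u) u : ℝ) = (s m u - s n u) / p n := by
      intro u
      have h1 : (inner ℝ (A u) u : ℝ) = c * inner ℝ (W m u) u - inner ℝ (W n u) u := by
        simp only [hA, ContinuousLinearMap.sub_apply, ContinuousLinearMap.smul_apply,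
          inner_sub_left, real_inner_smul_left]
      rw [h1, eq_div_iff (hp0 n).ne']
      simp only [hseq, hc]
      field_simp [(hp0 n).ne']
    have hApos : ∀ u : H, 0 ≤ (inner ℝ (A u) u : ℝ) := by
      intro u
      rw [hAq u]
      exact div_nonneg (sub_nonneg.mpr (hsmono u hnm)) (hp0 n).le
    have hM0 : (0:ℝ) ≤ P * μ + μ := by nlinarith
    have hAnorm : ∀ u : H, ‖A u‖ ≤ (P * μ + μ) * ‖u‖ := by
      intro u
      have hWu : ∀ k : ℕ, ‖W k u‖ ≤ μ * ‖u‖ := fun k =>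
        le_trans ((W k).le_opNorm u) (mul_le_mul_of_nonneg_right (hμ k) (norm_nonneg u))
      have h1 : A u = c • (W m u) - W n u := by rw [hA]; rfl
      calc ‖A u‖ = ‖c • (W m u) - W n u‖ := by rw [h1]
      _ ≤ ‖c • (W m u)‖ + ‖W n u‖ := norm_sub_le _ _
      _ = |c| * ‖W m u‖ + ‖W n u‖ := by rw [norm_smul, Real.norm_eq_abs]
      _ ≤ P * (μ * ‖u‖) + μ * ‖u‖ := by
          have h2 : |c| * ‖W m u‖ ≤ P * (μ * ‖u‖) := by
            rw [abs_of_nonneg (by linarith : (0:ℝ) ≤ c)]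
            exact mul_le_mul hcP (hWu m) (norm_nonneg _) hP0.le
          linarith [hWu n]
      _ = (P * μ + μ) * ‖u‖ := by ring
    have hAx : ‖A x‖ ^ 2 ≤ (P * μ + μ) * (S x - s n x) := by
      calc ‖A x‖ ^ 2 ≤ (P * μ + μ) * (inner ℝ (A x) x : ℝ) :=
            aux_norm_sq A hAsym hApos _ hM0 hAnorm x
      _ ≤ (P * μ + μ) * ((s m x - s n x) / p n) := by
          rw [hAq x]
      _ ≤ (P * μ + μ) * (S x - s n x) := by
          apply mul_le_mul_of_nonneg_left _ hM0
          calc (s m x - s n x) / p n ≤ (s m x - s n x) :=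
                div_le_self (sub_nonneg.mpr (hsmono x hnm)) (hp1 n)
          _ ≤ S x - s n x := by linarith [hsle x m]
    have hy : 0 ≤ (P * μ + μ) * (S x - s n x) :=
      mul_nonneg hM0 (sub_nonneg.mpr (hsle x n))
    have hAxle : ‖A x‖ ≤ Real.sqrt ((P * μ + μ) * (S x - s n x)) :=
      (Real.le_sqrt (norm_nonneg (A x)) hy).mpr hAx
    have hdecomp : W n x - W m x = (c - 1) • (W m x) - A x := by
      simp only [hA, ContinuousLinearMap.sub_apply, ContinuousLinearMap.smul_apply,
        sub_smul, one_smul]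
      abel
    calc dist (W n x) (W m x) = ‖W n x - W m x‖ := dist_eq_norm _ _
    _ = ‖(c - 1) • (W m x) - A x‖ := by rw [hdecomp]
    _ ≤ ‖(c - 1) • (W m x)‖ + ‖A x‖ := norm_sub_le _ _
    _ ≤ (c - 1) * (μ * ‖x‖) + Real.sqrt ((P * μ + μ) * (S x - s n x)) := by
        apply add_le_add _ hAxle
        rw [norm_smul, Real.norm_eq_abs, abs_of_nonneg (by linarith : (0:ℝ) ≤ c - 1)]
        apply mul_le_mul_of_nonneg_left _ (by linarith)
        calc ‖W m x‖ ≤ ‖W m‖ * ‖x‖ := (W m).le_opNorm x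
        _ ≤ μ * ‖x‖ := mul_le_mul_of_nonneg_right (hμ m) (norm_nonneg x)
    _ ≤ Real.sqrt ((P * μ + μ) * (S x - s n x)) + (pl - p n) * (μ * ‖x‖) := by
        have hc' : c - 1 ≤ pl - p n := by
          have h1 : c - 1 = (p m - p n) / p n := by
            rw [hc, eq_div_iff (hp0 n).ne', sub_mul, div_mul_cancel₀ _ (hp0 n).ne']
            ring
          rw [h1]
          calc (p m - p n) / p n ≤ p m - p n :=
                div_le_self (sub_nonneg.mpr (hpmono hnm)) (hp1 n)
          _ ≤ pl - p n := by linarith [hple m]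
        have := mul_le_mul_of_nonneg_right hc' (by positivity : (0:ℝ) ≤ μ * ‖x‖)
        linarith
  -- Cauchy and the limit map
  have hcauchy : ∀ x : H, ∃ y : H, Tendsto (fun n => W n x) atTop (𝓝 y) := by
    intro x
    have hb0 : Tendsto (fun n => Real.sqrt ((P * μ + μ) * (S x - s n x)) +
        (pl - p n) * (μ * ‖x‖)) atTop (𝓝 0) := by
      have h1 : Tendsto (fun n => S x - s n x) atTop (𝓝 0) := by
        have := (tendsto_const_nhds (x := S x)).sub (hsconv x)
        simpa using this
      have h2 : Tendsto (fun n => Real.sqrt ((P * μ + μ) * (S x - s n x))) atTop (𝓝 0) := by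
        have h3 : Tendsto (fun n => (P * μ + μ) * (S x - s n x)) atTop (𝓝 0) := by
          simpa using h1.const_mul (P * μ + μ)
        have := (Real.continuous_sqrt.tendsto 0).comp h3
        simpa [Function.comp_def] using this
      have h4 : Tendsto (fun n => (pl - p n) * (μ * ‖x‖)) atTop (𝓝 0) := by
        have h5 : Tendsto (fun n => pl - p n) atTop (𝓝 0) := by
          have := (tendsto_const_nhds (x := pl)).sub hplconv
          simpa using this
        have := h5.mul_const (μ * ‖x‖)
        simpa using this
      simpa using h2.add h4
    have : CauchySeq (fun n => W n x) :=
      cauchySeq_of_le_tendsto_0' _ (fun n m hnm => key x n m hnm) hb0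
    exact cauchySeq_tendsto_of_complete this
  choose f hf using hcauchy
  have hnormf : ∀ x : H, ‖f x‖ ≤ μ * ‖x‖ := by
    intro x
    apply le_of_tendsto (hf x).norm
    filter_upwards with n
    calc ‖W n x‖ ≤ ‖W n‖ * ‖x‖ := (W n).le_opNorm x
    _ ≤ μ * ‖x‖ := mul_le_mul_of_nonneg_right (hμ n) (norm_nonneg x)
  have hadd : ∀ x y : H, f (x + y) = f x + f y := fun x y =>
    tendsto_nhds_unique (hf (x + y)) (by simpa using (hf x).add (hf y))
  have hsmul : ∀ (c : ℝ) (x : H), f (c • x) = c • f x := fun c x =>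
    tendsto_nhds_unique (hf (c • x)) (by simpa using (hf x).const_smul c)
  let Wl : H →L[ℝ] H := LinearMap.mkContinuous
    { toFun := f, map_add' := hadd, map_smul' := hsmul } μ hnormf
  have hWl : ∀ x : H, Wl x = f x := fun x => rfl
  refine ⟨Wl, ?_, ?_, ?_⟩
  · rw [ContinuousLinearMap.isSelfAdjoint_iff_isSymmetric]
    intro u v
    have h1 : Tendsto (fun n => (inner ℝ (W n u) v : ℝ)) atTop (𝓝 (inner ℝ (f u) v : ℝ)) :=
      (hf u).inner tendsto_const_nhds
    have h2 : Tendsto (fun n => (inner ℝ (W n u) v : ℝ)) atTop (𝓝 (inner ℝ u (f v) : ℝ)) := by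
      have h2' : Tendsto (fun n => (inner ℝ u (W n v) : ℝ)) atTop (𝓝 (inner ℝ u (f v) : ℝ)) :=
        Tendsto.inner (𝕜 := ℝ) tendsto_const_nhds (hf v)
      simpa only [← hsymW] using h2'
    show (inner ℝ (Wl u) v : ℝ) = inner ℝ u (Wl v)
    rw [hWl, hWl]
    exact tendsto_nhds_unique h1 h2
  · intro x
    have h1 : Tendsto (fun n => (inner ℝ (W n x) x : ℝ)) atTop (𝓝 (inner ℝ (f x) x : ℝ)) :=
      (hf x).inner tendsto_const_nhds
    rw [hWl]
    exact ge_of_tendsto' h1 (fun n => hlb n x)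
  · intro x
    rw [hWl]
    exact hf x
end

section
/- Let H be a real Hilbert space, α > 0, φ : [0,+∞[ → [0,+∞[ strictly increasing with φ(t) → +∞ as t → +∞, (Wₙ) a sequence of bounded self-adjoint operators with Wₙ ≽ α·Id, C a nonempty subset of H, and (xₙ) a sequence in H that is φ-quasi-Fejér monotone with respect to C relative to (Wₙ). Then for every z ∈ C, the sequence (‖xₙ − z‖_{Wₙ}) converges, and (xₙ) is bounded. -/
open Filter Topology

noncomputable def wnorm {H : Type*} [NormedAddCommGroup H] [InnerProductSpace ℝ H]
    (W : H →L[ℝ] H) (x : H) : ℝ :=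
  Real.sqrt (inner ℝ (W x) x : ℝ)

lemma quasi_fejer_aux (a η ε : ℕ → ℝ) (ha : ∀ n, 0 ≤ a n)
    (hη : ∀ n, 0 ≤ η n) (hε : ∀ n, 0 ≤ ε n)
    (hηs : Summable η) (hεs : Summable ε)
    (hrec : ∀ n, a (n + 1) ≤ (1 + η n) * a n + ε n) :
    ∃ l, Tendsto a atTop (𝓝 l) := by
  have hEt : 0 ≤ ∑' k, ε k := tsum_nonneg hε
  have hSt : 0 ≤ ∑' k, η k := tsum_nonneg hη
  -- uniform bound on a
  set M : ℝ := (a 0 + ∑' k, ε k) * Real.exp (∑' k, η k) with hMdef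
  have hbound : ∀ n, a n ≤ M := by
    have key : ∀ n, a n ≤ (a 0 + ∑ k ∈ Finset.range n, ε k) *
        Real.exp (∑ k ∈ Finset.range n, η k) := by
      intro n
      induction n with
      | zero => simp
      | succ n ih =>
        have h1 : (1 + η n) ≤ Real.exp (η n) := by
          have := Real.add_one_le_exp (η n); linarith
        have h2 : (0:ℝ) ≤ 1 + η n := by linarith [hη n]
        have hEpos : 0 ≤ a 0 + ∑ k ∈ Finset.range n, ε k := by
          have := Finset.sum_nonneg (fun k (_ : k ∈ Finset.range n) => hε k)
          linarith [ha 0]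
        have hexp1 : (1:ℝ) ≤ Real.exp (∑ k ∈ Finset.range (n+1), η k) :=
          Real.one_le_exp (Finset.sum_nonneg (fun k _ => hη k))
        calc a (n+1) ≤ (1 + η n) * a n + ε n := hrec n
          _ ≤ Real.exp (η n) * ((a 0 + ∑ k ∈ Finset.range n, ε k) *
                Real.exp (∑ k ∈ Finset.range n, η k)) + ε n := by
              have h3 := mul_le_mul h1 ih (ha n) (Real.exp_nonneg (η n))
              linarith
          _ = (a 0 + ∑ k ∈ Finset.range n, ε k) *
                Real.exp (∑ k ∈ Finset.range (n+1), η k) + ε n := by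
              rw [Finset.sum_range_succ, Real.exp_add]; ring
          _ ≤ (a 0 + ∑ k ∈ Finset.range (n+1), ε k) *
                Real.exp (∑ k ∈ Finset.range (n+1), η k) := by
              rw [Finset.sum_range_succ ε n]
              nlinarith [mul_le_mul_of_nonneg_left hexp1 (hε n)]
    intro n
    refine (key n).trans ?_
    have hE : ∑ k ∈ Finset.range n, ε k ≤ ∑' k, ε k :=
      Summable.sum_le_tsum _ (fun k _ => hε k) hεs
    have hS : ∑ k ∈ Finset.range n, η k ≤ ∑' k, η k :=
      Summable.sum_le_tsum _ (fun k _ => hη k) hηs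
    have hEpos : 0 ≤ a 0 + ∑ k ∈ Finset.range n, ε k := by
      have := Finset.sum_nonneg (fun k (_ : k ∈ Finset.range n) => hε k); linarith [ha 0]
    have := Real.exp_le_exp.mpr hS
    have h2 : a 0 + ∑ k ∈ Finset.range n, ε k ≤ a 0 + ∑' k, ε k := by linarith
    rw [hMdef]
    exact mul_le_mul h2 (Real.exp_le_exp.mpr hS) (Real.exp_nonneg _) (by linarith [ha 0])
  -- perturbation sequence
  have hM0 : 0 ≤ M := le_trans (ha 0) (hbound 0)
  set δ := fun n : ℕ => M * η n + ε n with hδdef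
  have hδ0 : ∀ n, 0 ≤ δ n := fun n => add_nonneg (mul_nonneg hM0 (hη n)) (hε n)
  have hδs : Summable δ := (hηs.mul_left M).add hεs
  have hrec' : ∀ n, a (n + 1) ≤ a n + δ n := by
    intro n
    have h1 : η n * a n ≤ η n * M := mul_le_mul_of_nonneg_left (hbound n) (hη n)
    have := hrec n
    simp only [hδdef]
    nlinarith
  -- tail sums
  set R := fun n : ℕ => ∑' k, δ (k + n) with hRdef
  have hRsum : ∀ n, Summable fun k => δ (k + n) := fun n =>
    (summable_nat_add_iff n).mpr hδs
  have hR0 : ∀ n, 0 ≤ R n := fun n => tsum_nonneg (fun k => hδ0 _)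
  have hRrec : ∀ n, R n = δ n + R (n + 1) := by
    intro n
    have h := Summable.tsum_eq_zero_add (hRsum n)
    have h2 : ∑' k, δ (k + 1 + n) = ∑' k, δ (k + (n + 1)) := by
      apply tsum_congr; intro k; congr 1; omega
    simp only [hRdef, zero_add] at h ⊢
    rw [h, h2]
  set s := fun n : ℕ => a n + R n with hsdef
  have hanti : Antitone s := by
    refine antitone_nat_of_succ_le (fun n => ?_)
    have := hrec' n
    have := hRrec n
    simp only [hsdef]
    linarith
  have hbdd : BddBelow (Set.range s) := by
    refine ⟨0, ?_⟩
    rintro _ ⟨n, rfl⟩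
    exact add_nonneg (ha n) (hR0 n)
  have hs_tend : Tendsto s atTop (𝓝 (⨅ n, s n)) := tendsto_atTop_ciInf hanti hbdd
  have hR_tend : Tendsto R atTop (𝓝 0) := by
    have hpart : Tendsto (fun n => ∑ k ∈ Finset.range n, δ k) atTop (𝓝 (∑' k, δ k)) :=
      hδs.hasSum.tendsto_sum_nat
    have hreq : ∀ n, R n = (∑' k, δ k) - ∑ k ∈ Finset.range n, δ k := by
      intro n
      have := Summable.sum_add_tsum_nat_add n hδs
      simp only [hRdef]
      linarith
    have h2 : Tendsto (fun n => (∑' k, δ k) - ∑ k ∈ Finset.range n, δ k) atTop (𝓝 0) := by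
      simpa using (tendsto_const_nhds (x := ∑' k, δ k) (f := atTop)).sub hpart
    exact (funext hreq : R = _) ▸ h2
  refine ⟨(⨅ n, s n) - 0, ?_⟩
  have : Tendsto (fun n => s n - R n) atTop (𝓝 ((⨅ n, s n) - 0)) := hs_tend.sub hR_tend
  simpa [hsdef] using this

lemma conv_of_phi_conv (φ : ℝ → ℝ) (hφmono : StrictMonoOn φ (Set.Ici (0 : ℝ)))
    (hφlim : Tendsto φ atTop atTop) (b : ℕ → ℝ) (hb : ∀ n, 0 ≤ b n)
    (L : ℝ) (hL : Tendsto (fun n => φ (b n)) atTop (𝓝 L)) :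
    ∃ l, Tendsto b atTop (𝓝 l) := by
  -- boundedness of b
  obtain ⟨T, hT⟩ : ∃ T, ∀ t ≥ T, φ t ≥ L + 1 := (hφlim.eventually_ge_atTop (L + 1)).exists_forall_of_atTop
  have hbub : ∀ᶠ n in atTop, b n ≤ T := by
    filter_upwards [hL.eventually (eventually_lt_nhds (by linarith : L < L + 1))] with n hn
    by_contra h
    push_neg at h
    exact absurd (hT (b n) h.le) (by linarith)
  have hbdd : IsBoundedUnder (· ≤ ·) atTop b := ⟨T, hbub⟩
  have hbdd' : IsBoundedUnder (· ≥ ·) atTop b := isBoundedUnder_of ⟨0, fun n => hb n⟩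
  have hcob_le : IsCoboundedUnder (· ≤ ·) atTop b := hbdd'.isCoboundedUnder_le
  have hcob_ge : IsCoboundedUnder (· ≥ ·) atTop b := hbdd.isCoboundedUnder_ge
  have hq0 : 0 ≤ liminf b atTop := le_liminf_of_le hcob_ge (Eventually.of_forall hb)
  have hqp : liminf b atTop ≤ limsup b atTop := liminf_le_limsup hbdd hbdd'
  rcases eq_or_lt_of_le hqp with heq | hlt
  · exact ⟨limsup b atTop, tendsto_of_liminf_eq_limsup heq rfl hbdd hbdd'⟩
  · exfalso
    obtain ⟨r, sv, hr0, hrs, hqr, hsp⟩ :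
        ∃ r sv : ℝ, 0 ≤ r ∧ r < sv ∧ liminf b atTop < r ∧ sv < limsup b atTop :=
      ⟨liminf b atTop + (limsup b atTop - liminf b atTop) / 3,
       liminf b atTop + 2 * (limsup b atTop - liminf b atTop) / 3,
       by linarith, by linarith, by linarith, by linarith⟩
    have hs0 : 0 ≤ sv := le_trans hr0 hrs.le
    have hφrs : φ r < φ sv := hφmono hr0 hs0 hrs
    obtain ⟨d, hd0, hd⟩ : ∃ d : ℝ, 0 < d ∧ 2 * d ≤ φ sv - φ r :=
      ⟨(φ sv - φ r) / 2, by linarith, by linarith⟩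
    have hev : ∀ᶠ n in atTop, |φ (b n) - L| < d :=
      hL.eventually (eventually_abs_sub_lt L hd0)
    have hfr : ∃ᶠ n in atTop, b n < r := frequently_lt_of_liminf_lt hcob_ge hqr
    have hfs : ∃ᶠ n in atTop, sv < b n := frequently_lt_of_lt_limsup hcob_le hsp
    obtain ⟨n, hn1, hn2⟩ := (hfr.and_eventually hev).exists
    obtain ⟨m, hm1, hm2⟩ := (hfs.and_eventually hev).exists
    have h1 : φ (b n) < φ r := hφmono (hb n) hr0 hn1
    have h2 : φ sv < φ (b m) := hφmono hs0 (hb m) hm1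
    have := abs_lt.mp hn2
    have := abs_lt.mp hm2
    linarith

theorem stmt_5 {H : Type*} [NormedAddCommGroup H] [InnerProductSpace ℝ H] [CompleteSpace H]
    (α : ℝ) (hα : 0 < α)
    (φ : ℝ → ℝ) (hφ0 : ∀ t, 0 ≤ t → 0 ≤ φ t)
    (hφmono : StrictMonoOn φ (Set.Ici (0 : ℝ)))
    (hφlim : Tendsto φ atTop atTop)
    (W : ℕ → H →L[ℝ] H) (hsa : ∀ n, IsSelfAdjoint (W n))
    (hlb : ∀ n (x : H), α * ‖x‖ ^ 2 ≤ (inner ℝ (W n x) x : ℝ))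
    (C : Set H) (hC : C.Nonempty) (x : ℕ → H)
    (hfejer : ∃ η : ℕ → ℝ, (∀ n, 0 ≤ η n) ∧ Summable η ∧
      ∀ z ∈ C, ∃ ε : ℕ → ℝ, (∀ n, 0 ≤ ε n) ∧ Summable ε ∧
        ∀ n, φ (wnorm (W (n + 1)) (x (n + 1) - z)) ≤
          (1 + η n) * φ (wnorm (W n) (x n - z)) + ε n) :
    (∀ z ∈ C, ∃ l : ℝ, Tendsto (fun n => wnorm (W n) (x n - z)) atTop (𝓝 l)) ∧
    (∃ M : ℝ, ∀ n, ‖x n‖ ≤ M) := by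
  obtain ⟨η, hη0, hηs, hηrec⟩ := hfejer
  have hwnn : ∀ n (y : H), 0 ≤ wnorm (W n) y := fun n y => Real.sqrt_nonneg _
  have hconv : ∀ z ∈ C, ∃ l : ℝ, Tendsto (fun n => wnorm (W n) (x n - z)) atTop (𝓝 l) := by
    intro z hz
    obtain ⟨ε, hε0, hεs, hrec⟩ := hηrec z hz
    obtain ⟨L, hL⟩ := quasi_fejer_aux (fun n => φ (wnorm (W n) (x n - z))) η ε
      (fun n => hφ0 _ (hwnn n _)) hη0 hε0 hηs hεs hrec
    exact conv_of_phi_conv φ hφmono hφlim _ (fun n => hwnn n _) L hL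
  refine ⟨hconv, ?_⟩
  obtain ⟨z, hz⟩ := hC
  obtain ⟨l, hl⟩ := hconv z hz
  -- wnorm dominates sqrt α * norm
  have hdom : ∀ n, Real.sqrt α * ‖x n - z‖ ≤ wnorm (W n) (x n - z) := by
    intro n
    have h1 : α * ‖x n - z‖ ^ 2 ≤ (inner ℝ (W n (x n - z)) (x n - z) : ℝ) := hlb n _
    have h2 : Real.sqrt (α * ‖x n - z‖ ^ 2) ≤ wnorm (W n) (x n - z) :=
      Real.sqrt_le_sqrt h1
    calc Real.sqrt α * ‖x n - z‖ = Real.sqrt (α * ‖x n - z‖ ^ 2) := by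
          rw [Real.sqrt_mul hα.le, Real.sqrt_sq (norm_nonneg _)]
      _ ≤ wnorm (W n) (x n - z) := h2
  obtain ⟨B, hB⟩ : ∃ B, ∀ n, wnorm (W n) (x n - z) ≤ B := by
    have := hl.bddAbove_range
    obtain ⟨B, hBmem⟩ := this
    exact ⟨B, fun n => hBmem ⟨n, rfl⟩⟩
  have hsα : 0 < Real.sqrt α := Real.sqrt_pos.mpr hα
  refine ⟨B / Real.sqrt α + ‖z‖, fun n => ?_⟩
  have h1 : ‖x n - z‖ ≤ B / Real.sqrt α := by
    rw [le_div_iff₀ hsα]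
    calc ‖x n - z‖ * Real.sqrt α = Real.sqrt α * ‖x n - z‖ := by ring
      _ ≤ wnorm (W n) (x n - z) := hdom n
      _ ≤ B := hB n
  have h2 : ‖x n‖ ≤ ‖x n - z‖ + ‖z‖ := by
    simpa using norm_add_le (x n - z) z
  linarith
end

section
/- Let H be a real Hilbert space, α > 0, φ : [0,+∞[ → [0,+∞[ strictly increasing with φ(t) → +∞, let (Wₙ) and W be bounded self-adjoint operators with Wₙ ≽ α·Id, W ≽ α·Id, and Wₙ → W pointwise strongly. Let C ⊆ H be nonempty and (xₙ) be φ-quasi-Fejér monotone with respect to C relative to (Wₙ). Then (xₙ) converges weakly to a point in C if and only if every weak sequential cluster point of (xₙ) lies in C. -/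
open Filter Topology

private lemma aux_fejer (η ε a : ℕ → ℝ) (hη : ∀ n, 0 ≤ η n) (hηs : Summable η)
    (hε : ∀ n, 0 ≤ ε n) (hεs : Summable ε) (ha : ∀ n, 0 ≤ a n)
    (hrec : ∀ n, a (n + 1) ≤ (1 + η n) * a n + ε n) :
    ∃ B, 0 ≤ B ∧ (∀ n, a n ≤ B) ∧ ∃ L, Tendsto a atTop (𝓝 L) := by
  set P : ℕ → ℝ := fun n => ∏ k ∈ Finset.range n, (1 + η k) with hPdef
  have hP1 : ∀ n, 1 ≤ P n := by
    intro n
    simp only [hPdef]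
    calc (1:ℝ) = ∏ _k ∈ Finset.range n, (1:ℝ) := by simp
      _ ≤ ∏ k ∈ Finset.range n, (1 + η k) :=
          Finset.prod_le_prod (fun k _ => zero_le_one) (fun k _ => by linarith [hη k])
  have hPle : ∀ n, P n ≤ Real.exp (∑' k, η k) := by
    intro n
    calc P n ≤ ∏ k ∈ Finset.range n, Real.exp (η k) :=
          Finset.prod_le_prod (fun k _ => by linarith [hη k])
            (fun k _ => by linarith [Real.add_one_le_exp (η k)])
      _ = Real.exp (∑ k ∈ Finset.range n, η k) := (Real.exp_sum _ _).symm
      _ ≤ _ := Real.exp_le_exp.2 (Summable.sum_le_tsum _ (fun k _ => hη k) hηs)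
  have hεt : ∀ n, ∑ k ∈ Finset.range n, ε k ≤ ∑' k, ε k := fun n =>
    Summable.sum_le_tsum _ (fun k _ => hε k) hεs
  have hε0' : (0:ℝ) ≤ ∑' k, ε k := tsum_nonneg hε
  have key : ∀ n, a n ≤ (a 0 + ∑ k ∈ Finset.range n, ε k) * P n := by
    intro n; induction n with
    | zero => simp [hPdef]
    | succ n ih =>
      have h1 : P (n + 1) = P n * (1 + η n) := Finset.prod_range_succ _ _
      have h2 : ∑ k ∈ Finset.range (n + 1), ε k = ∑ k ∈ Finset.range n, ε k + ε n :=
        Finset.sum_range_succ _ _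
      have h4 : (0:ℝ) ≤ a 0 + ∑ k ∈ Finset.range n, ε k :=
        add_nonneg (ha 0) (Finset.sum_nonneg fun k _ => hε k)
      have h5 : 0 ≤ 1 + η n := by linarith [hη n]
      calc a (n + 1) ≤ (1 + η n) * a n + ε n := hrec n
        _ ≤ (1 + η n) * ((a 0 + ∑ k ∈ Finset.range n, ε k) * P n) + ε n := by
            nlinarith [ih, hη n]
        _ = (a 0 + ∑ k ∈ Finset.range n, ε k) * P (n + 1) + ε n := by rw [h1]; ring
        _ ≤ (a 0 + ∑ k ∈ Finset.range n, ε k + ε n) * P (n + 1) := by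
            nlinarith [hε n, hP1 (n + 1)]
        _ = (a 0 + ∑ k ∈ Finset.range (n + 1), ε k) * P (n + 1) := by rw [h2]; ring
  set B : ℝ := (a 0 + ∑' k, ε k) * Real.exp (∑' k, η k) with hBdef
  have hB0 : 0 ≤ B := mul_nonneg (add_nonneg (ha 0) hε0') (Real.exp_pos _).le
  have hBle : ∀ n, a n ≤ B := by
    intro n
    calc a n ≤ (a 0 + ∑ k ∈ Finset.range n, ε k) * P n := key n
      _ ≤ B := by
          apply mul_le_mul (by linarith [hεt n]) (hPle n) (by linarith [hP1 n])
            (add_nonneg (ha 0) hε0')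
  refine ⟨B, hB0, hBle, ?_⟩
  set r : ℕ → ℝ := fun n => η n * B + ε n with hrdef
  have hrs : Summable r := (hηs.mul_right B).add hεs
  have hr0 : ∀ n, 0 ≤ r n := fun n => add_nonneg (mul_nonneg (hη n) hB0) (hε n)
  set t : ℕ → ℝ := fun n => ∑' k, r (k + n) with htdef
  have htn : ∀ n, Summable fun k => r (k + n) := fun n => (summable_nat_add_iff n).2 hrs
  have ht0 : ∀ n, 0 ≤ t n := fun n => tsum_nonneg fun k => hr0 _
  have trec : ∀ n, t n = r n + t (n + 1) := by
    intro n
    have h := Summable.tsum_eq_zero_add (htn n)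
    simp only [zero_add] at h
    calc t n = r n + ∑' k, r (k + 1 + n) := h
      _ = r n + t (n + 1) := by
          congr 1
          exact tsum_congr fun k => by congr 1; omega
  have hbant : Antitone (fun n => a n + t n) := by
    apply antitone_nat_of_succ_le
    intro n
    have h1 := hrec n
    have h2 : η n * a n ≤ η n * B := mul_le_mul_of_nonneg_left (hBle n) (hη n)
    have h3 := trec n
    have h4 : r n = η n * B + ε n := rfl
    show a (n + 1) + t (n + 1) ≤ a n + t n
    nlinarith [h1, h2, h3, h4]
  have hbdd : BddBelow (Set.range fun n => a n + t n) := by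
    refine ⟨0, ?_⟩
    rintro z ⟨n, rfl⟩
    exact add_nonneg (ha n) (ht0 n)
  have hbt := tendsto_atTop_ciInf hbant hbdd
  have htz : Tendsto t atTop (𝓝 0) := tendsto_sum_nat_add r
  refine ⟨⨅ n, a n + t n, ?_⟩
  have := hbt.sub htz
  simpa using this

private lemma aux_philim (φ : ℝ → ℝ) (hφmono : StrictMonoOn φ (Set.Ici (0:ℝ)))
    (t : ℕ → ℝ) (ht0 : ∀ n, 0 ≤ t n) {T : ℝ} (hT : ∀ n, t n ≤ T)
    {L : ℝ} (hL : Tendsto (fun n => φ (t n)) atTop (𝓝 L)) :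
    ∃ l, Tendsto t atTop (𝓝 l) := by
  have hmem : ∀ n, t n ∈ Set.Icc (0:ℝ) T := fun n => ⟨ht0 n, hT n⟩
  have hbd : Bornology.IsBounded (Set.Icc (0:ℝ) T) := Metric.isBounded_Icc _ _
  have helper : ∀ (a b : ℝ) (r1 r2 : ℕ → ℕ), 0 ≤ a →
      Tendsto r1 atTop atTop → Tendsto r2 atTop atTop →
      Tendsto (fun n => t (r1 n)) atTop (𝓝 a) →
      Tendsto (fun n => t (r2 n)) atTop (𝓝 b) → ¬ a < b := by
    intro a b r1 r2 ha hr1 hr2 h1 h2 hab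
    set s1 := (2 * a + b) / 3 with hs1def
    set s2 := (a + 2 * b) / 3 with hs2def
    have hs1 : a < s1 := by rw [hs1def]; linarith
    have hs12 : s1 < s2 := by rw [hs1def, hs2def]; linarith
    have hs2b : s2 < b := by rw [hs2def]; linarith
    have hs1nn : (0:ℝ) ≤ s1 := by rw [hs1def]; linarith
    have hs2nn : (0:ℝ) ≤ s2 := by linarith
    have he1 : ∀ᶠ n in atTop, t (r1 n) < s1 := h1.eventually (eventually_lt_nhds hs1)
    have he2 : ∀ᶠ n in atTop, s2 < t (r2 n) := h2.eventually (eventually_gt_nhds hs2b)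
    have hL1 : Tendsto (fun n => φ (t (r1 n))) atTop (𝓝 L) := hL.comp hr1
    have hL2 : Tendsto (fun n => φ (t (r2 n))) atTop (𝓝 L) := hL.comp hr2
    have hLle : L ≤ φ s1 :=
      le_of_tendsto hL1 (he1.mono fun n hn =>
        (hφmono (ht0 (r1 n)) hs1nn hn).le)
    have hLge : φ s2 ≤ L :=
      ge_of_tendsto hL2 (he2.mono fun n hn =>
        (hφmono hs2nn (ht0 (r2 n)) hn).le)
    have : φ s1 < φ s2 := hφmono hs1nn hs2nn hs12
    linarith
  obtain ⟨l, hlcl, p, hp, hpt⟩ := tendsto_subseq_of_bounded hbd hmem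
  rw [(isClosed_Icc).closure_eq] at hlcl
  refine ⟨l, tendsto_of_subseq_tendsto fun ns hns => ?_⟩
  obtain ⟨b, hbcl, q, hq, hqt⟩ := tendsto_subseq_of_bounded hbd (fun n => hmem (ns n))
  rw [(isClosed_Icc).closure_eq] at hbcl
  have hbl : b = l := by
    rcases lt_trichotomy b l with h | h | h
    · exact absurd h (helper b l ((ns ∘ q)) p hbcl.1 (hns.comp hq.tendsto_atTop)
        hp.tendsto_atTop hqt hpt)
    · exact h
    · exact absurd h (helper l b p (ns ∘ q) hlcl.1 hp.tendsto_atTop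
        (hns.comp hq.tendsto_atTop) hpt hqt)
  exact ⟨q, hbl ▸ hqt⟩

private lemma aux_weak {H : Type*} [NormedAddCommGroup H] [InnerProductSpace ℝ H]
    [CompleteSpace H] (x : ℕ → H) (M : ℝ) (hM : ∀ n, ‖x n‖ ≤ M) :
    ∃ p : ℕ → ℕ, StrictMono p ∧ ∃ u : H, ∀ y : H,
      Tendsto (fun n => (inner ℝ (x (p n)) y : ℝ)) atTop (𝓝 (inner ℝ u y : ℝ)) := by
  have hM0 : 0 ≤ M := le_trans (norm_nonneg _) (hM 0)
  have hin : ∀ n (y : H), |(inner ℝ (x n) y : ℝ)| ≤ M * ‖y‖ := fun n y =>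
    (abs_real_inner_le_norm _ _).trans
      (mul_le_mul_of_nonneg_right (hM n) (norm_nonneg _))
  set S : Set (ℕ → ℝ) := Set.univ.pi fun _ => Set.Icc (-(M * M)) (M * M) with hSdef
  have hScomp : IsSeqCompact S := (isCompact_univ_pi fun _ => isCompact_Icc).isSeqCompact
  have hmem : ∀ n, (fun m => (inner ℝ (x n) (x m) : ℝ)) ∈ S := by
    intro n m _
    have h1 := hin n (x m)
    have h2 : M * ‖x m‖ ≤ M * M := mul_le_mul_of_nonneg_left (hM m) hM0
    have := abs_le.1 (h1.trans h2)
    exact ⟨this.1, this.2⟩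
  obtain ⟨L, -, p, hp, hLt⟩ := hScomp hmem
  rw [tendsto_pi_nhds] at hLt
  have hLt' : ∀ m, Tendsto (fun n => (inner ℝ (x (p n)) (x m) : ℝ)) atTop (𝓝 (L m)) := by
    intro m; exact hLt m
  set K : Submodule ℝ H := (Submodule.span ℝ (Set.range x)).topologicalClosure with hKdef
  haveI : CompleteSpace K := (Submodule.span ℝ (Set.range x)).isClosed_topologicalClosure.completeSpace_coe
  have hxK : ∀ n, x n ∈ K := fun n =>
    Submodule.le_topologicalClosure _ (Submodule.subset_span ⟨n, rfl⟩)
  have hspan : ∀ v ∈ Submodule.span ℝ (Set.range x),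
      ∃ c, Tendsto (fun n => (inner ℝ (x (p n)) v : ℝ)) atTop (𝓝 c) := by
    intro v hv
    induction hv using Submodule.span_induction with
    | mem w hw => obtain ⟨m, rfl⟩ := hw; exact ⟨L m, hLt' m⟩
    | zero => exact ⟨0, by simpa using (tendsto_const_nhds : Tendsto (fun _ : ℕ => (0:ℝ)) atTop _)⟩
    | add w₁ w₂ _ _ h1 h2 =>
      obtain ⟨c1, h1⟩ := h1; obtain ⟨c2, h2⟩ := h2
      exact ⟨c1 + c2, by simpa [inner_add_right] using h1.add h2⟩
    | smul r w _ hw =>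
      obtain ⟨c, hw⟩ := hw
      exact ⟨r * c, by simpa [real_inner_smul_right] using hw.const_mul r⟩
  have hcauchy : ∀ y : H, ∃ c, Tendsto (fun n => (inner ℝ (x (p n)) y : ℝ)) atTop (𝓝 c) := by
    intro y
    set Py : H := (K.orthogonalProjection y : H) with hPydef
    have hyP : ∀ n, (inner ℝ (x (p n)) y : ℝ) = inner ℝ (x (p n)) Py := by
      intro n
      have horth : (inner ℝ (x (p n)) (y - Py) : ℝ) = 0 :=
        Submodule.inner_right_of_mem_orthogonal (hxK (p n))
          (Submodule.sub_starProjection_mem_orthogonal y)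
      rw [inner_sub_right] at horth
      linarith
    have key : CauchySeq (fun n => (inner ℝ (x (p n)) y : ℝ)) := by
      rw [Metric.cauchySeq_iff']
      intro δ hδ
      have hPyK : Py ∈ closure ((Submodule.span ℝ (Set.range x) : Submodule ℝ H) : Set H) := by
        have h0 : Py ∈ (K : Set H) := (K.orthogonalProjection y).2
        have hKset : (K : Set H) =
            closure ((Submodule.span ℝ (Set.range x) : Submodule ℝ H) : Set H) :=
          Submodule.topologicalClosure_coe _
        exact hKset ▸ h0
      obtain ⟨v, hv, hvd⟩ := Metric.mem_closure_iff.1 hPyK (δ / (4 * (M + 1)))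
        (by positivity)
      obtain ⟨c, hc⟩ := hspan v hv
      obtain ⟨N, hN⟩ := Metric.cauchySeq_iff'.1 hc.cauchySeq (δ / 2) (by positivity)
      refine ⟨N, fun n hn => ?_⟩
      have hclose : ∀ m, |(inner ℝ (x (p m)) Py : ℝ) - inner ℝ (x (p m)) v| ≤ δ / 4 := by
        intro m
        rw [← inner_sub_right]
        have h1 := hin (p m) (Py - v)
        have h2 : ‖Py - v‖ ≤ δ / (4 * (M + 1)) := by
          rw [dist_eq_norm] at hvd; linarith
        have h3 : M * ‖Py - v‖ ≤ M * (δ / (4 * (M + 1))) :=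
          mul_le_mul_of_nonneg_left h2 hM0
        have h4 : M * (δ / (4 * (M + 1))) ≤ δ / 4 := by
          have hq0 : (0:ℝ) ≤ δ / (4 * (M + 1)) := by positivity
          have heq : (M + 1) * (δ / (4 * (M + 1))) = δ / 4 := by
            field_simp
          nlinarith [hq0, heq]
        linarith
      have hNn := hN n hn
      rw [Real.dist_eq] at hNn ⊢
      have e1 := hclose n
      have e2 := hclose N
      have t1 : |(inner ℝ (x (p n)) y : ℝ) - inner ℝ (x (p N)) y| =
          |(inner ℝ (x (p n)) Py : ℝ) - inner ℝ (x (p N)) Py| := by rw [hyP, hyP]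
      rw [t1]
      have t2 : |(inner ℝ (x (p n)) Py : ℝ) - inner ℝ (x (p N)) Py| ≤
          |(inner ℝ (x (p n)) Py : ℝ) - inner ℝ (x (p n)) v| +
          |(inner ℝ (x (p n)) v : ℝ) - inner ℝ (x (p N)) v| +
          |(inner ℝ (x (p N)) v : ℝ) - inner ℝ (x (p N)) Py| := by
        have := abs_sub_le ((inner ℝ (x (p n)) Py : ℝ)) ((inner ℝ (x (p n)) v : ℝ))
          ((inner ℝ (x (p N)) Py : ℝ))
        have := abs_sub_le ((inner ℝ (x (p n)) v : ℝ)) ((inner ℝ (x (p N)) v : ℝ))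
          ((inner ℝ (x (p N)) Py : ℝ))
        linarith [abs_sub_le ((inner ℝ (x (p n)) Py : ℝ)) ((inner ℝ (x (p n)) v : ℝ))
          ((inner ℝ (x (p N)) Py : ℝ)),
          abs_sub_le ((inner ℝ (x (p n)) v : ℝ)) ((inner ℝ (x (p N)) v : ℝ))
          ((inner ℝ (x (p N)) Py : ℝ))]
      have e2' : |(inner ℝ (x (p N)) v : ℝ) - inner ℝ (x (p N)) Py| ≤ δ / 4 := by
        rw [abs_sub_comm]; exact e2
      linarith
    exact cauchySeq_tendsto_of_complete key
  choose ℓ hℓ using hcauchy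
  have hadd : ∀ y z, ℓ (y + z) = ℓ y + ℓ z := fun y z =>
    tendsto_nhds_unique (hℓ (y + z)) (by simpa [inner_add_right] using (hℓ y).add (hℓ z))
  have hsmul : ∀ (r : ℝ) (y : H), ℓ (r • y) = r * ℓ y := fun r y =>
    tendsto_nhds_unique (hℓ (r • y)) (by simpa [real_inner_smul_right] using (hℓ y).const_mul r)
  have hbound : ∀ y, ‖ℓ y‖ ≤ M * ‖y‖ := fun y =>
    le_of_tendsto (hℓ y).norm (Eventually.of_forall fun n => by
      simpa [Real.norm_eq_abs] using hin (p n) y)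
  set E : H →L[ℝ] ℝ := LinearMap.mkContinuous
    { toFun := ℓ, map_add' := hadd, map_smul' := fun r y => by simpa using hsmul r y } M hbound
    with hEdef
  refine ⟨p, hp, (InnerProductSpace.toDual ℝ H).symm E, fun y => ?_⟩
  have hE : (inner ℝ ((InnerProductSpace.toDual ℝ H).symm E) y : ℝ) = E y :=
    InnerProductSpace.toDual_symm_apply
  rw [hE]
  have : E y = ℓ y := rfl
  rw [this]
  exact hℓ y

theorem stmt_6 {H : Type*} [NormedAddCommGroup H] [InnerProductSpace ℝ H] [CompleteSpace H]
    (α : ℝ) (hα : 0 < α)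
    (φ : ℝ → ℝ) (hφ0 : ∀ t, 0 ≤ t → 0 ≤ φ t)
    (hφmono : StrictMonoOn φ (Set.Ici (0 : ℝ)))
    (hφlim : Tendsto φ atTop atTop)
    (W : ℕ → H →L[ℝ] H) (Wl : H →L[ℝ] H)
    (hsa : ∀ n, IsSelfAdjoint (W n)) (hsal : IsSelfAdjoint Wl)
    (hlb : ∀ n (x : H), α * ‖x‖ ^ 2 ≤ (inner ℝ (W n x) x : ℝ))
    (hlbl : ∀ x : H, α * ‖x‖ ^ 2 ≤ (inner ℝ (Wl x) x : ℝ))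
    (hWconv : ∀ x : H, Tendsto (fun n => W n x) atTop (𝓝 (Wl x)))
    (C : Set H) (hC : C.Nonempty) (x : ℕ → H)
    (hfejer : ∃ η : ℕ → ℝ, (∀ n, 0 ≤ η n) ∧ Summable η ∧
      ∀ z ∈ C, ∃ ε : ℕ → ℝ, (∀ n, 0 ≤ ε n) ∧ Summable ε ∧
        ∀ n, φ (wnorm (W (n + 1)) (x (n + 1) - z)) ≤
          (1 + η n) * φ (wnorm (W n) (x n - z)) + ε n) :
    (∃ x' ∈ C, ∀ y : H, Tendsto (fun n => (inner ℝ (x n) y : ℝ)) atTop (𝓝 (inner ℝ x' y : ℝ))) ↔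
      (∀ (x' : H) (p : ℕ → ℕ), StrictMono p →
        (∀ y : H, Tendsto (fun n => (inner ℝ (x (p n)) y : ℝ)) atTop (𝓝 (inner ℝ x' y : ℝ))) →
        x' ∈ C) := by
  constructor
  · rintro ⟨x', hx'C, hx'⟩ x'' p hp hweak
    have heq : x'' = x' := by
      have h1 : ∀ y : H, (inner ℝ x'' y : ℝ) = inner ℝ x' y := fun y =>
        tendsto_nhds_unique (hweak y) ((hx' y).comp hp.tendsto_atTop)
      have h2 : (inner ℝ (x'' - x') (x'' - x') : ℝ) = 0 := by
        rw [inner_sub_left, h1 (x'' - x')]; ring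
      have := inner_self_eq_zero.1 h2
      rwa [sub_eq_zero] at this
    exact heq ▸ hx'C
  · intro hcl
    obtain ⟨η, hη0, hηs, hfz⟩ := hfejer
    have hsym : ∀ n (a b : H), (inner ℝ (W n a) b : ℝ) = inner ℝ a (W n b) := fun n =>
      (ContinuousLinearMap.isSelfAdjoint_iff_isSymmetric.1 (hsa n))
    have hq0 : ∀ n (v : H), 0 ≤ (inner ℝ (W n v) v : ℝ) := fun n v =>
      le_trans (by positivity) (hlb n v)
    have hwsq : ∀ n (v : H), wnorm (W n) v ^ 2 = (inner ℝ (W n v) v : ℝ) := fun n v =>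
      Real.sq_sqrt (hq0 n v)
    -- Step 1: for each z in C, bound and convergence of the weighted distances
    have S1 : ∀ z ∈ C, ∃ T, 0 ≤ T ∧ (∀ n, wnorm (W n) (x n - z) ≤ T) ∧
        ∃ l, Tendsto (fun n => (inner ℝ (W n (x n - z)) (x n - z) : ℝ)) atTop (𝓝 l) := by
      intro z hz
      obtain ⟨ε, hε0, hεs, hrec⟩ := hfz z hz
      have ht0 : ∀ n, 0 ≤ wnorm (W n) (x n - z) := fun n => Real.sqrt_nonneg _
      have ha0 : ∀ n, 0 ≤ φ (wnorm (W n) (x n - z)) := fun n => hφ0 _ (ht0 n)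
      obtain ⟨B, hB0, hBle, Lφ, hLφ⟩ :=
        aux_fejer η ε (fun n => φ (wnorm (W n) (x n - z))) hη0 hηs hε0 hεs ha0 hrec
      obtain ⟨T₀, hT₀⟩ := eventually_atTop.1 (hφlim.eventually (eventually_gt_atTop B))
      have hTb : ∀ n, wnorm (W n) (x n - z) ≤ max T₀ 0 := by
        intro n; by_contra h; push_neg at h
        have h1 : B < φ (wnorm (W n) (x n - z)) :=
          hT₀ _ (le_of_lt (lt_of_le_of_lt (le_max_left _ _) h))
        exact absurd (hBle n) (not_le.2 h1)
      obtain ⟨l, hl⟩ := aux_philim φ hφmono _ ht0 hTb hLφ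
      refine ⟨max T₀ 0, le_max_right _ _, hTb, l ^ 2, ?_⟩
      have hfun : (fun n => (inner ℝ (W n (x n - z)) (x n - z) : ℝ)) =
          fun n => wnorm (W n) (x n - z) ^ 2 := funext fun n => (hwsq n _).symm
      rw [hfun]
      exact hl.pow 2
    -- Step 2: uniform bound on x
    obtain ⟨z0, hz0⟩ := hC
    obtain ⟨T, hT0, hTb, -⟩ := S1 z0 hz0
    have hsα : 0 < Real.sqrt α := Real.sqrt_pos.2 hα
    have hM : ∀ n, ‖x n‖ ≤ ‖z0‖ + T / Real.sqrt α := by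
      intro n
      have h1 : α * ‖x n - z0‖ ^ 2 ≤ wnorm (W n) (x n - z0) ^ 2 := by
        rw [hwsq]; exact hlb n _
      have h2 : wnorm (W n) (x n - z0) ^ 2 ≤ T ^ 2 := by
        have h2a := hTb n
        have h2b : 0 ≤ wnorm (W n) (x n - z0) := Real.sqrt_nonneg _
        nlinarith [h2a, h2b, hT0]
      have h3 : ‖x n - z0‖ ≤ T / Real.sqrt α := by
        rw [le_div_iff₀ hsα]
        nlinarith [Real.sq_sqrt hα.le, norm_nonneg (x n - z0), hT0,
          mul_nonneg (norm_nonneg (x n - z0)) hsα.le]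
      calc ‖x n‖ = ‖x n - z0 + z0‖ := by rw [sub_add_cancel]
        _ ≤ ‖x n - z0‖ + ‖z0‖ := norm_add_le _ _
        _ ≤ ‖z0‖ + T / Real.sqrt α := by linarith
    set M : ℝ := ‖z0‖ + T / Real.sqrt α with hMdef
    -- Step 3: extract a weak limit
    obtain ⟨p, hp, u, hu⟩ := aux_weak x M hM
    have huC : u ∈ C := hcl u p hp hu
    -- Step 4: uniqueness of weak subsequential limits
    have uniq : ∀ (v : H) (q : ℕ → ℕ), StrictMono q →
        (∀ y : H, Tendsto (fun n => (inner ℝ (x (q n)) y : ℝ)) atTop (𝓝 (inner ℝ v y : ℝ))) →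
        v = u := by
      intro v q hq hv
      have hvC : v ∈ C := hcl v q hq hv
      obtain ⟨Tu, -, -, lu, hlu⟩ := S1 u huC
      obtain ⟨Tv, -, -, lv, hlv⟩ := S1 v hvC
      have expand : ∀ (z : H) (n : ℕ), (inner ℝ (W n (x n - z)) (x n - z) : ℝ) =
          (inner ℝ (W n (x n)) (x n) : ℝ) - 2 * (inner ℝ (x n) (W n z) : ℝ) +
            (inner ℝ (W n z) z : ℝ) := by
        intro z n
        have e1 : (inner ℝ (W n (x n)) z : ℝ) = inner ℝ (x n) (W n z) := hsym n _ _
        have e2 : (inner ℝ (W n z) (x n) : ℝ) = inner ℝ (x n) (W n z) :=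
          (hsym n z (x n)).trans ((real_inner_comm _ _).trans (hsym n _ _))
        simp only [map_sub, inner_sub_left, inner_sub_right]
        rw [e1, e2]
        ring
      set c : ℝ := ((lv - lu) - (inner ℝ (Wl v) v : ℝ) + (inner ℝ (Wl u) u : ℝ)) / 2 with hcdef
      have h1 : ∀ n, (inner ℝ (x n) (W n (u - v)) : ℝ) =
          ((inner ℝ (W n (x n - v)) (x n - v) : ℝ) - (inner ℝ (W n (x n - u)) (x n - u) : ℝ)
            - (inner ℝ (W n v) v : ℝ) + (inner ℝ (W n u) u : ℝ)) / 2 := by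
        intro n
        rw [expand u n, expand v n]
        simp only [map_sub, inner_sub_right]
        ring
      have h2 : Tendsto (fun n => (inner ℝ (W n u) u : ℝ)) atTop (𝓝 (inner ℝ (Wl u) u : ℝ)) :=
        (hWconv u).inner tendsto_const_nhds
      have h3 : Tendsto (fun n => (inner ℝ (W n v) v : ℝ)) atTop (𝓝 (inner ℝ (Wl v) v : ℝ)) :=
        (hWconv v).inner tendsto_const_nhds
      have hdiff : Tendsto (fun n => (inner ℝ (x n) (W n (u - v)) : ℝ)) atTop (𝓝 c) := by
        have := (((hlv.sub hlu).sub h3).add h2).div_const 2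
        simp only [h1]
        exact this
      have hWd : Tendsto (fun n => (inner ℝ (x n) (Wl (u - v)) : ℝ)) atTop (𝓝 c) := by
        have hz : Tendsto (fun n => (inner ℝ (x n) (W n (u - v)) : ℝ) -
            (inner ℝ (x n) (Wl (u - v)) : ℝ)) atTop (𝓝 0) := by
          apply squeeze_zero_norm (a := fun n => M * ‖W n (u - v) - Wl (u - v)‖)
          · intro n
            rw [← inner_sub_right]
            calc ‖(inner ℝ (x n) (W n (u - v) - Wl (u - v)) : ℝ)‖
                ≤ ‖x n‖ * ‖W n (u - v) - Wl (u - v)‖ := norm_inner_le_norm _ _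
              _ ≤ M * ‖W n (u - v) - Wl (u - v)‖ :=
                  mul_le_mul_of_nonneg_right (hM n) (norm_nonneg _)
          · have h5 : Tendsto (fun n => W n (u - v) - Wl (u - v)) atTop (𝓝 0) := by
              simpa using (hWconv (u - v)).sub_const (Wl (u - v))
            simpa using (h5.norm.const_mul M)
        have := hdiff.sub hz
        simpa using this
      have e1 : (inner ℝ u (Wl (u - v)) : ℝ) = c :=
        tendsto_nhds_unique (hu (Wl (u - v))) (hWd.comp hp.tendsto_atTop)
      have e2 : (inner ℝ v (Wl (u - v)) : ℝ) = c :=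
        tendsto_nhds_unique (hv (Wl (u - v))) (hWd.comp hq.tendsto_atTop)
      have hz2 : (inner ℝ (Wl (u - v)) (u - v) : ℝ) = 0 := by
        rw [real_inner_comm, inner_sub_left, e1, e2]
        ring
      have hlbuv := hlbl (u - v)
      rw [hz2] at hlbuv
      have hsq : ‖u - v‖ ^ 2 ≤ 0 := by nlinarith [hα]
      have hsq0 : ‖u - v‖ ^ 2 = 0 := le_antisymm hsq (sq_nonneg _)
      have hnn : ‖u - v‖ = 0 := sq_eq_zero_iff.1 hsq0
      have huv := norm_eq_zero.1 hnn
      rw [sub_eq_zero] at huv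
      exact huv.symm
    -- Step 5: conclude
    refine ⟨u, huC, fun y => ?_⟩
    apply tendsto_of_subseq_tendsto
    intro ns hns
    obtain ⟨ms, hms, hnsms⟩ := strictMono_subseq_of_tendsto_atTop hns
    obtain ⟨p2, hp2, v, hv⟩ := aux_weak (fun n => x (ns (ms n))) M (fun n => hM _)
    have hcomp : StrictMono (fun n => ns (ms (p2 n))) := hnsms.comp hp2
    have hveq : v = u := uniq v (fun n => ns (ms (p2 n))) hcomp (fun y' => hv y')
    exact ⟨fun n => ms (p2 n), by
      have := hv y
      rw [hveq] at this
      exact this⟩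
end

section
/- Let H be a real Hilbert space, α > 0, (ηₙ) a summable sequence in [0,+∞[, and (Wₙ) a sequence of self-adjoint operators with Wₙ ≽ α·Id, sup_n ‖Wₙ‖ < +∞, and (1+ηₙ)Wₙ ≽ Wₙ₊₁ for all n. Let C be a nonempty subset of H and (xₙ) a sequence such that for every z ∈ C there is a summable (εₙ) with ‖xₙ₊₁ − z‖²_{Wₙ₊₁} ≤ (1+ηₙ)‖xₙ − z‖²_{Wₙ} + εₙ. Then the same quadratic quasi-Fejér property holds for every z in the convex hull of C: (xₙ) is |·|²-quasi-Fejér monotone with respect to conv C relative to (Wₙ). -/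
open Filter Topology

/-- Weighted variance identity for the quadratic form of a (not nec. selfadjoint) operator. -/
lemma variance_id {H : Type*} [NormedAddCommGroup H] [InnerProductSpace ℝ H]
    (W : H →L[ℝ] H) {ι : Type} [Fintype ι] (w : ι → ℝ) (u : ι → H)
    (hw1 : ∑ i, w i = 1) :
    ∑ i, w i * (inner ℝ (W (u i - ∑ j, w j • u j)) (u i - ∑ j, w j • u j) : ℝ)
      = ∑ i, w i * (inner ℝ (W (u i)) (u i) : ℝ)
        - (inner ℝ (W (∑ j, w j • u j)) (∑ j, w j • u j) : ℝ) := by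
  set z : H := ∑ j, w j • u j with hz
  have h1 : ∑ i, w i * (inner ℝ (W (u i)) z : ℝ) = (inner ℝ (W z) z : ℝ) := by
    have hWz : W z = ∑ i, w i • W (u i) := by simp [hz, map_sum, map_smul]
    rw [hWz, sum_inner]
    simp [real_inner_smul_left]
  have h2 : ∑ i, w i * (inner ℝ (W z) (u i) : ℝ) = (inner ℝ (W z) z : ℝ) := by
    rw [hz, inner_sum]
    simp [real_inner_smul_right]
  have h3 : ∀ i, w i * (inner ℝ (W (u i - z)) (u i - z) : ℝ)
      = w i * (inner ℝ (W (u i)) (u i) : ℝ) - w i * (inner ℝ (W (u i)) z : ℝ)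
        - w i * (inner ℝ (W z) (u i) : ℝ) + w i * (inner ℝ (W z) z : ℝ) := by
    intro i
    simp only [map_sub, inner_sub_left, inner_sub_right]
    ring
  calc ∑ i, w i * (inner ℝ (W (u i - z)) (u i - z) : ℝ)
      = ∑ i, (w i * (inner ℝ (W (u i)) (u i) : ℝ) - w i * (inner ℝ (W (u i)) z : ℝ)
        - w i * (inner ℝ (W z) (u i) : ℝ) + w i * (inner ℝ (W z) z : ℝ)) := by
        exact Finset.sum_congr rfl fun i _ => h3 i
    _ = (∑ i, w i * (inner ℝ (W (u i)) (u i) : ℝ)) - (∑ i, w i * (inner ℝ (W (u i)) z : ℝ))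
        - (∑ i, w i * (inner ℝ (W z) (u i) : ℝ)) + (∑ i, w i * (inner ℝ (W z) z : ℝ)) := by
        rw [Finset.sum_add_distrib, Finset.sum_sub_distrib, Finset.sum_sub_distrib]
    _ = _ := by
        rw [h1, h2, ← Finset.sum_mul, hw1]
        ring

theorem stmt_8 {H : Type*} [NormedAddCommGroup H] [InnerProductSpace ℝ H] [CompleteSpace H]
    (α : ℝ) (hα : 0 < α)
    (η : ℕ → ℝ) (hη0 : ∀ n, 0 ≤ η n) (hη : Summable η)
    (W : ℕ → H →L[ℝ] H) (hsa : ∀ n, IsSelfAdjoint (W n))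
    (hlb : ∀ n (x : H), α * ‖x‖ ^ 2 ≤ (inner ℝ (W n x) x : ℝ))
    (hbd : ∃ μ : ℝ, ∀ n, ‖W n‖ ≤ μ)
    (hmono : ∀ n (x : H), (inner ℝ (W (n + 1) x) x : ℝ) ≤ (1 + η n) * (inner ℝ (W n x) x : ℝ))
    (C : Set H) (hC : C.Nonempty) (x : ℕ → H)
    (hfejer : ∀ z ∈ C, ∃ ε : ℕ → ℝ, (∀ n, 0 ≤ ε n) ∧ Summable ε ∧
      ∀ n, wnorm (W (n + 1)) (x (n + 1) - z) ^ 2 ≤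
        (1 + η n) * wnorm (W n) (x n - z) ^ 2 + ε n) :
    ∃ η' : ℕ → ℝ, (∀ n, 0 ≤ η' n) ∧ Summable η' ∧
      ∀ z ∈ convexHull ℝ C, ∃ ε : ℕ → ℝ, (∀ n, 0 ≤ ε n) ∧ Summable ε ∧
        ∀ n, wnorm (W (n + 1)) (x (n + 1) - z) ^ 2 ≤
          (1 + η' n) * wnorm (W n) (x n - z) ^ 2 + ε n := by
  -- basic facts
  have hinn0 : ∀ n (v : H), 0 ≤ (inner ℝ (W n v) v : ℝ) := fun n v =>
    le_trans (by positivity) (hlb n v)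
  have hwnorm : ∀ n (v : H), wnorm (W n) v ^ 2 = (inner ℝ (W n v) v : ℝ) := fun n v =>
    Real.sq_sqrt (hinn0 n v)
  -- the product sequence s n = ∏_{k<n} (1+η k)
  set s : ℕ → ℝ := fun n => ∏ k ∈ Finset.range n, (1 + η k) with hs
  have hssucc : ∀ n, s (n + 1) = s n * (1 + η n) := by
    intro n; simp only [hs]; exact Finset.prod_range_succ _ n
  have hs1 : ∀ n, 1 ≤ s n := by
    intro n
    induction n with
    | zero => simp [hs]
    | succ k ih => rw [hssucc]; nlinarith [hη0 k]
  have hspos : ∀ n, 0 < s n := fun n => lt_of_lt_of_le one_pos (hs1 n)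
  have hsS : ∀ n, s n ≤ Real.exp (∑' k, η k) := by
    intro n
    show (∏ k ∈ Finset.range n, (1 + η k)) ≤ _
    calc ∏ k ∈ Finset.range n, (1 + η k) ≤ ∏ k ∈ Finset.range n, Real.exp (η k) :=
          Finset.prod_le_prod (fun k _ => by linarith [hη0 k])
            (fun k _ => by linarith [Real.add_one_le_exp (η k)])
      _ = Real.exp (∑ k ∈ Finset.range n, η k) := by rw [← Real.exp_sum]
      _ ≤ Real.exp (∑' k, η k) := Real.exp_le_exp.2 (Summable.sum_le_tsum _ (fun k _ => hη0 k) hη)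
  refine ⟨η, hη0, hη, ?_⟩
  intro z hz
  rw [mem_convexHull_iff_exists_fintype] at hz
  obtain ⟨ι, _, w, u, hw0, hw1, huC, huz⟩ := hz
  -- epsilons for each u i
  choose ε hε0 hεsum hεineq using fun i => hfejer (u i) (huC i)
  -- c n = ∑ w i * ⟨W n (u i - z), u i - z⟩
  set c : ℕ → ℝ := fun n => ∑ i, w i * (inner ℝ (W n (u i - z)) (u i - z) : ℝ) with hc
  have hc0 : ∀ n, 0 ≤ c n := fun n =>
    Finset.sum_nonneg fun i _ => mul_nonneg (hw0 i) (hinn0 n _)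
  have hcmono : ∀ n, c (n + 1) ≤ (1 + η n) * c n := by
    intro n
    simp only [hc]
    rw [Finset.mul_sum]
    exact Finset.sum_le_sum fun i _ => by
      rw [← mul_assoc, mul_comm (1 + η n) (w i), mul_assoc]
      exact mul_le_mul_of_nonneg_left (hmono n _) (hw0 i)
  -- d n = c n / s n is nonincreasing
  set d : ℕ → ℝ := fun n => c n / s n with hd
  have hd0 : ∀ n, 0 ≤ d n := fun n => div_nonneg (hc0 n) (hspos n).le
  have hdmono : ∀ n, d (n + 1) ≤ d n := by
    intro n
    simp only [hd]
    rw [div_le_div_iff₀ (hspos (n + 1)) (hspos n), hssucc n]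
    calc c (n + 1) * s n ≤ ((1 + η n) * c n) * s n :=
          mul_le_mul_of_nonneg_right (hcmono n) (hspos n).le
      _ = c n * (s n * (1 + η n)) := by ring
  -- the defect term δ n = (1+η n) * c n - c (n+1) is nonneg and summable
  set δ : ℕ → ℝ := fun n => (1 + η n) * c n - c (n + 1) with hδ
  have hδ0 : ∀ n, 0 ≤ δ n := fun n => sub_nonneg.2 (hcmono n)
  have hδeq : ∀ n, δ n = s (n + 1) * (d n - d (n + 1)) := by
    intro n
    have h1 : s n ≠ 0 := (hspos n).ne'
    have h2 : (1 : ℝ) + η n ≠ 0 := by nlinarith [hη0 n]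
    simp only [hδ, hd]
    rw [hssucc n]
    field_simp
  have hdsum : Summable (fun n => d n - d (n + 1)) := by
    apply summable_of_sum_range_le (c := d 0) (fun n => sub_nonneg.2 (hdmono n))
    intro n
    rw [Finset.sum_range_sub' (fun k => d k)]
    linarith [hd0 n]
  have hδsum : Summable δ := by
    apply Summable.of_nonneg_of_le hδ0 (fun n => ?_)
      (hdsum.mul_left (Real.exp (∑' k, η k)))
    rw [hδeq n]
    exact mul_le_mul_of_nonneg_right (hsS (n + 1)) (sub_nonneg.2 (hdmono n))
  -- final ε
  refine ⟨fun n => (∑ i, w i * ε i n) + δ n, ?_, ?_, ?_⟩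
  · intro n
    show 0 ≤ (∑ i, w i * ε i n) + δ n
    have : 0 ≤ ∑ i, w i * ε i n :=
      Finset.sum_nonneg fun i _ => mul_nonneg (hw0 i) (hε0 i n)
    linarith [hδ0 n]
  · exact (summable_sum (fun i _ => (hεsum i).mul_left (w i))).add hδsum
  -- the inequality
  intro n
  show wnorm (W (n + 1)) (x (n + 1) - z) ^ 2 ≤
    (1 + η n) * wnorm (W n) (x n - z) ^ 2 + ((∑ i, w i * ε i n) + δ n)
  have hid : ∀ m, (inner ℝ (W m (x m - z)) (x m - z) : ℝ)
      = (∑ i, w i * (inner ℝ (W m (x m - u i)) (x m - u i) : ℝ)) - c m := by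
    intro m
    have h := variance_id (W m) w (fun i => x m - u i) hw1
    have hsum : (∑ j, w j • (x m - u j)) = x m - z := by
      rw [← huz]
      simp only [smul_sub]
      rw [Finset.sum_sub_distrib, ← Finset.sum_smul, hw1, one_smul]
    rw [hsum] at h
    have hcm : c m = ∑ i, w i * (inner ℝ (W m ((x m - u i) - (x m - z))) ((x m - u i) - (x m - z)) : ℝ) := by
      rw [hc]
      refine Finset.sum_congr rfl fun i _ => ?_
      have : (x m - u i) - (x m - z) = -(u i - z) := by abel
      rw [this, map_neg, inner_neg_neg]
    rw [hcm]
    linarith [h]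
  rw [hwnorm, hwnorm, hid (n + 1), hid n]
  have hstep : ∑ i, w i * (inner ℝ (W (n + 1) (x (n + 1) - u i)) (x (n + 1) - u i) : ℝ)
      ≤ ∑ i, w i * ((1 + η n) * (inner ℝ (W n (x n - u i)) (x n - u i) : ℝ) + ε i n) := by
    refine Finset.sum_le_sum fun i _ => mul_le_mul_of_nonneg_left ?_ (hw0 i)
    have := hεineq i n
    rw [hwnorm, hwnorm] at this
    exact this
  have hexp : ∑ i, w i * ((1 + η n) * (inner ℝ (W n (x n - u i)) (x n - u i) : ℝ) + ε i n)
      = (1 + η n) * (∑ i, w i * (inner ℝ (W n (x n - u i)) (x n - u i) : ℝ))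
        + ∑ i, w i * ε i n := by
    rw [Finset.mul_sum, ← Finset.sum_add_distrib]
    exact Finset.sum_congr rfl fun i _ => by ring
  calc (∑ i, w i * (inner ℝ (W (n+1) (x (n+1) - u i)) (x (n+1) - u i) : ℝ)) - c (n+1)
      ≤ ((1 + η n) * (∑ i, w i * (inner ℝ (W n (x n - u i)) (x n - u i) : ℝ))
        + ∑ i, w i * ε i n) - c (n+1) := by
        rw [← hexp]; linarith [hstep]
    _ ≤ (1 + η n) * ((∑ i, w i * (inner ℝ (W n (x n - u i)) (x n - u i) : ℝ)) - c n)
        + ((∑ i, w i * ε i n) + δ n) := by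
        simp only [hδ]; ring_nf; linarith [hc0 n]
end

section
/- Under the hypotheses of the quadratic spreading proposition (α > 0, (ηₙ) summable, (Wₙ) self-adjoint with Wₙ ≽ α·Id, sup_n ‖Wₙ‖ < +∞, (1+ηₙ)Wₙ ≽ Wₙ₊₁, C ⊆ H nonempty, and (xₙ) satisfying ‖xₙ₊₁ − z‖²_{Wₙ₊₁} ≤ (1+ηₙ)‖xₙ − z‖²_{Wₙ} + εₙ(z) with summable εₙ(z) for each z ∈ C), for every y in the closed convex hull of C, the sequence (‖xₙ − y‖_{Wₙ}) converges. -/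
open Filter Topology

/-- A nonnegative sequence satisfying a quasi-Fejér recursion converges. -/
lemma aux_quasi_fejer (b η ε : ℕ → ℝ) (hb : ∀ n, 0 ≤ b n)
    (hη0 : ∀ n, 0 ≤ η n) (hε0 : ∀ n, 0 ≤ ε n)
    (hη : Summable η) (hε : Summable ε)
    (hrec : ∀ n, b (n + 1) ≤ (1 + η n) * b n + ε n) :
    ∃ l : ℝ, Tendsto b atTop (𝓝 l) := by
  set M : ℝ := (b 0 + ∑' k, ε k) * Real.exp (∑' k, η k) with hMdef
  have hεsum : 0 ≤ ∑' k, ε k := tsum_nonneg hε0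
  have hηsum : 0 ≤ ∑' k, η k := tsum_nonneg hη0
  -- partial-sum bound
  have key : ∀ n, b n ≤ (b 0 + ∑ k ∈ Finset.range n, ε k) *
      Real.exp (∑ k ∈ Finset.range n, η k) := by
    intro n
    induction n with
    | zero => simp
    | succ n ih =>
      have h1 : (1 : ℝ) + η n ≤ Real.exp (η n) := by
        have := Real.add_one_le_exp (η n); linarith
      have hpos : (0:ℝ) < Real.exp (∑ k ∈ Finset.range n, η k) := Real.exp_pos _
      have hb0 : 0 ≤ b 0 + ∑ k ∈ Finset.range n, ε k :=
        add_nonneg (hb 0) (Finset.sum_nonneg fun i _ => hε0 i)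
      have h2 : b (n + 1) ≤ (1 + η n) * ((b 0 + ∑ k ∈ Finset.range n, ε k) *
          Real.exp (∑ k ∈ Finset.range n, η k)) + ε n := by
        refine (hrec n).trans ?_
        have : (1 + η n) * b n ≤ (1 + η n) * ((b 0 + ∑ k ∈ Finset.range n, ε k) *
            Real.exp (∑ k ∈ Finset.range n, η k)) :=
          mul_le_mul_of_nonneg_left ih (by linarith [hη0 n])
        linarith
      rw [Finset.sum_range_succ, Finset.sum_range_succ, Real.exp_add]
      have hexp1 : (1:ℝ) ≤ Real.exp (∑ k ∈ Finset.range n, η k) * Real.exp (η n) := by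
        rw [← Real.exp_add]
        exact Real.one_le_exp (add_nonneg (Finset.sum_nonneg fun i _ => hη0 i) (hη0 n))
      calc b (n+1) ≤ (1 + η n) * ((b 0 + ∑ k ∈ Finset.range n, ε k) *
              Real.exp (∑ k ∈ Finset.range n, η k)) + ε n := h2
        _ ≤ Real.exp (η n) * ((b 0 + ∑ k ∈ Finset.range n, ε k) *
              Real.exp (∑ k ∈ Finset.range n, η k)) + ε n *
              (Real.exp (∑ k ∈ Finset.range n, η k) * Real.exp (η n)) := by
            have := mul_le_mul_of_nonneg_right h1 (by positivity :
              (0:ℝ) ≤ (b 0 + ∑ k ∈ Finset.range n, ε k) *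
                Real.exp (∑ k ∈ Finset.range n, η k))
            nlinarith [hε0 n]
        _ = (b 0 + (∑ k ∈ Finset.range n, ε k + ε n)) *
              (Real.exp (∑ k ∈ Finset.range n, η k) * Real.exp (η n)) := by ring
  have hbM : ∀ n, b n ≤ M := by
    intro n
    refine (key n).trans ?_
    have h1 : b 0 + ∑ k ∈ Finset.range n, ε k ≤ b 0 + ∑' k, ε k := by
      have := Summable.sum_le_tsum (Finset.range n) (fun i _ => hε0 i) hε
      linarith
    have h2 : Real.exp (∑ k ∈ Finset.range n, η k) ≤ Real.exp (∑' k, η k) :=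
      Real.exp_le_exp.2 (Summable.sum_le_tsum (Finset.range n) (fun i _ => hη0 i) hη)
    have hb0 : 0 ≤ b 0 + ∑ k ∈ Finset.range n, ε k :=
      add_nonneg (hb 0) (Finset.sum_nonneg fun i _ => hε0 i)
    exact mul_le_mul h1 h2 (Real.exp_pos _).le (by linarith [hb 0])
  have hM0 : 0 ≤ M := le_trans (hb 0) (hbM 0)
  -- additive error sequence
  set δ : ℕ → ℝ := fun n => η n * M + ε n with hδdef
  have hδ0 : ∀ n, 0 ≤ δ n := fun n => add_nonneg (mul_nonneg (hη0 n) hM0) (hε0 n)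
  have hδ : Summable δ := (hη.mul_right M).add hε
  have hrec2 : ∀ n, b (n + 1) ≤ b n + δ n := by
    intro n
    have : η n * b n ≤ η n * M := mul_le_mul_of_nonneg_left (hbM n) (hη0 n)
    have := hrec n
    simp only [hδdef]
    nlinarith
  set t : ℕ → ℝ := fun n => ∑' k, δ (k + n) with htdef
  have htsummable : ∀ n, Summable fun k => δ (k + n) := fun n =>
    (summable_nat_add_iff n).2 hδ
  have ht0 : ∀ n, 0 ≤ t n := fun n => tsum_nonneg fun k => hδ0 _
  have htail : ∀ n, t n = δ n + t (n + 1) := by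
    intro n
    have := Summable.tsum_eq_zero_add (htsummable n)
    simp only [zero_add, Nat.add_right_comm _ 1 n] at this; exact this
  set g : ℕ → ℝ := fun n => b n + t n with hgdef
  have hganti : Antitone g := by
    refine antitone_nat_of_succ_le fun n => ?_
    have h1 := hrec2 n
    have h2 := htail n
    simp only [hgdef]
    linarith
  have hgbdd : BddBelow (Set.range g) := by
    refine ⟨0, ?_⟩
    rintro _ ⟨n, rfl⟩
    exact add_nonneg (hb n) (ht0 n)
  have hgconv : Tendsto g atTop (𝓝 (⨅ n, g n)) := tendsto_atTop_ciInf hganti hgbdd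
  have htconv : Tendsto t atTop (𝓝 0) := tendsto_sum_nat_add δ
  refine ⟨(⨅ n, g n) - 0, ?_⟩
  have : (fun n => g n - t n) = b := by funext n; simp [hgdef]
  simpa [this] using hgconv.sub htconv

theorem stmt_9 {H : Type*} [NormedAddCommGroup H] [InnerProductSpace ℝ H] [CompleteSpace H]
    (α : ℝ) (hα : 0 < α)
    (η : ℕ → ℝ) (hη0 : ∀ n, 0 ≤ η n) (hη : Summable η)
    (W : ℕ → H →L[ℝ] H) (hsa : ∀ n, IsSelfAdjoint (W n))
    (hlb : ∀ n (x : H), α * ‖x‖ ^ 2 ≤ (inner ℝ (W n x) x : ℝ))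
    (hbd : ∃ μ : ℝ, ∀ n, ‖W n‖ ≤ μ)
    (hmono : ∀ n (x : H), (inner ℝ (W (n + 1) x) x : ℝ) ≤ (1 + η n) * (inner ℝ (W n x) x : ℝ))
    (C : Set H) (hC : C.Nonempty) (x : ℕ → H)
    (hfejer : ∀ z ∈ C, ∃ ε : ℕ → ℝ, (∀ n, 0 ≤ ε n) ∧ Summable ε ∧
      ∀ n, wnorm (W (n + 1)) (x (n + 1) - z) ^ 2 ≤
        (1 + η n) * wnorm (W n) (x n - z) ^ 2 + ε n) :
    ∀ y ∈ closure (convexHull ℝ C),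
      ∃ l : ℝ, Tendsto (fun n => wnorm (W n) (x n - y)) atTop (𝓝 l) := by
  obtain ⟨μ, hμ⟩ := hbd
  have hμ0 : 0 ≤ μ := (norm_nonneg _).trans (hμ 0)
  set Q : ℕ → H → ℝ := fun n v => (inner ℝ (W n v) v : ℝ) with hQdef
  have hQ0 : ∀ n v, 0 ≤ Q n v := fun n v =>
    le_trans (by positivity) (hlb n v)
  have hw2 : ∀ n v, wnorm (W n) v ^ 2 = Q n v := fun n v => Real.sq_sqrt (hQ0 n v)
  have hsym : ∀ n (u v : H), (inner ℝ (W n u) v : ℝ) = (inner ℝ (W n v) u : ℝ) := by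
    intro n u v
    have h := ((hsa n).isSymmetric u v).trans (real_inner_comm u _).symm
    simpa using h
  -- (A) convergence of Q n v for fixed v
  have hA : ∀ v : H, ∃ l, Tendsto (fun n => Q n v) atTop (𝓝 l) := by
    intro v
    exact aux_quasi_fejer (fun n => Q n v) η (fun _ => 0) (fun n => hQ0 n v) hη0
      (fun _ => le_refl 0) hη summable_zero (fun n => by simpa using hmono n v)
  -- (B) convergence of Q n (x n - z) for z ∈ C
  have hB : ∀ z ∈ C, ∃ l, Tendsto (fun n => Q n (x n - z)) atTop (𝓝 l) := by
    intro z hz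
    obtain ⟨ε, hε0, hεs, hεrec⟩ := hfejer z hz
    refine aux_quasi_fejer (fun n => Q n (x n - z)) η ε (fun n => hQ0 n _) hη0 hε0 hη hεs ?_
    intro n
    have := hεrec n
    rwa [hw2, hw2] at this
  -- quadratic identity
  have quad : ∀ (n : ℕ) (u v : H) (a b : ℝ), a + b = 1 →
      Q n (a • u + b • v) = a * Q n u + b * Q n v - a * b * Q n (u - v) := by
    intro n u v a b hab
    have hs := hsym n u v
    have hb' : b = 1 - a := by linarith
    subst hb'
    simp only [hQdef, map_add, map_smul, map_sub, inner_add_left, inner_add_right,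
      inner_sub_left, inner_sub_right, real_inner_smul_left, real_inner_smul_right]
    rw [hs]
    ring
  -- (C) convergence on the convex hull
  have hD : ∀ y ∈ convexHull ℝ C, ∃ l, Tendsto (fun n => Q n (x n - y)) atTop (𝓝 l) := by
    have hsub : convexHull ℝ C ⊆
        {y : H | ∃ l, Tendsto (fun n => Q n (x n - y)) atTop (𝓝 l)} := by
      refine convexHull_min (fun z hz => hB z hz) ?_
      intro y1 h1 y2 h2 a b ha hb hab
      obtain ⟨l1, hl1⟩ := h1
      obtain ⟨l2, hl2⟩ := h2
      obtain ⟨l3, hl3⟩ := hA (y2 - y1)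
      refine ⟨a * l1 + b * l2 - a * b * l3, ?_⟩
      have heq : ∀ n, Q n (x n - (a • y1 + b • y2)) =
          a * Q n (x n - y1) + b * Q n (x n - y2) - a * b * Q n (y2 - y1) := by
        intro n
        have hx : x n - (a • y1 + b • y2) = a • (x n - y1) + b • (x n - y2) := by
          match_scalars <;> linarith
        have hd : (x n - y1) - (x n - y2) = y2 - y1 := by abel
        rw [hx, quad n _ _ a b hab, hd]
      have := ((hl1.const_mul a).add (hl2.const_mul b)).sub (hl3.const_mul (a * b))
      exact Tendsto.congr (fun n => (heq n).symm) this
    exact fun y hy => hsub hy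
  -- boundedness of x
  obtain ⟨z0, hz0⟩ := hC
  obtain ⟨l0, hl0⟩ := hB z0 hz0
  obtain ⟨B, hBbd⟩ : ∃ B : ℝ, ∀ n, Q n (x n - z0) ≤ B := by
    have := hl0.bddAbove_range
    obtain ⟨B, hB⟩ := this
    exact ⟨B, fun n => hB ⟨n, rfl⟩⟩
  have hxbd : ∃ R : ℝ, ∀ n, ‖x n‖ ≤ R := by
    refine ⟨‖z0‖ + Real.sqrt (B / α), fun n => ?_⟩
    have h1 : α * ‖x n - z0‖ ^ 2 ≤ B := (hlb n (x n - z0)).trans (hBbd n)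
    have h2 : ‖x n - z0‖ ^ 2 ≤ B / α := by
      rw [le_div_iff₀ hα]; linarith
    have h3 : ‖x n - z0‖ ≤ Real.sqrt (B / α) := by
      have := Real.sqrt_le_sqrt h2
      rwa [Real.sqrt_sq (norm_nonneg _)] at this
    calc ‖x n‖ = ‖z0 + (x n - z0)‖ := by rw [add_sub_cancel]
      _ ≤ ‖z0‖ + ‖x n - z0‖ := norm_add_le _ _
      _ ≤ ‖z0‖ + Real.sqrt (B / α) := by linarith
  obtain ⟨R, hR⟩ := hxbd
  have hR0 : 0 ≤ R := (norm_nonneg _).trans (hR 0)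
  -- Lipschitz-type estimate for Q
  have hlip : ∀ (n : ℕ) (u v : H), |Q n u - Q n v| ≤ μ * (‖u‖ + ‖v‖) * ‖u - v‖ := by
    intro n u v
    have hsplit : Q n u - Q n v = (inner ℝ (W n (u - v)) u : ℝ) + (inner ℝ (W n v) (u - v) : ℝ) := by
      simp only [hQdef, map_sub, inner_sub_left, inner_sub_right]
      have := hsym n v u
      linarith
    rw [hsplit]
    have h1 : |(inner ℝ (W n (u - v)) u : ℝ)| ≤ μ * ‖u - v‖ * ‖u‖ := by
      refine (abs_real_inner_le_norm _ _).trans ?_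
      have := (W n).le_opNorm (u - v)
      have h2 : ‖W n (u - v)‖ ≤ μ * ‖u - v‖ :=
        this.trans (mul_le_mul_of_nonneg_right (hμ n) (norm_nonneg _))
      exact mul_le_mul_of_nonneg_right h2 (norm_nonneg _)
    have h2 : |(inner ℝ (W n v) (u - v) : ℝ)| ≤ μ * ‖v‖ * ‖u - v‖ := by
      refine (abs_real_inner_le_norm _ _).trans ?_
      have := (W n).le_opNorm v
      have h3 : ‖W n v‖ ≤ μ * ‖v‖ :=
        this.trans (mul_le_mul_of_nonneg_right (hμ n) (norm_nonneg _))
      exact mul_le_mul_of_nonneg_right h3 (norm_nonneg _)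
    calc |(inner ℝ (W n (u - v)) u : ℝ) + (inner ℝ (W n v) (u - v) : ℝ)|
        ≤ |(inner ℝ (W n (u - v)) u : ℝ)| + |(inner ℝ (W n v) (u - v) : ℝ)| := abs_add_le _ _
      _ ≤ μ * ‖u - v‖ * ‖u‖ + μ * ‖v‖ * ‖u - v‖ := add_le_add h1 h2
      _ = μ * (‖u‖ + ‖v‖) * ‖u - v‖ := by ring
  -- main closure argument
  intro y hy
  set K : ℝ := μ * (2 * (R + ‖y‖) + 1) + 1 with hKdef
  have hK1 : 1 ≤ K := by
    have : 0 ≤ μ * (2 * (R + ‖y‖) + 1) := by positivity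
    linarith
  have hK0 : 0 < K := lt_of_lt_of_le one_pos hK1
  -- local comparison estimate
  have hcomp : ∀ (n : ℕ) (y' : H), ‖y - y'‖ ≤ 1 →
      |Q n (x n - y) - Q n (x n - y')| ≤ K * ‖y - y'‖ := by
    intro n y' hy'
    have hd : (x n - y) - (x n - y') = y' - y := by abel
    have h1 : ‖x n - y‖ ≤ R + ‖y‖ := (norm_sub_le _ _).trans (by linarith [hR n])
    have h2 : ‖x n - y'‖ ≤ R + ‖y‖ + 1 := by
      have : ‖x n - y'‖ ≤ ‖x n - y‖ + ‖y - y'‖ := by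
        calc ‖x n - y'‖ = ‖(x n - y) + (y - y')‖ := by rw [sub_add_sub_cancel]
          _ ≤ ‖x n - y‖ + ‖y - y'‖ := norm_add_le _ _
      linarith
    have := hlip n (x n - y) (x n - y')
    rw [hd, norm_sub_rev y' y] at this
    refine this.trans ?_
    have hμle : μ * (‖x n - y‖ + ‖x n - y'‖) ≤ K := by
      have : μ * (‖x n - y‖ + ‖x n - y'‖) ≤ μ * (2 * (R + ‖y‖) + 1) := by
        apply mul_le_mul_of_nonneg_left _ hμ0
        linarith
      linarith
    exact mul_le_mul_of_nonneg_right hμle (norm_nonneg _)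
  -- Cauchy sequence
  have hcauchy : CauchySeq (fun n => Q n (x n - y)) := by
    rw [Metric.cauchySeq_iff]
    intro ε hε
    have hδpos : 0 < min 1 (ε / (4 * K)) := lt_min one_pos (by positivity)
    obtain ⟨y', hy'mem, hy'dist⟩ := Metric.mem_closure_iff.1 hy _ hδpos
    rw [dist_eq_norm] at hy'dist
    obtain ⟨l', hl'⟩ := hD y' hy'mem
    have hc : CauchySeq (fun n => Q n (x n - y')) := hl'.cauchySeq
    rw [Metric.cauchySeq_iff] at hc
    obtain ⟨N, hN⟩ := hc (ε / 2) (by positivity)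
    refine ⟨N, fun m hm n hn => ?_⟩
    have h1 := hcomp m y' (hy'dist.le.trans (min_le_left _ _))
    have h2 := hcomp n y' (hy'dist.le.trans (min_le_left _ _))
    have h3 := hN m hm n hn
    rw [Real.dist_eq] at h3 ⊢
    have hyd : K * ‖y - y'‖ < ε / 4 := by
      have : ‖y - y'‖ < ε / (4 * K) := lt_of_lt_of_le hy'dist (min_le_right _ _)
      calc K * ‖y - y'‖ < K * (ε / (4 * K)) := by
            exact (mul_lt_mul_iff_right₀ hK0).2 this
        _ = ε / 4 := by field_simp
    have e1 : |Q m (x m - y) - Q m (x m - y')| < ε / 4 := lt_of_le_of_lt h1 hyd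
    have e2 : |Q n (x n - y) - Q n (x n - y')| < ε / 4 := lt_of_le_of_lt h2 hyd
    calc |Q m (x m - y) - Q n (x n - y)|
        ≤ |Q m (x m - y) - Q m (x m - y')| + |Q m (x m - y') - Q n (x n - y)| :=
          abs_sub_le _ _ _
      _ ≤ |Q m (x m - y) - Q m (x m - y')| + (|Q m (x m - y') - Q n (x n - y')| +
          |Q n (x n - y') - Q n (x n - y)|) := by
          have := abs_sub_le (Q m (x m - y')) (Q n (x n - y')) (Q n (x n - y))
          linarith
      _ < ε / 4 + (ε / 2 + ε / 4) := by
          refine add_lt_add e1 (add_lt_add h3 ?_)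
          rwa [abs_sub_comm]
      _ = ε := by ring
  obtain ⟨l, hl⟩ := cauchySeq_tendsto_of_complete hcauchy
  refine ⟨Real.sqrt l, ?_⟩
  have : (fun n => wnorm (W n) (x n - y)) = fun n => Real.sqrt (Q n (x n - y)) := rfl
  rw [this]
  exact (Real.continuous_sqrt.tendsto l).comp hl
end

section
/- Let H be a real Hilbert space, α > 0, (ηₙ) summable in [0,+∞[, (Wₙ) a uniformly bounded sequence of self-adjoint operators with Wₙ ≽ α·Id, C a nonempty closed convex subset of H, and (xₙ) a sequence such that there exist summable (εₙ), (ηₙ) with ‖xₙ₊₁ − z‖²_{Wₙ₊₁} ≤ (1+ηₙ)‖xₙ − z‖²_{Wₙ} + εₙ for all z ∈ C and n ∈ ℕ. Then the projected sequence (P_C^{Wₙ} xₙ) converges strongly in H. -/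
open Filter Topology

private lemma aux_exp_bound (a η ε : ℕ → ℝ) (ha : ∀ k, 0 ≤ a k) (hη0 : ∀ k, 0 ≤ η k)
    (hε0 : ∀ k, 0 ≤ ε k) (n : ℕ)
    (hrec : ∀ k, n ≤ k → a (k + 1) ≤ (1 + η k) * a k + ε k) :
    ∀ m, n ≤ m → a m ≤ (a n + ∑ k ∈ Finset.Ico n m, ε k) *
      Real.exp (∑ k ∈ Finset.Ico n m, η k) := by
  intro m hm
  induction m, hm using Nat.le_induction with
  | base => simp
  | succ m hm ih =>
    have hA : 0 ≤ a n + ∑ k ∈ Finset.Ico n m, ε k :=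
      add_nonneg (ha n) (Finset.sum_nonneg fun k _ => hε0 k)
    have h1 : a (m + 1) ≤ (1 + η m) * a m + ε m := hrec m hm
    have h2 : (1 + η m) * a m ≤ (1 + η m) * ((a n + ∑ k ∈ Finset.Ico n m, ε k) *
        Real.exp (∑ k ∈ Finset.Ico n m, η k)) :=
      mul_le_mul_of_nonneg_left ih (by linarith [hη0 m])
    have h3 : (1 + η m) ≤ Real.exp (η m) := by
      have := Real.add_one_le_exp (η m); linarith
    have hES : (1 : ℝ) ≤ Real.exp (∑ k ∈ Finset.Ico n m, η k) :=
      Real.one_le_exp (Finset.sum_nonneg fun k _ => hη0 k)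
    have hEη : (1 : ℝ) ≤ Real.exp (η m) := Real.one_le_exp (hη0 m)
    rw [Finset.sum_Ico_succ_top hm, Finset.sum_Ico_succ_top hm, Real.exp_add]
    have h4 : (1 + η m) * ((a n + ∑ k ∈ Finset.Ico n m, ε k) *
        Real.exp (∑ k ∈ Finset.Ico n m, η k)) ≤
        Real.exp (η m) * ((a n + ∑ k ∈ Finset.Ico n m, ε k) *
        Real.exp (∑ k ∈ Finset.Ico n m, η k)) :=
      mul_le_mul_of_nonneg_right h3 (by positivity)
    have hE : (1:ℝ) ≤ Real.exp (∑ k ∈ Finset.Ico n m, η k) * Real.exp (η m) := by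
      nlinarith
    have h5 : ε m ≤ ε m * (Real.exp (∑ k ∈ Finset.Ico n m, η k) * Real.exp (η m)) :=
      le_mul_of_one_le_right (hε0 m) hE
    nlinarith

private lemma aux_tail_tendsto (f : ℕ → ℝ) (hf : Summable f) :
    Tendsto (fun n => ∑' k, f (n + k)) atTop (𝓝 0) := by
  have heq : ∀ n, ∑' k, f (n + k) = (∑' k, f k) - ∑ k ∈ Finset.range n, f k := by
    intro n
    have h1 : ∑ i ∈ Finset.range n, f i + ∑' i, f (i + n) = ∑' i, f i :=
      hf.sum_add_tsum_nat_add n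
    have h2 : ∑' k, f (n + k) = ∑' i, f (i + n) := tsum_congr fun k => by rw [add_comm]
    linarith
  simp only [heq]
  have h3 : Tendsto (fun n => (∑' k, f k) - ∑ k ∈ Finset.range n, f k) atTop
      (𝓝 ((∑' k, f k) - ∑' k, f k)) := tendsto_const_nhds.sub hf.hasSum.tendsto_sum_nat
  simpa using h3

theorem stmt_10 {H : Type*} [NormedAddCommGroup H] [InnerProductSpace ℝ H] [CompleteSpace H]
    (α : ℝ) (hα : 0 < α)
    (η ε : ℕ → ℝ) (hη0 : ∀ n, 0 ≤ η n) (hη : Summable η)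
    (hε0 : ∀ n, 0 ≤ ε n) (hε : Summable ε)
    (W : ℕ → H →L[ℝ] H) (hsa : ∀ n, IsSelfAdjoint (W n))
    (hlb : ∀ n (x : H), α * ‖x‖ ^ 2 ≤ (inner ℝ (W n x) x : ℝ))
    (hbd : ∃ μ : ℝ, ∀ n, ‖W n‖ ≤ μ)
    (C : Set H) (hC : C.Nonempty) (hCcl : IsClosed C) (hCconv : Convex ℝ C)
    (x : ℕ → H)
    (hfejer : ∀ z ∈ C, ∀ n, wnorm (W (n + 1)) (x (n + 1) - z) ^ 2 ≤
      (1 + η n) * wnorm (W n) (x n - z) ^ 2 + ε n)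
    (z : ℕ → H) (hzC : ∀ n, z n ∈ C)
    (hzproj : ∀ n, ∀ y ∈ C, (inner ℝ (W n (y - z n)) (x n - z n) : ℝ) ≤ 0) :
    ∃ l : H, Tendsto z atTop (𝓝 l) := by
  classical
  set φ : ℕ → H → ℝ := fun n u => (inner ℝ (W n (x n - u)) (x n - u) : ℝ) with hφdef
  have hφ0 : ∀ n u, 0 ≤ φ n u := by
    intro n u
    exact le_trans (by positivity) (hlb n (x n - u))
  have hwn : ∀ n u, wnorm (W n) (x n - u) ^ 2 = φ n u := by
    intro n u
    exact Real.sq_sqrt (hφ0 n u)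
  have hsym : ∀ n (u v : H), (inner ℝ (W n u) v : ℝ) = (inner ℝ (W n v) u : ℝ) := by
    intro n u v
    have h := (ContinuousLinearMap.isSelfAdjoint_iff_isSymmetric.mp (hsa n)) u v
    calc (inner ℝ (W n u) v : ℝ) = (inner ℝ u (W n v) : ℝ) := h
      _ = (inner ℝ (W n v) u : ℝ) := real_inner_comm _ _
  -- key expansion lemma
  have hkey : ∀ m, ∀ y ∈ C, φ m (z m) + α * ‖z m - y‖ ^ 2 ≤ φ m y := by
    intro m y hy
    have hdecomp : x m - y = (x m - z m) + (z m - y) := by abel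
    have hexp : φ m y = φ m (z m) + 2 * (inner ℝ (W m (z m - y)) (x m - z m) : ℝ)
        + (inner ℝ (W m (z m - y)) (z m - y) : ℝ) := by
      simp only [hφdef]
      rw [hdecomp, map_add, inner_add_left, inner_add_right, inner_add_right,
        hsym m (x m - z m) (z m - y)]
      ring
    have h1 : 0 ≤ (inner ℝ (W m (z m - y)) (x m - z m) : ℝ) := by
      have h0 := hzproj m y hy
      have heq : W m (y - z m) = - W m (z m - y) := by
        rw [← map_neg]; congr 1; abel
      rw [heq, inner_neg_left] at h0
      linarith
    have h2 : α * ‖z m - y‖ ^ 2 ≤ (inner ℝ (W m (z m - y)) (z m - y) : ℝ) := hlb m _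
    linarith
  -- Fejér recursion for φ
  have hstep : ∀ y ∈ C, ∀ n, φ (n + 1) y ≤ (1 + η n) * φ n y + ε n := by
    intro y hy n
    rw [← hwn, ← hwn]
    exact hfejer y hy n
  set d : ℕ → ℝ := fun n => φ n (z n) with hddef
  have hd0 : ∀ n, 0 ≤ d n := fun n => hφ0 n (z n)
  -- d recursion
  have hd_le : ∀ m, ∀ y ∈ C, d m ≤ φ m y := by
    intro m y hy
    have := hkey m y hy
    nlinarith [sq_nonneg ‖z m - y‖]
  have hd_rec : ∀ n, d (n + 1) ≤ (1 + η n) * d n + ε n := by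
    intro n
    calc d (n + 1) ≤ φ (n + 1) (z n) := hd_le (n + 1) (z n) (hzC n)
    _ ≤ (1 + η n) * φ n (z n) + ε n := hstep (z n) (hzC n) n
  -- bound on d
  set M : ℝ := (d 0 + ∑' k, ε k) * Real.exp (∑' k, η k) with hMdef
  have hεts : ∀ n m, ∑ k ∈ Finset.Ico n m, ε k ≤ ∑' k, ε (n + k) := by
    intro n m
    rw [Finset.sum_Ico_eq_sum_range]
    have hs : Summable (fun k => ε (n + k)) := by
      simpa [add_comm] using (summable_nat_add_iff n).mpr hε
    exact Summable.sum_le_tsum _ (fun k _ => hε0 _) hs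
  have hηts : ∀ n m, ∑ k ∈ Finset.Ico n m, η k ≤ ∑' k, η (n + k) := by
    intro n m
    rw [Finset.sum_Ico_eq_sum_range]
    have hs : Summable (fun k => η (n + k)) := by
      simpa [add_comm] using (summable_nat_add_iff n).mpr hη
    exact Summable.sum_le_tsum _ (fun k _ => hη0 _) hs
  have hεtail0 : ∀ n, 0 ≤ ∑' k, ε (n + k) := fun n => tsum_nonneg fun k => hε0 _
  have hηtail0 : ∀ n, 0 ≤ ∑' k, η (n + k) := fun n => tsum_nonneg fun k => hη0 _
  -- general bound: for m ≥ n, φ m (z n) ≤ (d n + tail ε n) * exp (tail η n)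
  have hmain : ∀ n m, n ≤ m →
      φ m (z n) ≤ (d n + ∑' k, ε (n + k)) * Real.exp (∑' k, η (n + k)) := by
    intro n m hnm
    have haux := aux_exp_bound (fun m => φ m (z n)) η ε (fun k => hφ0 k (z n)) hη0 hε0 n
      (fun k _ => hstep (z n) (hzC n) k) m hnm
    have h1 : φ n (z n) + ∑ k ∈ Finset.Ico n m, ε k ≤ d n + ∑' k, ε (n + k) := by
      have := hεts n m; simp only [hddef]; linarith
    have h2 : Real.exp (∑ k ∈ Finset.Ico n m, η k) ≤ Real.exp (∑' k, η (n + k)) :=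
      Real.exp_le_exp.mpr (hηts n m)
    calc φ m (z n) ≤ (φ n (z n) + ∑ k ∈ Finset.Ico n m, ε k) *
          Real.exp (∑ k ∈ Finset.Ico n m, η k) := haux
      _ ≤ (d n + ∑' k, ε (n + k)) * Real.exp (∑' k, η (n + k)) := by
          apply mul_le_mul h1 h2 (by positivity)
          have := hd0 n; have := hεtail0 n; linarith
  have hdM : ∀ m, d m ≤ M := by
    intro m
    have h := hmain 0 m (Nat.zero_le m)
    have h1 : ∑' k, ε (0 + k) = ∑' k, ε k := tsum_congr fun k => by rw [zero_add]
    have h2 : ∑' k, η (0 + k) = ∑' k, η k := tsum_congr fun k => by rw [zero_add]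
    rw [h1, h2] at h
    exact le_trans (hd_le m (z 0) (hzC 0)) h
  have hM0 : 0 ≤ M := le_trans (hd0 0) (hdM 0)
  -- d converges
  set c : ℕ → ℝ := fun n => η n * M + ε n with hcdef
  have hc0 : ∀ n, 0 ≤ c n := fun n => add_nonneg (mul_nonneg (hη0 n) hM0) (hε0 n)
  have hcs : Summable c := (hη.mul_right M).add hε
  have hd_step : ∀ n, d (n + 1) ≤ d n + c n := by
    intro n
    have h1 := hd_rec n
    have h2 : η n * d n ≤ η n * M := mul_le_mul_of_nonneg_left (hdM n) (hη0 n)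
    simp only [hcdef]
    nlinarith
  set u : ℕ → ℝ := fun n => d n + ∑' k, c (n + k) with hudef
  have hctail : ∀ n, c n + ∑' k, c (n + 1 + k) = ∑' k, c (n + k) := by
    intro n
    have hs : Summable (fun k => c (n + k)) := by
      simpa [add_comm] using (summable_nat_add_iff n).mpr hcs
    have h1 : ∑' k, c (n + k) = c (n + 0) + ∑' k, c (n + (k + 1)) := Summable.tsum_eq_zero_add hs
    have h2 : ∑' k, c (n + (k + 1)) = ∑' k, c (n + 1 + k) := tsum_congr fun k => by ring_nf
    rw [h1, h2]; ring_nf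
  have hu_anti : Antitone u := by
    apply antitone_nat_of_succ_le
    intro n
    simp only [hudef]
    have := hd_step n
    have := hctail n
    linarith
  have hu_bdd : BddBelow (Set.range u) := by
    refine ⟨0, ?_⟩
    rintro _ ⟨n, rfl⟩
    exact add_nonneg (hd0 n) (tsum_nonneg fun k => hc0 _)
  have hu_tendsto : Tendsto u atTop (𝓝 (⨅ n, u n)) := tendsto_atTop_ciInf hu_anti hu_bdd
  set L : ℝ := ⨅ n, u n with hLdef
  have hctail_tendsto : Tendsto (fun n => ∑' k, c (n + k)) atTop (𝓝 0) :=
    aux_tail_tendsto c hcs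
  have hd_tendsto : Tendsto d atTop (𝓝 L) := by
    have h := hu_tendsto.sub hctail_tendsto
    simp only [hudef] at h
    simpa using h
  -- Cauchy
  have hεtail_tendsto : Tendsto (fun n => ∑' k, ε (n + k)) atTop (𝓝 0) :=
    aux_tail_tendsto ε hε
  have hηtail_tendsto : Tendsto (fun n => ∑' k, η (n + k)) atTop (𝓝 0) :=
    aux_tail_tendsto η hη
  have hcauchy : CauchySeq z := by
    rw [Metric.cauchySeq_iff']
    intro δ hδ
    set f : ℝ → ℝ := fun ρ => (L + 2 * ρ) * Real.exp ρ - (L - ρ) with hfdef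
    obtain ⟨ρ, hρpos, hρ⟩ : ∃ ρ > 0, f ρ < α * δ ^ 2 := by
      have hfc : ContinuousAt f 0 := by fun_prop
      have hf0 : f 0 = 0 := by simp [hfdef]
      have h1 : Tendsto f (𝓝[>] (0:ℝ)) (𝓝 0) := by
        have h := hfc.tendsto
        rw [hf0] at h
        exact h.mono_left nhdsWithin_le_nhds
      have h2 : ∀ᶠ ρ in 𝓝[>] (0:ℝ), f ρ < α * δ ^ 2 :=
        h1.eventually_lt_const (by positivity)
      obtain ⟨ρ, h3, h4⟩ := (h2.and self_mem_nhdsWithin).exists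
      exact ⟨ρ, h4, h3⟩
    obtain ⟨N₁, hN₁⟩ := Metric.tendsto_atTop.mp hd_tendsto ρ hρpos
    obtain ⟨N₂, hN₂⟩ := Metric.tendsto_atTop.mp hεtail_tendsto ρ hρpos
    obtain ⟨N₃, hN₃⟩ := Metric.tendsto_atTop.mp hηtail_tendsto ρ hρpos
    set N : ℕ := max N₁ (max N₂ N₃) with hNdef
    refine ⟨N, fun n hn => ?_⟩
    have hdN : |d N - L| < ρ := by
      have := hN₁ N (le_max_left _ _); rwa [Real.dist_eq] at this
    have hdn : |d n - L| < ρ := by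
      have := hN₁ n (le_trans (le_max_left _ _) hn); rwa [Real.dist_eq] at this
    have hεN : ∑' k, ε (N + k) < ρ := by
      have := hN₂ N (le_trans (le_max_left _ _) (le_max_right _ _))
      rw [Real.dist_eq] at this
      have h0 := hεtail0 N
      rw [abs_of_nonneg (by linarith)] at this
      linarith
    have hηN : ∑' k, η (N + k) < ρ := by
      have := hN₃ N (le_trans (le_max_right _ _) (le_max_right _ _))
      rw [Real.dist_eq] at this
      have h0 := hηtail0 N
      rw [abs_of_nonneg (by linarith)] at this
      linarith
    -- the estimate
    have hest : d n + α * ‖z n - z N‖ ^ 2 ≤ φ n (z N) := hkey n (z N) (hzC N)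
    have hbound := hmain N n hn
    have hexp_le : Real.exp (∑' k, η (N + k)) ≤ Real.exp ρ :=
      Real.exp_le_exp.mpr (le_of_lt hηN)
    have hfactor : d N + ∑' k, ε (N + k) ≤ L + 2 * ρ := by
      have := abs_lt.mp hdN
      linarith [this.2]
    have hfactor0 : 0 ≤ d N + ∑' k, ε (N + k) := add_nonneg (hd0 N) (hεtail0 N)
    have h6 : (d N + ∑' k, ε (N + k)) * Real.exp (∑' k, η (N + k)) ≤
        (L + 2 * ρ) * Real.exp ρ := by
      apply mul_le_mul hfactor hexp_le (by positivity)
      linarith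
    have h7 : L - ρ < d n := by have := abs_lt.mp hdn; linarith [this.1]
    have h8 : α * ‖z n - z N‖ ^ 2 < α * δ ^ 2 := by
      have : α * ‖z n - z N‖ ^ 2 ≤ (L + 2 * ρ) * Real.exp ρ - d n := by linarith
      have hfρ : (L + 2 * ρ) * Real.exp ρ - (L - ρ) < α * δ ^ 2 := hρ
      linarith
    have h9 : ‖z n - z N‖ ^ 2 < δ ^ 2 := by
      have := (mul_lt_mul_iff_right₀ hα).mp h8
      exact this
    rw [dist_eq_norm]
    exact lt_of_pow_lt_pow_left₀ 2 (le_of_lt hδ) h9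
  obtain ⟨l, hl⟩ := cauchySeq_tendsto_of_complete hcauchy
  exact ⟨l, hl⟩
end

section
/- Let H be a real Hilbert space, α > 0, (νₙ) summable in [0,+∞[, and (Wₙ) self-adjoint operators with Wₙ ≽ α·Id, sup_n ‖Wₙ‖ < +∞, and (1+νₙ)Wₙ₊₁ ≽ Wₙ for all n. Let C ⊆ H have nonempty interior, with B(z;ρ) ⊆ C for some z and ρ > 0, and let (xₙ) satisfy: there exist summable (εₙ), (ηₙ) with ‖xₙ₊₁ − x‖²_{Wₙ₊₁} ≤ (1+ηₙ)‖xₙ − x‖²_{Wₙ} + εₙ for every x ∈ B(z;ρ) and every n. Then (xₙ) converges strongly. -/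
open Filter Topology Finset

lemma psd_norm_sq_le {H : Type*} [NormedAddCommGroup H] [InnerProductSpace ℝ H]
    (S : H →L[ℝ] H) (hsym : ∀ a b : H, (inner ℝ (S a) b : ℝ) = inner ℝ a (S b))
    (hpos : ∀ v : H, 0 ≤ (inner ℝ (S v) v : ℝ)) (v : H) :
    ‖S v‖ ^ 2 ≤ ‖S‖ * (inner ℝ (S v) v : ℝ) := by
  rcases eq_or_ne (S v) 0 with h | h
  · simp [h]
  have h1 : (inner ℝ (S (S v)) v : ℝ) = ‖S v‖ ^ 2 := by
    rw [hsym, real_inner_comm, ← real_inner_self_eq_norm_sq]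
  have h1' : (inner ℝ (S v) (S (S v)) : ℝ) = (inner ℝ (S (S v)) (S v) : ℝ) := real_inner_comm _ _
  have h1'' : (inner ℝ v (S (S v)) : ℝ) = ‖S v‖ ^ 2 := by rw [real_inner_comm]; exact h1
  have key : ∀ t : ℝ, 0 ≤ (inner ℝ (S (S v)) (S v) : ℝ) * (t * t) + (2 * ‖S v‖ ^ 2) * t
      + (inner ℝ (S v) v : ℝ) := by
    intro t
    have h0 := hpos (v + t • S v)
    have hexp : (inner ℝ (S (v + t • S v)) (v + t • S v) : ℝ)
        = (inner ℝ (S (S v)) (S v) : ℝ) * (t * t) + (2 * ‖S v‖ ^ 2) * t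
          + (inner ℝ (S v) v : ℝ) := by
      simp only [map_add, map_smul, inner_add_left, inner_add_right,
        real_inner_smul_left, real_inner_smul_right, h1, h1', h1'']
      rw [real_inner_self_eq_norm_sq (S v)]; ring
    rw [hexp] at h0; exact h0
  have hd := discrim_le_zero key
  rw [discrim] at hd
  have h2 : ‖S v‖ ^ 4 ≤ (inner ℝ (S (S v)) (S v) : ℝ) * (inner ℝ (S v) v : ℝ) := by nlinarith
  have h3 : (inner ℝ (S (S v)) (S v) : ℝ) ≤ ‖S‖ * ‖S v‖ ^ 2 := by
    calc (inner ℝ (S (S v)) (S v) : ℝ) ≤ ‖S (S v)‖ * ‖S v‖ := real_inner_le_norm _ _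
    _ ≤ (‖S‖ * ‖S v‖) * ‖S v‖ :=
        mul_le_mul_of_nonneg_right (S.le_opNorm (S v)) (norm_nonneg _)
    _ = ‖S‖ * ‖S v‖ ^ 2 := by ring
  have hv : 0 < ‖S v‖ ^ 2 := by have := norm_pos_iff.mpr h; positivity
  nlinarith [hpos v, norm_nonneg (S v)]

lemma bdd_rec (a θ e : ℕ → ℝ) (hθ0 : ∀ n, 0 ≤ θ n) (he0 : ∀ n, 0 ≤ e n)
    (hθ : Summable θ) (he : Summable e) (ha0 : 0 ≤ a 0)
    (hrec : ∀ n, a (n + 1) ≤ (1 + θ n) * a n + e n) (hge : ∀ n, 0 ≤ a n) :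
    ∀ n, a n ≤ Real.exp (∑' k, θ k) * (a 0 + ∑' k, e k) := by
  have hP1 : ∀ n, (1:ℝ) ≤ ∏ k ∈ range n, (1 + θ k) := by
    intro n
    calc (1:ℝ) = ∏ k ∈ range n, 1 := by simp
    _ ≤ ∏ k ∈ range n, (1 + θ k) := Finset.prod_le_prod (by intros; norm_num) (fun k _ => by linarith [hθ0 k])
  have step : ∀ n, a n ≤ (∏ k ∈ range n, (1 + θ k)) * (a 0 + ∑ k ∈ range n, e k) := by
    intro n
    induction n with
    | zero => simp
    | succ n ih =>
      have h1 : a (n+1) ≤ (1 + θ n) * a n + e n := hrec n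
      have h2 : (1 + θ n) * a n ≤ (1 + θ n) * ((∏ k ∈ range n, (1 + θ k)) * (a 0 + ∑ k ∈ range n, e k)) :=
        mul_le_mul_of_nonneg_left ih (by linarith [hθ0 n])
      rw [prod_range_succ, sum_range_succ]
      have hP1n := hP1 (n+1)
      rw [prod_range_succ] at hP1n
      calc a (n+1) ≤ (1 + θ n) * ((∏ k ∈ range n, (1 + θ k)) * (a 0 + ∑ k ∈ range n, e k)) + e n := by linarith
        _ = (∏ k ∈ range n, (1 + θ k)) * (1 + θ n) * (a 0 + ∑ k ∈ range n, e k) + 1 * e n := by ring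
        _ ≤ (∏ k ∈ range n, (1 + θ k)) * (1 + θ n) * (a 0 + ∑ k ∈ range n, e k)
            + ((∏ k ∈ range n, (1 + θ k)) * (1 + θ n)) * e n := by
              apply add_le_add (le_refl _)
              exact mul_le_mul_of_nonneg_right hP1n (he0 n)
        _ = (∏ k ∈ range n, (1 + θ k)) * (1 + θ n) * ((a 0 + ∑ k ∈ range n, e k) + e n) := by ring
        _ = (∏ k ∈ range n, (1 + θ k)) * (1 + θ n) * (a 0 + (∑ k ∈ range n, e k + e n)) := by ring
  intro n
  have hPexp : (∏ k ∈ range n, (1 + θ k)) ≤ Real.exp (∑' k, θ k) := by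
    calc (∏ k ∈ range n, (1 + θ k)) ≤ ∏ k ∈ range n, Real.exp (θ k) := by
          apply Finset.prod_le_prod
          · intro k _; linarith [hθ0 k]
          · intro k _; linarith [Real.add_one_le_exp (θ k)]
        _ = Real.exp (∑ k ∈ range n, θ k) := by rw [Real.exp_sum]
        _ ≤ Real.exp (∑' k, θ k) := Real.exp_le_exp.mpr (Summable.sum_le_tsum _ (fun k _ => hθ0 k) hθ)
  have hsum : a 0 + ∑ k ∈ range n, e k ≤ a 0 + ∑' k, e k := by
    have := Summable.sum_le_tsum (range n) (fun k _ => he0 k) he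
    linarith
  calc a n ≤ (∏ k ∈ range n, (1 + θ k)) * (a 0 + ∑ k ∈ range n, e k) := step n
    _ ≤ Real.exp (∑' k, θ k) * (a 0 + ∑' k, e k) := by
        apply mul_le_mul hPexp hsum
        · have h0 : 0 ≤ ∑ k ∈ range n, e k := Finset.sum_nonneg (fun k _ => he0 k)
          linarith
        · positivity

set_option maxHeartbeats 1000000 in
theorem stmt_11 {H : Type*} [NormedAddCommGroup H] [InnerProductSpace ℝ H] [CompleteSpace H]
    (α : ℝ) (hα : 0 < α)
    (ν : ℕ → ℝ) (hν0 : ∀ n, 0 ≤ ν n) (hν : Summable ν)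
    (W : ℕ → H →L[ℝ] H) (hsa : ∀ n, IsSelfAdjoint (W n))
    (hlb : ∀ n (x : H), α * ‖x‖ ^ 2 ≤ (inner ℝ (W n x) x : ℝ))
    (hbd : ∃ μ : ℝ, ∀ n, ‖W n‖ ≤ μ)
    (hmono : ∀ n (x : H), (inner ℝ (W n x) x : ℝ) ≤ (1 + ν n) * (inner ℝ (W (n + 1) x) x : ℝ))
    (C : Set H) (z : H) (ρ : ℝ) (hρ : 0 < ρ)
    (hball : Metric.closedBall z ρ ⊆ C)
    (x : ℕ → H)
    (hfejer : ∃ ε η : ℕ → ℝ, (∀ n, 0 ≤ ε n) ∧ (∀ n, 0 ≤ η n) ∧ Summable ε ∧ Summable η ∧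
      ∀ w ∈ Metric.closedBall z ρ, ∀ n,
        wnorm (W (n + 1)) (x (n + 1) - w) ^ 2 ≤
          (1 + η n) * wnorm (W n) (x n - w) ^ 2 + ε n) :
    ∃ l : H, Tendsto x atTop (𝓝 l) := by
  obtain ⟨μ, hμ⟩ := hbd
  obtain ⟨ε, η, hε0, hη0, hεs, hηs, hF⟩ := hfejer
  have hμ0 : 0 ≤ μ := le_trans (norm_nonneg _) (hμ 0)
  set Q : ℕ → H → ℝ := fun n v => (inner ℝ (W n v) v : ℝ) with hQdef
  have hQ0 : ∀ n v, 0 ≤ Q n v := fun n v => le_trans (by positivity) (hlb n v)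
  have hQub : ∀ n v, Q n v ≤ μ * ‖v‖ ^ 2 := by
    intro n v
    calc Q n v ≤ ‖W n v‖ * ‖v‖ := real_inner_le_norm _ _
      _ ≤ (μ * ‖v‖) * ‖v‖ := mul_le_mul_of_nonneg_right
            (((W n).le_opNorm v).trans (mul_le_mul_of_nonneg_right (hμ n) (norm_nonneg v)))
            (norm_nonneg v)
      _ = μ * ‖v‖ ^ 2 := by ring
  have hsym : ∀ n (a b : H), (inner ℝ (W n a) b : ℝ) = inner ℝ a (W n b) :=
    fun n => (ContinuousLinearMap.isSelfAdjoint_iff_isSymmetric.mp (hsa n))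
  have hF' : ∀ w ∈ Metric.closedBall z ρ, ∀ n,
      Q (n+1) (x (n+1) - w) ≤ (1 + η n) * Q n (x n - w) + ε n := by
    intro w hw n
    have h1 := hF w hw n
    rw [wnorm, wnorm, Real.sq_sqrt (hQ0 (n+1) _), Real.sq_sqrt (hQ0 n _)] at h1
    exact h1
  have hexp : ∀ n (b d : H), Q n (b + d) = Q n b + 2 * (inner ℝ (W n d) b : ℝ) + Q n d := by
    intro n b d
    have h1 : (inner ℝ (W n b) d : ℝ) = inner ℝ (W n d) b := by
      rw [hsym n b d, real_inner_comm]
    simp only [hQdef, map_add, inner_add_left, inner_add_right, h1]; ring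
  have hz : z ∈ Metric.closedBall z ρ := Metric.mem_closedBall_self hρ.le
  set t : ℕ → ℝ := fun n => Q n (x n - z) with htdef
  have htrec : ∀ n, t (n+1) ≤ (1 + η n) * t n + ε n := fun n => hF' z hz n
  set T : ℝ := Real.exp (∑' k, η k) * (t 0 + ∑' k, ε k) with hTdef
  have hT : ∀ n, t n ≤ T :=
    bdd_rec t η ε hη0 hε0 hηs hεs (hQ0 0 _) htrec (fun n => hQ0 n _)
  have hT0 : 0 ≤ T := le_trans (hQ0 0 _) (hT 0)
  set R : ℝ := Real.sqrt (T / α) with hRdef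
  have hxR : ∀ n, ‖x n - z‖ ≤ R := by
    intro n
    rw [hRdef]
    rw [Real.le_sqrt (norm_nonneg _) (div_nonneg hT0 hα.le), le_div_iff₀ hα]
    have h1 := hlb n (x n - z)
    have h2 := hT n
    nlinarith
  have hR0 : 0 ≤ R := Real.sqrt_nonneg _
  -- step C
  set y : ℕ → H := fun n => W n (x n - z) with hydef
  set c : ℕ → H := fun n => (1 + η n) • y n - y (n+1) with hcdef
  set g : ℕ → ℝ := fun n => (T + ρ^2*μ) * η n + ρ^2*μ * ν n + ε n with hgdef
  have key : ∀ n, 2*ρ*‖c n‖ ≤ t n - t (n+1) + g n := by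
    intro n
    have hg1 : (T + ρ^2*μ) * η n + ρ^2*μ * ν n ≥ 0 := by
      have := hη0 n; have := hν0 n; positivity
    rcases eq_or_ne (c n) 0 with hc | hc
    · rw [hc, norm_zero]
      have h1 := htrec n
      have h2 : (1 + η n) * t n ≤ t n + η n * T := by nlinarith [hη0 n, hT n, hQ0 n (x n - z)]
      have h3 : η n * T ≤ (T + ρ^2*μ) * η n := by nlinarith [hη0 n, mul_nonneg (mul_nonneg (sq_nonneg ρ) hμ0) (hη0 n)]
      simp only [hgdef]
      nlinarith [mul_nonneg (mul_nonneg (sq_nonneg ρ) hμ0) (hν0 n)]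
    · set u : H := (‖c n‖)⁻¹ • c n with hudef
      have hcn0 : 0 < ‖c n‖ := norm_pos_iff.mpr hc
      have hu1 : ‖u‖ = 1 := by
        rw [hudef, norm_smul]
        simp [abs_of_nonneg (inv_nonneg.mpr hcn0.le), inv_mul_cancel₀ hcn0.ne']
      have hcu : (inner ℝ (c n) u : ℝ) = ‖c n‖ := by
        rw [hudef, real_inner_smul_right, real_inner_self_eq_norm_sq]
        field_simp
      set w : H := z + ρ • u with hwdef
      have hw : w ∈ Metric.closedBall z ρ := by
        rw [Metric.mem_closedBall, dist_eq_norm, hwdef]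
        simp only [add_sub_cancel_left, norm_smul, Real.norm_eq_abs, abs_of_pos hρ, hu1, mul_one]
        exact le_refl ρ
      have hfj := hF' w hw n
      -- expansion of Q m (x k - w)
      have hQw : ∀ m k, Q m (x k - w) = Q m (x k - z) - 2*ρ*(inner ℝ (W m (x k - z)) u : ℝ)
          + ρ^2 * Q m u := by
        intro m k
        have h1 : x k - w = (x k - z) + (-(ρ • u)) := by rw [hwdef]; abel
        rw [h1, hexp m (x k - z) (-(ρ • u))]
        have h2 : (inner ℝ (W m (-(ρ • u))) (x k - z) : ℝ) = -ρ * (inner ℝ (W m u) (x k - z) : ℝ) := by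
          rw [map_neg, map_smul, inner_neg_left, real_inner_smul_left]; ring
        have h3 : Q m (-(ρ • u)) = ρ^2 * Q m u := by
          simp only [hQdef, map_neg, map_smul, inner_neg_left, inner_neg_right, inner_neg_neg,
            real_inner_smul_left, real_inner_smul_right]
          ring
        have h4 : (inner ℝ (W m u) (x k - z) : ℝ) = inner ℝ (W m (x k - z)) u := by
          rw [hsym m u (x k - z), real_inner_comm]
        rw [h2, h3, h4]; ring
      rw [hQw (n+1) (n+1), hQw n n] at hfj
      have hinner : (1 + η n) * (inner ℝ (W n (x n - z)) u : ℝ)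
          - (inner ℝ (W (n+1) (x (n+1) - z)) u : ℝ) = ‖c n‖ := by
        rw [← hcu, hcdef]
        simp only [inner_sub_left, real_inner_smul_left, hydef]
      -- bound the quadratic-in-u terms
      have hquad : (1 + η n) * Q n u - Q (n+1) u ≤ ρ⁻¹ * 0 + μ * η n + μ * ν n := by
        have h5 := hmono n u
        have h6 := hQub n u
        have h7 := hQub (n+1) u
        have h8 := hQ0 (n+1) u
        rw [hu1] at h6 h7
        simp only [one_pow, mul_one] at h6 h7
        nlinarith [hη0 n, hν0 n]
      have h9 : (1 + η n) * t n ≤ t n + η n * T := by nlinarith [hη0 n, hT n]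
      simp only [hgdef]
      nlinarith [hfj, hinner, hquad, h9, sq_nonneg ρ]
  have hcs : Summable (fun n => ‖c n‖) := by
    have hsum : ∀ N, ∑ n ∈ range N, (2*ρ*‖c n‖)
        ≤ t 0 + ((T + ρ^2*μ) * ∑' k, η k + ρ^2*μ * ∑' k, ν k + ∑' k, ε k) := by
      intro N
      have h1 : ∑ n ∈ range N, (2*ρ*‖c n‖) ≤ ∑ n ∈ range N, (t n - t (n+1) + g n) :=
        Finset.sum_le_sum (fun n _ => key n)
      have h2 : ∑ n ∈ range N, (t n - t (n+1) + g n)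
          = (t 0 - t N) + ∑ n ∈ range N, g n := by
        rw [Finset.sum_add_distrib, Finset.sum_range_sub' t]
      have h3 : ∑ n ∈ range N, g n = (T + ρ^2*μ) * ∑ n ∈ range N, η n
          + ρ^2*μ * ∑ n ∈ range N, ν n + ∑ n ∈ range N, ε n := by
        simp only [hgdef, Finset.sum_add_distrib, Finset.mul_sum]
      have hc1 : 0 ≤ T + ρ^2*μ := by positivity
      have hc2 : 0 ≤ ρ^2*μ := by positivity
      have h4 : ∑ n ∈ range N, η n ≤ ∑' k, η k := Summable.sum_le_tsum _ (fun k _ => hη0 k) hηs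
      have h5 : ∑ n ∈ range N, ν n ≤ ∑' k, ν k := Summable.sum_le_tsum _ (fun k _ => hν0 k) hν
      have h6 : ∑ n ∈ range N, ε n ≤ ∑' k, ε k := Summable.sum_le_tsum _ (fun k _ => hε0 k) hεs
      have h7 := hQ0 N (x N - z)
      nlinarith [mul_le_mul_of_nonneg_left h4 hc1, mul_le_mul_of_nonneg_left h5 hc2]
    have h3 : Summable (fun n => 2*ρ*‖c n‖) :=
      summable_of_sum_range_le (fun n => by positivity) hsum
    have h4 := h3.mul_left (2*ρ)⁻¹
    have h5 : (fun n => (2*ρ)⁻¹ * (2*ρ*‖c n‖)) = fun n => ‖c n‖ := by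
      funext n
      field_simp
    rwa [h5] at h4
  have hyconv : ∃ ylim, Tendsto y atTop (𝓝 ylim) := by
    apply cauchySeq_tendsto_of_complete
    apply cauchySeq_of_summable_dist
    have hyb : ∀ n, ‖y n‖ ≤ μ * R := by
      intro n
      calc ‖y n‖ ≤ ‖W n‖ * ‖x n - z‖ := (W n).le_opNorm _
        _ ≤ μ * R := mul_le_mul (hμ n) (hxR n) (norm_nonneg _) hμ0
    have hle : ∀ n, dist (y n) (y (n+1)) ≤ ‖c n‖ + η n * (μ * R) := by
      intro n
      rw [dist_eq_norm]
      have h1 : y n - y (n+1) = c n - η n • y n := by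
        simp only [hcdef]
        module
      calc ‖y n - y (n+1)‖ = ‖c n - η n • y n‖ := by rw [h1]
        _ ≤ ‖c n‖ + ‖η n • y n‖ := norm_sub_le _ _
        _ ≤ ‖c n‖ + η n * (μ * R) := by
            rw [norm_smul, Real.norm_eq_abs, abs_of_nonneg (hη0 n)]
            exact add_le_add (le_refl _) (mul_le_mul_of_nonneg_left (hyb n) (hη0 n))
    exact Summable.of_nonneg_of_le (fun n => dist_nonneg) hle (hcs.add (hηs.mul_right (μ*R)))
  obtain ⟨ylim, hy⟩ := hyconv
  -- step D : pointwise convergence of W n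
  have hWpt : ∀ v : H, ∃ L : H, Tendsto (fun n => W n v) atTop (𝓝 L) := by
    set S : ℝ := ∑' k, ν k with hSdef
    have hS0 : 0 ≤ S := tsum_nonneg hν0
    set s : ℕ → ℝ := fun n => S - ∑ k ∈ range n, ν k with hsdef
    have hs0 : ∀ n, 0 ≤ s n := fun n => sub_nonneg.mpr (Summable.sum_le_tsum _ (fun k _ => hν0 k) hν)
    have hsS : ∀ n, s n ≤ S := by
      intro n
      have h0 : 0 ≤ ∑ k ∈ range n, ν k := Finset.sum_nonneg fun k _ => hν0 k
      simp only [hsdef]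
      linarith
    have hssub : ∀ n, s n - s (n+1) = ν n := by
      intro n
      simp only [hsdef, Finset.sum_range_succ]
      ring
    have hsanti : Antitone s := antitone_nat_of_succ_le (fun n => by
      have h1 := hssub n; have h2 := hν0 n; linarith)
    have hstop : Tendsto s atTop (𝓝 0) := by
      have h1 := hν.hasSum.tendsto_sum_nat
      have h2 := (tendsto_const_nhds (x := S) (f := (atTop : Filter ℕ))).sub h1
      simpa [← hSdef, hsdef] using h2
    set r : ℕ → H → ℝ := fun n v => Q n v - μ * s n * ‖v‖^2 with hrdef
    have hrmono : ∀ v : H, Monotone fun n => r n v := by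
      intro v
      apply monotone_nat_of_le_succ
      intro n
      have h1 := hmono n v
      have h2 := hQub (n+1) v
      have h3 := hssub n
      simp only [hrdef]
      nlinarith [hν0 n, mul_le_mul_of_nonneg_left h2 (hν0 n), hQ0 (n+1) v]
    have hrbdd : ∀ v : H, BddAbove (Set.range fun n => r n v) := by
      intro v
      refine ⟨μ * ‖v‖^2, ?_⟩
      rintro w ⟨n, rfl⟩
      simp only [hrdef]
      nlinarith [hQub n v, mul_nonneg (mul_nonneg hμ0 (hs0 n)) (sq_nonneg ‖v‖)]
    have hip : ∀ (m N : ℕ), N ≤ m → ∀ w₀ : H,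
        (inner ℝ ((W m - W N + (μ * (s N - s m)) • (ContinuousLinearMap.id ℝ H)) w₀) w₀ : ℝ)
          = r m w₀ - r N w₀ := by
      intro m N _ w₀
      simp only [hrdef, ContinuousLinearMap.add_apply, ContinuousLinearMap.sub_apply,
        ContinuousLinearMap.coe_smul', Pi.smul_apply, ContinuousLinearMap.coe_id', id_eq,
        inner_add_left, inner_sub_left, real_inner_smul_left, hQdef]
      rw [real_inner_self_eq_norm_sq]
      ring
    set K : ℝ := 2*μ + μ * S with hKdef
    have hK0 : 0 ≤ K := by positivity
    intro v
    apply cauchySeq_tendsto_of_complete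
    rw [Metric.cauchySeq_iff']
    intro δ hδ
    set L : ℝ := ⨆ n, r n v with hLdef
    have hrL : Tendsto (fun n => r n v) atTop (𝓝 L) := tendsto_atTop_ciSup (hrmono v) (hrbdd v)
    have hrle : ∀ n, r n v ≤ L := fun n => le_ciSup (hrbdd v) n
    have hδ1 : 0 < (δ/2)^2 / (K+1) := by positivity
    obtain ⟨N₁, hN₁⟩ := (Metric.tendsto_atTop.mp hrL) ((δ/2)^2/(K+1)) hδ1
    have hδ2 : 0 < (δ/2) / (μ * ‖v‖ + 1) := by positivity
    obtain ⟨N₂, hN₂⟩ := (Metric.tendsto_atTop.mp hstop) ((δ/2)/(μ*‖v‖+1)) hδ2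
    refine ⟨max N₁ N₂, ?_⟩
    intro m hm
    set N := max N₁ N₂ with hNdef
    set σ : ℝ := μ * (s N - s m) with hσdef
    have hσ0 : 0 ≤ σ := mul_nonneg hμ0 (sub_nonneg.mpr (hsanti hm))
    set Sop : H →L[ℝ] H := W m - W N + σ • (ContinuousLinearMap.id ℝ H) with hSopdef
    have hSsym : ∀ a b : H, (inner ℝ (Sop a) b : ℝ) = inner ℝ a (Sop b) := by
      intro a b
      simp only [hSopdef, ContinuousLinearMap.add_apply, ContinuousLinearMap.sub_apply,
        ContinuousLinearMap.coe_smul', Pi.smul_apply, ContinuousLinearMap.coe_id', id_eq,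
        inner_add_left, inner_add_right, inner_sub_left, inner_sub_right,
        real_inner_smul_left, real_inner_smul_right, hsym]
    have hSpos : ∀ w₀ : H, 0 ≤ (inner ℝ (Sop w₀) w₀ : ℝ) := by
      intro w₀
      rw [hSopdef, hσdef, hip m N hm w₀]
      exact sub_nonneg.mpr (hrmono w₀ hm)
    have hSnorm : ‖Sop‖ ≤ K := by
      have hσS : σ ≤ μ * S :=
        mul_le_mul_of_nonneg_left (by linarith [hs0 m, hsS N]) hμ0
      have hsm : ‖σ • (ContinuousLinearMap.id ℝ H)‖ ≤ σ := by
        have h1 := norm_smul_le σ (ContinuousLinearMap.id ℝ H)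
        have h2 := ContinuousLinearMap.norm_id_le (E := H) (𝕜 := ℝ)
        rw [Real.norm_eq_abs, abs_of_nonneg hσ0] at h1
        nlinarith [norm_nonneg (ContinuousLinearMap.id ℝ H)]
      calc ‖Sop‖ ≤ ‖W m - W N‖ + ‖σ • (ContinuousLinearMap.id ℝ H)‖ := norm_add_le _ _
        _ ≤ (‖W m‖ + ‖W N‖) + σ := add_le_add (norm_sub_le _ _) hsm
        _ ≤ K := by rw [hKdef]; linarith [hμ m, hμ N]
    have hSv := psd_norm_sq_le Sop hSsym hSpos v
    have h5 : (inner ℝ (Sop v) v : ℝ) ≤ (δ/2)^2/(K+1) := by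
      rw [hSopdef, hσdef, hip m N hm v]
      have h2 := hN₁ N (le_max_left _ _)
      rw [Real.dist_eq, abs_sub_lt_iff] at h2
      have h3 := hrle m
      clear_value K L S s r N σ Sop
      linarith [h2.2, h3]
    have h6 : ‖Sop v‖^2 ≤ K * ((δ/2)^2/(K+1)) :=
      hSv.trans (mul_le_mul hSnorm h5 (hSpos v) hK0)
    have h7 : ‖Sop v‖ < δ/2 := by
      have hKK : K * ((δ/2)^2/(K+1)) < (δ/2)^2 := by
        have e1 : K * ((δ/2)^2/(K+1)) = (δ/2)^2 * (K/(K+1)) := by ring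
        have e2 : K / (K+1) < 1 := by
          rw [div_lt_one (by linarith)]
          linarith
        have e3 : 0 < (δ/2)^2 := by positivity
        nlinarith
      nlinarith [norm_nonneg (Sop v), hδ]
    have h8 : W m v - W N v = Sop v - σ • v := by
      simp only [hSopdef, ContinuousLinearMap.add_apply, ContinuousLinearMap.sub_apply,
        ContinuousLinearMap.coe_smul', Pi.smul_apply, ContinuousLinearMap.coe_id', id_eq]
      abel
    have h9 : σ * ‖v‖ < δ/2 := by
      have hsN : s N < (δ/2)/(μ*‖v‖+1) := by
        have := hN₂ N (le_max_right _ _)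
        rw [Real.dist_eq, sub_zero, abs_of_nonneg (hs0 N)] at this
        exact this
      have hσle : σ ≤ μ * s N := mul_le_mul_of_nonneg_left (by linarith [hs0 m]) hμ0
      have h10 : μ * s N * ‖v‖ < δ/2 := by
        have h11 : 0 ≤ μ * ‖v‖ := mul_nonneg hμ0 (norm_nonneg v)
        have h12 : μ * ‖v‖ * s N ≤ μ * ‖v‖ * ((δ/2)/(μ*‖v‖+1)) :=
          mul_le_mul_of_nonneg_left hsN.le h11
        have h13 : μ * ‖v‖ * ((δ/2)/(μ*‖v‖+1)) < δ/2 := by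
          rw [mul_div_assoc']
          rw [div_lt_iff₀ (by linarith : (0:ℝ) < μ*‖v‖+1)]
          nlinarith
        nlinarith
      calc σ * ‖v‖ ≤ μ * s N * ‖v‖ := mul_le_mul_of_nonneg_right hσle (norm_nonneg v)
        _ < δ/2 := h10
    rw [dist_eq_norm, h8]
    calc ‖Sop v - σ • v‖ ≤ ‖Sop v‖ + ‖σ • v‖ := norm_sub_le _ _
      _ = ‖Sop v‖ + σ * ‖v‖ := by rw [norm_smul, Real.norm_eq_abs, abs_of_nonneg hσ0]
      _ < δ/2 + δ/2 := add_lt_add h7 h9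
      _ = δ := by ring
  choose Wl hWl using hWpt
  have hWlb : ∀ v, ‖Wl v‖ ≤ μ * ‖v‖ := by
    intro v
    refine le_of_tendsto (hWl v).norm (Eventually.of_forall fun n => ?_)
    exact ((W n).le_opNorm v).trans (mul_le_mul_of_nonneg_right (hμ n) (norm_nonneg v))
  obtain ⟨Wclm, hWclm_apply⟩ : ∃ G : H →L[ℝ] H, ∀ v, G v = Wl v :=
    ⟨LinearMap.mkContinuous
    { toFun := Wl
      map_add' := fun a b => by
        have h := hWl (a + b)
        have e : (fun n => W n (a + b)) = fun n => W n a + W n b :=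
          funext fun n => map_add (W n) a b
        rw [e] at h
        exact tendsto_nhds_unique h ((hWl a).add (hWl b))
      map_smul' := fun m a => by
        have h := hWl (m • a)
        have e : (fun n => W n (m • a)) = fun n => m • W n a :=
          funext fun n => map_smul (W n) m a
        rw [e] at h
        exact tendsto_nhds_unique h ((hWl a).const_smul m) } μ hWlb, fun v => rfl⟩
  have hcoer : ∀ v, α * ‖v‖^2 ≤ (inner ℝ (Wclm v) v : ℝ) := by
    intro v
    rw [hWclm_apply v]
    refine ge_of_tendsto ((hWl v).inner tendsto_const_nhds) (Eventually.of_forall fun n => hlb n v)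
  -- Lax-Milgram
  have hWbij : ∃ p : H, Wclm p = ylim := by
    have hWclmb : ∀ v, ‖Wclm v‖ ≤ μ * ‖v‖ := by
      intro v; rw [hWclm_apply]; exact hWlb v
    obtain ⟨B, hB⟩ : ∃ B : H →L[ℝ] H →L[ℝ] ℝ, ∀ u w, B u w = (inner ℝ (Wclm u) w : ℝ) :=
      ⟨LinearMap.mkContinuous₂ (LinearMap.mk₂ ℝ (fun u w => (inner ℝ (Wclm u) w : ℝ))
        (fun a b w => by simp only [map_add, inner_add_left])
        (fun cc a w => by simp only [map_smul, real_inner_smul_left]; rfl)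
        (fun u a b => by simp only [inner_add_right])
        (fun cc u w => by simp only [real_inner_smul_right]; rfl)) μ (fun u w => by
          have h1 : ‖(inner ℝ (Wclm u) w : ℝ)‖ = |(inner ℝ (Wclm u) w : ℝ)| := rfl
          calc ‖(inner ℝ (Wclm u) w : ℝ)‖ = |(inner ℝ (Wclm u) w : ℝ)| := rfl
            _ ≤ ‖Wclm u‖ * ‖w‖ := abs_real_inner_le_norm _ _
            _ ≤ (μ * ‖u‖) * ‖w‖ := mul_le_mul_of_nonneg_right (hWclmb u) (norm_nonneg _)
            _ = μ * ‖u‖ * ‖w‖ := rfl), fun u w => rfl⟩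
    have coercive : IsCoercive B := by
      refine ⟨α, hα, fun u => ?_⟩
      rw [hB]
      have h1 := hcoer u
      have h2 : α * ‖u‖ * ‖u‖ = α * ‖u‖^2 := by ring
      rw [h2]
      exact h1
    refine ⟨coercive.continuousLinearEquivOfBilin.symm ylim, ?_⟩
    have h2 : coercive.continuousLinearEquivOfBilin (coercive.continuousLinearEquivOfBilin.symm ylim)
        = Wclm (coercive.continuousLinearEquivOfBilin.symm ylim) := by
      apply ext_inner_right ℝ
      intro w
      rw [coercive.continuousLinearEquivOfBilin_apply]
      exact hB _ w
    rw [← h2, ContinuousLinearEquiv.apply_symm_apply]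
  obtain ⟨p, hp⟩ := hWbij
  refine ⟨z + p, ?_⟩
  have hyp0 : Tendsto (fun n => ‖y n - W n p‖) atTop (𝓝 0) := by
    have hlp : Wl p = ylim := (hWclm_apply p).symm.trans hp
    have h1 : Tendsto (fun n => y n - W n p) atTop (𝓝 (ylim - Wl p)) := hy.sub (hWl p)
    rw [hlp, sub_self] at h1
    simpa using h1.norm
  have hbnd : ∀ n, ‖x n - (z + p)‖ ≤ Real.sqrt ((‖y n - W n p‖ * (R + ‖p‖)) / α) := by
    intro n
    have hxp : x n - (z + p) = (x n - z) - p := by abel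
    rw [hxp, Real.le_sqrt (norm_nonneg _)
      (div_nonneg (mul_nonneg (norm_nonneg _) (by linarith [norm_nonneg p])) hα.le),
      le_div_iff₀ hα]
    have h2 := hlb n ((x n - z) - p)
    have h3 : W n ((x n - z) - p) = y n - W n p := by rw [map_sub]
    have h4 : (inner ℝ (W n ((x n - z) - p)) ((x n - z) - p) : ℝ)
        ≤ ‖y n - W n p‖ * (R + ‖p‖) := by
      rw [h3]
      calc (inner ℝ (y n - W n p) ((x n - z) - p) : ℝ)
          ≤ ‖y n - W n p‖ * ‖(x n - z) - p‖ := real_inner_le_norm _ _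
        _ ≤ ‖y n - W n p‖ * (R + ‖p‖) := by
            apply mul_le_mul_of_nonneg_left _ (norm_nonneg _)
            exact (norm_sub_le _ _).trans (add_le_add (hxR n) (le_refl _))
    nlinarith
  have hlim : Tendsto (fun n => Real.sqrt ((‖y n - W n p‖ * (R + ‖p‖)) / α)) atTop (𝓝 0) := by
    have h1 : Tendsto (fun n => (‖y n - W n p‖ * (R + ‖p‖)) / α) atTop (𝓝 0) := by
      have := (hyp0.mul_const (R + ‖p‖)).div_const α
      simpa using this
    simpa using h1.sqrt
  have := squeeze_zero (fun n => norm_nonneg _) hbnd hlim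
  exact tendsto_iff_norm_sub_tendsto_zero.mpr this
end

section
/- Let H be a real Hilbert space, α > 0, W a self-adjoint operator with W ≽ α·Id, and T : H → H an operator with nonempty fixed point set Fix T satisfying ⟨y − Tx, x − Tx⟩_W ≤ 0 for all x ∈ H and y ∈ Fix T. Then for every x ∈ H, y ∈ Fix T, and λ ∈ [0,2], ‖x + λ(Tx − x) − y‖²_W ≤ ‖x − y‖²_W − λ(2−λ)‖Tx − x‖²_W. -/
theorem stmt_12 {H : Type*} [NormedAddCommGroup H] [InnerProductSpace ℝ H] [CompleteSpace H]
    (α : ℝ) (hα : 0 < α)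
    (W : H →L[ℝ] H) (hsa : IsSelfAdjoint W)
    (hlb : ∀ x : H, α * ‖x‖ ^ 2 ≤ (inner ℝ (W x) x : ℝ))
    (T : H → H) (hfix : ∃ y : H, T y = y)
    (hT : ∀ x y : H, T y = y → (inner ℝ (W (y - T x)) (x - T x) : ℝ) ≤ 0) :
    ∀ (x y : H) (lam : ℝ), T y = y → lam ∈ Set.Icc (0 : ℝ) 2 →
      wnorm W (x + lam • (T x - x) - y) ^ 2 ≤
        wnorm W (x - y) ^ 2 - lam * (2 - lam) * wnorm W (T x - x) ^ 2 := by
  intro x y lam hy hlam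
  obtain ⟨hl0, hl2⟩ := hlam
  have hnn : ∀ z : H, 0 ≤ (inner ℝ (W z) z : ℝ) := fun z =>
    le_trans (by positivity) (hlb z)
  have hw : ∀ z : H, wnorm W z ^ 2 = (inner ℝ (W z) z : ℝ) := fun z =>
    Real.sq_sqrt (hnn z)
  rw [hw, hw, hw]
  set a := x - y with ha
  set b := T x - x with hb
  have hsym : ∀ u v : H, (inner ℝ (W u) v : ℝ) = (inner ℝ (W v) u : ℝ) := by
    intro u v
    exact (hsa.isSymmetric u v).trans (real_inner_comm _ _)
  have key : (inner ℝ (W a) b : ℝ) + (inner ℝ (W b) b : ℝ) ≤ 0 := by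
    have h := hT x y hy
    have h1 : y - T x = -(a + b) := by rw [ha, hb]; abel
    have h2 : x - T x = -b := by rw [hb]; abel
    rw [h1, h2, map_neg, inner_neg_neg, map_add, inner_add_left] at h
    linarith [hsym a b, h]
  have hexp : x + lam • (T x - x) - y = a + lam • b := by
    rw [ha, hb]; abel
  rw [hexp]
  have e : (inner ℝ (W (a + lam • b)) (a + lam • b) : ℝ) =
      (inner ℝ (W a) a : ℝ) + 2 * lam * (inner ℝ (W a) b : ℝ)
        + lam ^ 2 * (inner ℝ (W b) b : ℝ) := by
    rw [map_add, map_smul, inner_add_left, inner_add_right, inner_add_right,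
      real_inner_smul_left, real_inner_smul_right, real_inner_smul_left,
      real_inner_smul_right, hsym b a]
    ring
  rw [e]
  nlinarith [mul_le_mul_of_nonneg_left key hl0, sq_nonneg lam, hnn b]
end

section
/- Let H be a real Hilbert space, α > 0, γ > 0, W a self-adjoint operator with W ≽ α·Id, and A : H → 2^H a maximally monotone operator. Then the W-resolvent J^W_{γA} = (W + γA)⁻¹ ∘ W is a well-defined single-valued operator on H, its fixed point set equals the zero set {z ∈ H : 0 ∈ Az}, and it satisfies ⟨y − J^W_{γA}x, x − J^W_{γA}x⟩_W ≤ 0 for all x ∈ H and all y with 0 ∈ Ay. -/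
open Pointwise

open scoped RealInnerProductSpace

def MaxMonotone {H : Type*} [NormedAddCommGroup H] [InnerProductSpace ℝ H]
    (A : H → Set H) : Prop :=
  (∀ x y u v, u ∈ A x → v ∈ A y → 0 ≤ (inner ℝ (x - y) (u - v) : ℝ)) ∧
  (∀ x u, (∀ y v, v ∈ A y → 0 ≤ (inner ℝ (x - y) (u - v) : ℝ)) → u ∈ A x)

private lemma eq_zero_of_normsq {H : Type*} [NormedAddCommGroup H]
    {β : ℝ} (hβ : 0 < β) {x : H} {c : ℝ} (h1 : β * ‖x‖ ^ 2 ≤ c) (h2 : c ≤ 0) : x = 0 := by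
  have h3 : ‖x‖ ^ 2 ≤ 0 := by nlinarith [sq_nonneg ‖x‖]
  have h4 : ‖x‖ ^ 2 = 0 := le_antisymm h3 (sq_nonneg _)
  have h5 : ‖x‖ = 0 := by
    have := sq_eq_zero_iff.mp h4
    exact this
  exact norm_eq_zero.mp h5

set_option maxHeartbeats 1600000 in
private lemma minty_core {H : Type*} [NormedAddCommGroup H] [InnerProductSpace ℝ H]
    [CompleteSpace H]
    (T : H →L[ℝ] H) (β : ℝ) (hβ : 0 < β)
    (hsym : ∀ x y : H, ⟪T x, y⟫ = ⟪x, T y⟫)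
    (hco : ∀ x : H, β * ‖x‖ ^ 2 ≤ ⟪T x, x⟫)
    (B : H → Set H)
    (hmono : ∀ x y u v, u ∈ B x → v ∈ B y → 0 ≤ ⟪T (x - y), u - v⟫)
    (hmax : ∀ x u, (∀ y v, v ∈ B y → 0 ≤ ⟪T (x - y), u - v⟫) → u ∈ B x) :
    ∃ p : H, -p ∈ B p := by
  have hsymm' : ∀ x y : H, ⟪T x, y⟫ = ⟪T y, x⟫ := fun x y => by
    rw [hsym, real_inner_comm]
  have hnn : ∀ x : H, 0 ≤ ⟪T x, x⟫ := fun x => le_trans (by positivity) (hco x)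
  have hzero : ∀ x : H, ⟪T x, x⟫ ≤ 0 → x = 0 := fun x hx =>
    eq_zero_of_normsq hβ (hco x) hx
  have hsub : ∀ x y u v : H, ⟪T (x - y), u - v⟫
      = ⟪T x, u⟫ - ⟪T x, v⟫ - ⟪T y, u⟫ + ⟪T y, v⟫ := by
    intro x y u v
    simp [map_sub, inner_sub_left, inner_sub_right]
    ring
  have hexp : ∀ (t : ℝ) (x d : H), ⟪T (x + t • d), x + t • d⟫
      = ⟪T x, x⟫ + 2 * t * ⟪T x, d⟫ + t ^ 2 * ⟪T d, d⟫ := by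
    intro t x d
    simp only [map_add, map_smul, inner_add_left, inner_add_right,
      real_inner_smul_left, real_inner_smul_right, ContinuousLinearMap.map_smul]
    linear_combination t * hsymm' d x
  -- graph nonempty
  obtain ⟨y₀, v₀, hy₀⟩ : ∃ y v, v ∈ B y := by
    by_contra hc
    push_neg at hc
    exact hc 0 0 (hmax 0 0 fun y v hv => absurd hv (hc y v))
  -- the epigraph predicate
  set P : H → H → ℝ → Prop := fun x u r =>
    ∀ y v, v ∈ B y → ⟪T x, v⟫ + ⟪T y, u⟫ - ⟪T y, v⟫ ≤ r with hPdef
  set Φ : H → H → ℝ → ℝ := fun x u r => r + ⟪T x, x⟫ / 2 + ⟪T u, u⟫ / 2 with hΦdef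
  have hPmem : ∀ x u r, P x u r → ⟪T x, u⟫ ≤ r := by
    intro x u r hp
    by_contra hlt
    push_neg at hlt
    have hu : u ∈ B x := by
      apply hmax
      intro y v hv
      have h1 := hp y v hv
      rw [hsub]
      linarith
    have := hp x u hu
    linarith
  have hΦ0 : ∀ x u r, P x u r → 0 ≤ Φ x u r := by
    intro x u r hp
    have h1 := hPmem x u r hp
    have h2 := hnn (x + u)
    have h3 : ⟪T (x + u), x + u⟫
        = ⟪T x, x⟫ + 2 * ⟪T x, u⟫ + ⟪T u, u⟫ := by
      have := hexp 1 x u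
      simpa using this
    simp only [hΦdef]
    linarith
  set S : Set ℝ := {t | ∃ x u r, P x u r ∧ Φ x u r = t} with hSdef
  have hP₀ : P y₀ v₀ ⟪T y₀, v₀⟫ := by
    intro y v hv
    have := hmono y₀ y v₀ v hy₀ hv
    rw [hsub] at this
    linarith
  have hSne : S.Nonempty := ⟨Φ y₀ v₀ ⟪T y₀, v₀⟫, y₀, v₀, _, hP₀, rfl⟩
  have hSbdd : BddBelow S := by
    refine ⟨0, ?_⟩
    rintro t ⟨x, u, r, hp, rfl⟩
    exact hΦ0 x u r hp
  set μ : ℝ := sInf S with hμdef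
  have hμle : ∀ x u r, P x u r → μ ≤ Φ x u r := fun x u r hp =>
    csInf_le hSbdd ⟨x, u, r, hp, rfl⟩
  -- minimizing sequence
  have hseq : ∀ n : ℕ, ∃ x u r, P x u r ∧ Φ x u r < μ + 1 / (n + 1) := by
    intro n
    have hpos : (0 : ℝ) < 1 / (n + 1) := by positivity
    obtain ⟨t, ⟨x, u, r, hp, ht⟩, hlt⟩ := Real.lt_sInf_add_pos hSne hpos
    exact ⟨x, u, r, hp, ht ▸ hlt⟩
  choose xs us rs hps hlts using hseq
  -- key quadratic estimate
  have hkey : ∀ n m : ℕ, β * ‖xs n - xs m‖ ^ 2 + β * ‖us n - us m‖ ^ 2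
      ≤ 4 * (1 / (n + 1) + 1 / (m + 1)) := by
    intro n m
    have hpm : P ((1 / 2 : ℝ) • (xs n + xs m)) ((1 / 2 : ℝ) • (us n + us m))
        ((rs n + rs m) / 2) := by
      intro y v hv
      have h1 := hps n y v hv
      have h2 := hps m y v hv
      simp only [map_smul, map_add, real_inner_smul_left, real_inner_smul_right,
        inner_add_left, inner_add_right, ContinuousLinearMap.map_smul]
      linarith
    have hmu := hμle _ _ _ hpm
    have hxx := hco (xs n - xs m)
    have huu := hco (us n - us m)
    have hsubx := hsub (xs n) (xs m) (xs n) (xs m)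
    have hsubu := hsub (us n) (us m) (us n) (us m)
    have hsx := hsymm' (xs n) (xs m)
    have hsu := hsymm' (us n) (us m)
    have hΦn := le_of_lt (hlts n)
    have hΦm := le_of_lt (hlts m)
    simp only [hΦdef] at hmu hΦn hΦm
    simp only [map_smul, map_add, real_inner_smul_left, real_inner_smul_right,
      inner_add_left, inner_add_right, ContinuousLinearMap.map_smul] at hmu
    linarith
  -- Cauchy sequences
  have hdistbound : ∀ (zs : ℕ → H),
      (∀ n m : ℕ, β * ‖zs n - zs m‖ ^ 2 ≤ 4 * (1 / (n + 1) + 1 / (m + 1))) →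
      CauchySeq zs := by
    intro zs hzs
    apply cauchySeq_of_le_tendsto_0 (fun N : ℕ => Real.sqrt (8 / (β * (N + 1))))
    · intro n m N hn hm
      rw [dist_eq_norm]
      have h1 := hzs n m
      have hn' : (1 : ℝ) / (n + 1) ≤ 1 / (N + 1) := by
        apply one_div_le_one_div_of_le
        · positivity
        · exact_mod_cast by exact_mod_cast add_le_add_left (Nat.cast_le.mpr hn) 1
      have hm' : (1 : ℝ) / (m + 1) ≤ 1 / (N + 1) := by
        apply one_div_le_one_div_of_le
        · positivity
        · exact_mod_cast by exact_mod_cast add_le_add_left (Nat.cast_le.mpr hm) 1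
      have h2 : β * ‖zs n - zs m‖ ^ 2 ≤ 8 / (N + 1) := by
        have : (4 : ℝ) * (1 / (n + 1) + 1 / (m + 1)) ≤ 8 / (N + 1) := by
          rw [div_eq_mul_one_div (8:ℝ)]
          linarith
        linarith
      have h3 : ‖zs n - zs m‖ ^ 2 ≤ 8 / (β * (N + 1)) := by
        rw [le_div_iff₀ (by positivity)]
        calc ‖zs n - zs m‖ ^ 2 * (β * (N + 1))
            = (β * ‖zs n - zs m‖ ^ 2) * ((N : ℝ) + 1) := by ring
          _ ≤ (8 / (N + 1)) * ((N : ℝ) + 1) := by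
              apply mul_le_mul_of_nonneg_right h2 (by positivity)
          _ = 8 := by field_simp
      have h4 : (0:ℝ) ≤ ‖zs n - zs m‖ := norm_nonneg _
      rw [show (8 : ℝ) / (β * (N + 1)) = (8 / (β * (N+1))) from rfl] at h3
      have := Real.sqrt_le_sqrt h3
      rwa [Real.sqrt_sq h4] at this
    · have h0 : Filter.Tendsto (fun N : ℕ => 8 / (β * (N + 1))) Filter.atTop (nhds 0) := by
        have h1 : (fun N : ℕ => 8 / (β * (N + 1)))
            = fun N : ℕ => (8 / β) * (1 / (N + 1)) := by
          funext N
          field_simp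
        rw [h1]
        have := tendsto_one_div_add_atTop_nhds_zero_nat (𝕜 := ℝ)
        simpa using this.const_mul (8 / β)
      have h2 := (Real.continuous_sqrt.tendsto 0).comp h0
      rw [Real.sqrt_zero] at h2
      exact h2
  have hxs : CauchySeq xs := by
    apply hdistbound
    intro n m
    have := hkey n m
    nlinarith [mul_nonneg hβ.le (sq_nonneg ‖us n - us m‖)]
  have hus : CauchySeq us := by
    apply hdistbound
    intro n m
    have := hkey n m
    nlinarith [mul_nonneg hβ.le (sq_nonneg ‖xs n - xs m‖)]
  obtain ⟨xb, hxb⟩ := cauchySeq_tendsto_of_complete hxs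
  obtain ⟨ub, hub⟩ := cauchySeq_tendsto_of_complete hus
  have hTx : Filter.Tendsto (fun n => T (xs n)) Filter.atTop (nhds (T xb)) :=
    (T.continuous.tendsto xb).comp hxb
  have hTu : Filter.Tendsto (fun n => T (us n)) Filter.atTop (nhds (T ub)) :=
    (T.continuous.tendsto ub).comp hub
  have hxxconv : Filter.Tendsto (fun n => ⟪T (xs n), xs n⟫) Filter.atTop
      (nhds ⟪T xb, xb⟫) := hTx.inner hxb
  have huuconv : Filter.Tendsto (fun n => ⟪T (us n), us n⟫) Filter.atTop
      (nhds ⟪T ub, ub⟫) := hTu.inner hub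
  have hΦconv : Filter.Tendsto (fun n => Φ (xs n) (us n) (rs n)) Filter.atTop (nhds μ) := by
    apply tendsto_of_tendsto_of_tendsto_of_le_of_le (g := fun _ : ℕ => μ)
      (h := fun n : ℕ => μ + 1 / (n + 1)) tendsto_const_nhds
    · have := tendsto_one_div_add_atTop_nhds_zero_nat (𝕜 := ℝ)
      have h2 := this.const_add μ
      simpa using h2
    · intro n
      exact hμle _ _ _ (hps n)
    · intro n
      exact (hlts n).le
  set rb : ℝ := μ - ⟪T xb, xb⟫ / 2 - ⟪T ub, ub⟫ / 2 with hrbdef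
  have hrconv : Filter.Tendsto rs Filter.atTop (nhds rb) := by
    have heq : rs = fun n => Φ (xs n) (us n) (rs n)
        - ⟪T (xs n), xs n⟫ / 2 - ⟪T (us n), us n⟫ / 2 := by
      funext n
      simp only [hΦdef]
      ring
    rw [heq, hrbdef]
    exact (hΦconv.sub (hxxconv.div_const 2)).sub (huuconv.div_const 2)
  have hPb : P xb ub rb := by
    intro y v hv
    refine le_of_tendsto_of_tendsto' ?_ hrconv fun n => hps n y v hv
    have h1 : Filter.Tendsto (fun n => ⟪T (xs n), v⟫) Filter.atTop
        (nhds ⟪T xb, v⟫) := hTx.inner tendsto_const_nhds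
    have h2 : Filter.Tendsto (fun n => ⟪T y, us n⟫) Filter.atTop
        (nhds ⟪T y, ub⟫) := Filter.Tendsto.inner tendsto_const_nhds hub
    exact (h1.add h2).sub tendsto_const_nhds
  have hΦb : Φ xb ub rb = μ := by
    simp only [hΦdef, hrbdef]
    ring
  -- variational inequality
  have hVI : ∀ y v, v ∈ B y → 0 ≤ (⟪T y, v⟫ - rb) + ⟪T xb, y - xb⟫
      + ⟪T ub, v - ub⟫ := by
    intro y v hv
    set L : ℝ := (⟪T y, v⟫ - rb) + ⟪T xb, y - xb⟫ + ⟪T ub, v - ub⟫ with hLdef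
    set q : ℝ := ⟪T (y - xb), y - xb⟫ / 2 + ⟪T (v - ub), v - ub⟫ / 2 with hqdef
    have hq : 0 ≤ q := by
      have := hnn (y - xb)
      have := hnn (v - ub)
      simp only [hqdef]
      linarith
    have ht : ∀ t : ℝ, 0 < t → t ≤ 1 → 0 ≤ t * L + t ^ 2 * q := by
      intro t ht0 ht1
      have hpt : P (xb + t • (y - xb)) (ub + t • (v - ub))
          (rb + t * (⟪T y, v⟫ - rb)) := by
        intro y' v' hv'
        have h1 := hPb y' v' hv'
        have h2 : ⟪T y, v'⟫ + ⟪T y', v⟫ - ⟪T y', v'⟫ ≤ ⟪T y, v⟫ := by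
          have := hmono y y' v v' hv hv'
          rw [hsub] at this
          linarith
        have g1 : ⟪T (xb + t • (y - xb)), v'⟫
            = ⟪T xb, v'⟫ + t * (⟪T y, v'⟫ - ⟪T xb, v'⟫) := by
          simp only [map_add, map_smul, map_sub, inner_add_left, inner_sub_left,
            real_inner_smul_left, ContinuousLinearMap.map_smul]
        have g2 : ⟪T y', ub + t • (v - ub)⟫
            = ⟪T y', ub⟫ + t * (⟪T y', v⟫ - ⟪T y', ub⟫) := by
          simp only [inner_add_right, inner_sub_right, real_inner_smul_right]
        rw [g1, g2]
        have e1 : (1 - t) * (⟪T xb, v'⟫ + ⟪T y', ub⟫ - ⟪T y', v'⟫)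
            ≤ (1 - t) * rb := mul_le_mul_of_nonneg_left h1 (by linarith)
        have e2 : t * (⟪T y, v'⟫ + ⟪T y', v⟫ - ⟪T y', v'⟫)
            ≤ t * ⟪T y, v⟫ := mul_le_mul_of_nonneg_left h2 ht0.le
        nlinarith [e1, e2]
      have hge := hμle _ _ _ hpt
      have hexp1 := hexp t xb (y - xb)
      have hexp2 := hexp t ub (v - ub)
      simp only [hΦdef] at hge
      rw [hexp1, hexp2] at hge
      have hΦb' : rb + ⟪T xb, xb⟫ / 2 + ⟪T ub, ub⟫ / 2 = μ := by
        simpa only [hΦdef] using hΦb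
      simp only [hLdef, hqdef]
      nlinarith [hge, hΦb']
    by_contra hL
    push_neg at hL
    have hden : (0:ℝ) < 2 * q + 1 := by linarith
    set t0 : ℝ := min 1 ((-L) / (2 * q + 1)) with ht0def
    have ht0pos : 0 < t0 := lt_min one_pos (div_pos (by linarith) hden)
    have ht0le1 : t0 ≤ 1 := min_le_left _ _
    have ht0le : t0 ≤ (-L) / (2 * q + 1) := min_le_right _ _
    have h5 : t0 * (2 * q + 1) ≤ -L := by
      rw [← le_div_iff₀ hden]
      exact ht0le
    have h5' : t0 * (t0 * (2 * q + 1)) ≤ t0 * (-L) :=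
      mul_le_mul_of_nonneg_left h5 ht0pos.le
    have h6 := ht t0 ht0pos ht0le1
    have hq2 : 0 ≤ t0 * t0 * q := mul_nonneg (mul_nonneg ht0pos.le ht0pos.le) hq
    have ht2 : 0 < t0 * t0 := mul_pos ht0pos ht0pos
    nlinarith [h5', h6, hq2, ht2]
  -- the key inequality
  have hkey6 : ⟪T xb, ub⟫ ≤ -(rb + ⟪T xb, xb⟫ + ⟪T ub, ub⟫) := by
    by_contra hlt
    push_neg at hlt
    have hmem : -xb ∈ B (-ub) := by
      apply hmax
      intro y v hv
      have hd := hVI y v hv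
      rw [inner_sub_right, inner_sub_right] at hd
      rw [hsub]
      simp only [map_neg, inner_neg_left, inner_neg_right]
      have e1 := hsymm' y xb
      have e2 := hsymm' ub xb
      linarith
    have h2 := hVI (-ub) (-xb) hmem
    rw [inner_sub_right, inner_sub_right] at h2
    simp only [map_neg, inner_neg_left, inner_neg_right] at h2
    have e2 := hsymm' ub xb
    linarith
  -- conclude ub = -xb
  have hub' : ub = -xb := by
    have h1 := hPmem xb ub rb hPb
    have h3 : ⟪T (xb + ub), xb + ub⟫
        = ⟪T xb, xb⟫ + 2 * ⟪T xb, ub⟫ + ⟪T ub, ub⟫ := by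
      have := hexp 1 xb ub
      simpa using this
    have h4 : ⟪T (xb + ub), xb + ub⟫ ≤ 0 := by linarith
    have h5 := hzero _ h4
    exact eq_neg_of_add_eq_zero_right h5
  have hrle : rb ≤ ⟪T xb, ub⟫ := by
    have e1 : ⟪T ub, ub⟫ = ⟪T xb, xb⟫ := by
      rw [hub']
      simp only [map_neg, inner_neg_left, inner_neg_right, neg_neg]
    have e2 : ⟪T xb, ub⟫ = -⟪T xb, xb⟫ := by
      rw [hub', inner_neg_right]
    linarith [hkey6]
  have hfinal : ub ∈ B xb := by
    apply hmax
    intro y v hv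
    have h1 := hPb y v hv
    rw [hsub]
    linarith
  exact ⟨xb, hub' ▸ hfinal⟩

theorem stmt_13 {H : Type*} [NormedAddCommGroup H] [InnerProductSpace ℝ H] [CompleteSpace H]
    (α γ : ℝ) (hα : 0 < α) (hγ : 0 < γ)
    (W : H →L[ℝ] H) (hsa : IsSelfAdjoint W)
    (hlb : ∀ x : H, α * ‖x‖ ^ 2 ≤ (inner ℝ (W x) x : ℝ))
    (A : H → Set H) (hA : MaxMonotone A) :
    (∀ x : H, ∃! p : H, W x - W p ∈ γ • A p) ∧
    (∀ J : H → H, (∀ x, W x - W (J x) ∈ γ • A (J x)) →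
      ((∀ x : H, J x = x ↔ 0 ∈ A x) ∧
       ∀ (x y : H), 0 ∈ A y → (inner ℝ (W (y - J x)) (x - J x) : ℝ) ≤ 0)) := by
  obtain ⟨hA1, hA2⟩ := hA
  have hsym : ∀ x y : H, ⟪W x, y⟫ = ⟪x, W y⟫ :=
    fun x y => (ContinuousLinearMap.isSelfAdjoint_iff_isSymmetric.mp hsa) x y
  have hγ' : γ ≠ 0 := ne_of_gt hγ
  have hmemγ : ∀ (p : H) (u : H), u ∈ γ • A p ↔ γ⁻¹ • u ∈ A p := fun p u =>
    Set.mem_smul_set_iff_inv_smul_mem₀ hγ' (A p) u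
  -- surjectivity of W
  have hWlow : ∀ v : H, α * ‖v‖ ≤ ‖W v‖ := by
    intro v
    by_cases h : v = 0
    · simp [h]
    · have h1 := hlb v
      have h2 := real_inner_le_norm (W v) v
      have h3 : 0 < ‖v‖ := norm_pos_iff.mpr h
      nlinarith
  have hWsurj : Function.Surjective W := by
    have hanti : AntilipschitzWith (⟨α⁻¹, by positivity⟩ : NNReal) W := by
      apply ContinuousLinearMap.antilipschitz_of_bound
      intro x
      have h1 := hWlow x
      have : ‖x‖ ≤ α⁻¹ * ‖W x‖ := by
        calc ‖x‖ = α⁻¹ * (α * ‖x‖) := by field_simp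
          _ ≤ α⁻¹ * ‖W x‖ := by
              apply mul_le_mul_of_nonneg_left (hWlow x) (by positivity)
      exact this
    have hclosed : IsClosed (Set.range W) := hanti.isClosed_range W.uniformContinuous
    have hcl : IsClosed ((LinearMap.range (W : H →ₗ[ℝ] H) : Submodule ℝ H) : Set H) := by
      have he : ((LinearMap.range (W : H →ₗ[ℝ] H) : Submodule ℝ H) : Set H) = Set.range W := by
        ext z
        simp [LinearMap.mem_range]
      rw [he]
      exact hclosed
    haveI := hcl.completeSpace_coe
    have hrange : (LinearMap.range (W : H →ₗ[ℝ] H) : Submodule ℝ H) = ⊤ := by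
      rw [← Submodule.orthogonal_orthogonal (LinearMap.range (W : H →ₗ[ℝ] H) : Submodule ℝ H)]
      rw [Submodule.eq_top_iff']
      intro v
      rw [Submodule.mem_orthogonal]
      intro u hu
      rw [Submodule.mem_orthogonal] at hu
      have h1 : ⟪W u, u⟫ = 0 := hu (W u) ⟨u, rfl⟩
      have hu0 : u = 0 := by
        apply eq_zero_of_normsq hα (hlb u)
        rw [h1]
      simp [hu0]
    intro c
    have : c ∈ (LinearMap.range (W : H →ₗ[ℝ] H) : Submodule ℝ H) := by rw [hrange]; trivial
    exact this
  -- uniqueness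
  have huniq : ∀ (x p q : H), W x - W p ∈ γ • A p → W x - W q ∈ γ • A q → p = q := by
    intro x p q hp hq
    have h0 := hA1 p q _ _ ((hmemγ p _).mp hp) ((hmemγ q _).mp hq)
    have h1 : ⟪p - q, γ⁻¹ • (W x - W p) - γ⁻¹ • (W x - W q)⟫
        = -(γ⁻¹ * ⟪W (p - q), p - q⟫) := by
      have e : (W x - W p) - (W x - W q) = -W (p - q) := by
        rw [map_sub]
        abel
      rw [← smul_sub, e, real_inner_smul_right, inner_neg_right, real_inner_comm]
      ring
    rw [h1] at h0
    have hc : ⟪W (p - q), p - q⟫ ≤ 0 := by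
      by_contra hcc
      push_neg at hcc
      have : 0 < γ⁻¹ * ⟪W (p - q), p - q⟫ := mul_pos (by positivity) hcc
      linarith
    have := eq_zero_of_normsq hα (hlb (p - q)) hc
    exact sub_eq_zero.mp this
  refine ⟨?_, ?_⟩
  · -- existence and uniqueness
    intro x
    set B : H → Set H := fun p => {w | W w + W x ∈ γ • A p} with hBdef
    have hmono : ∀ p q w w', w ∈ B p → w' ∈ B q → 0 ≤ ⟪W (p - q), w - w'⟫ := by
      intro p q w w' hw hw'
      have h0 := hA1 p q _ _ ((hmemγ p _).mp hw) ((hmemγ q _).mp hw')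
      have h1 : ⟪W (p - q), w - w'⟫
          = γ * ⟪p - q, γ⁻¹ • (W w + W x) - γ⁻¹ • (W w' + W x)⟫ := by
        rw [← smul_sub, real_inner_smul_right, ← mul_assoc, mul_inv_cancel₀ hγ', one_mul]
        have e : (W w + W x) - (W w' + W x) = W (w - w') := by
          rw [map_sub]
          abel
        rw [e, hsym]
      rw [h1]
      exact mul_nonneg hγ.le h0
    have hmaxB : ∀ p w, (∀ q w', w' ∈ B q → 0 ≤ ⟪W (p - q), w - w'⟫) → w ∈ B p := by
      intro p w hall
      show W w + W x ∈ γ • A p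
      rw [hmemγ]
      apply hA2
      intro y a ha
      obtain ⟨w', hw'⟩ := hWsurj (γ • a - W x)
      have hw'mem : w' ∈ B y := by
        show W w' + W x ∈ γ • A y
        rw [hw', sub_add_cancel]
        exact Set.smul_mem_smul_set ha
      have h0 := hall y w' hw'mem
      have h1 : ⟪p - y, γ⁻¹ • (W w + W x) - a⟫ = γ⁻¹ * ⟪W (p - y), w - w'⟫ := by
        have e : γ⁻¹ • (W w + W x) - a = γ⁻¹ • (W w - W w') := by
          rw [hw']
          rw [smul_sub, smul_sub, smul_add]
          rw [inv_smul_smul₀ hγ']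
          abel
        rw [e, real_inner_smul_right, hsym, map_sub]
      rw [h1]
      exact mul_nonneg (by positivity) h0
    obtain ⟨p, hp⟩ := minty_core W α hα hsym hlb B hmono hmaxB
    have hp' : W x - W p ∈ γ • A p := by
      have : W (-p) + W x ∈ γ • A p := hp
      rw [map_neg] at this
      rwa [neg_add_eq_sub] at this
    exact ⟨p, hp', fun q hq => huniq x q p hq hp'⟩
  · -- properties of J
    intro J hJ
    constructor
    · intro x
      constructor
      · intro hfix
        have h1 := hJ x
        rw [hfix, sub_self] at h1
        have := (hmemγ x 0).mp h1
        rwa [smul_zero] at this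
      · intro h0x
        have hx : W x - W x ∈ γ • A x := by
          rw [sub_self]
          have := Set.smul_mem_smul_set (a := γ) h0x
          rwa [smul_zero] at this
        exact huniq x (J x) x (hJ x) hx
    · intro x y h0y
      have hJx := (hmemγ (J x) _).mp (hJ x)
      have h0 := hA1 (J x) y _ _ hJx h0y
      have e : ⟪W (y - J x), x - J x⟫
          = -(γ * ⟪J x - y, γ⁻¹ • (W x - W (J x)) - 0⟫) := by
        rw [sub_zero, real_inner_smul_right, ← mul_assoc, mul_inv_cancel₀ hγ', one_mul]
        rw [hsym, map_sub]
        rw [show ⟪y - J x, W x - W (J x)⟫ = -⟪J x - y, W x - W (J x)⟫ by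
          rw [← inner_neg_left, neg_sub]]
      rw [e]
      have : 0 ≤ γ * ⟪J x - y, γ⁻¹ • (W x - W (J x)) - 0⟫ := mul_nonneg hγ.le h0
      linarith
end

section
/- In the setting of the variable metric quasi-cyclic algorithm xₙ₊₁ = xₙ + λₙ(T_{i(n),n} xₙ + aₙ − xₙ) (with T_{i,n} ∈ 𝔗(Wₙ), Fix T_{i,n} = Cᵢ, C = ⋂ Cᵢ ≠ ∅, λₙ ∈ [ε, 2−ε], ∑‖aₙ‖ < +∞, (1+ηₙ)Wₙ ≽ Wₙ₊₁ with (ηₙ) summable, α·Id ≼ Wₙ, sup‖Wₙ‖ < +∞, and the focusing condition), if additionally liminf_n d_C(xₙ) = 0, then (xₙ) converges strongly to a point of C. -/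
open Filter Topology

set_option maxHeartbeats 1600000

theorem stmt_16 {H : Type*} [NormedAddCommGroup H] [InnerProductSpace ℝ H] [CompleteSpace H]
    {I : Type*} [Fintype I] [Nonempty I]
    (α : ℝ) (hα : 0 < α)
    (C : I → Set H) (hCcl : ∀ i, IsClosed (C i)) (hCconv : ∀ i, Convex ℝ (C i))
    (hC : (⋂ i, C i).Nonempty)
    (a : ℕ → H) (ha : Summable (fun n => ‖a n‖))
    (η : ℕ → ℝ) (hη0 : ∀ n, 0 ≤ η n) (hη : Summable η)
    (W : ℕ → H →L[ℝ] H) (hsa : ∀ n, IsSelfAdjoint (W n))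
    (hlb : ∀ n (x : H), α * ‖x‖ ^ 2 ≤ (inner ℝ (W n x) x : ℝ))
    (hbd : ∃ μ : ℝ, ∀ n, ‖W n‖ ≤ μ)
    (hmono : ∀ n (x : H), (inner ℝ (W (n + 1) x) x : ℝ) ≤ (1 + η n) * (inner ℝ (W n x) x : ℝ))
    (idx : ℕ → I)
    (hidx : ∀ j : I, ∃ M : ℕ, 0 < M ∧ ∀ n : ℕ, ∃ k < M, idx (n + k) = j)
    (T : I → ℕ → H → H)
    (hT : ∀ i n (x y : H), y ∈ C i → (inner ℝ (W n (y - T i n x)) (x - T i n x) : ℝ) ≤ 0)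
    (hTfix : ∀ i n (x : H), T i n x = x ↔ x ∈ C i)
    (ε : ℝ) (hε0 : 0 < ε) (hε1 : ε < 1)
    (x : ℕ → H) (lam : ℕ → ℝ) (hlam : ∀ n, lam n ∈ Set.Icc ε (2 - ε))
    (hrec : ∀ n, x (n + 1) = x n + lam n • (T (idx n) n (x n) + a n - x n))
    (hfocus : ∀ (p : ℕ → ℕ), StrictMono p → ∀ (x' : H) (j : I),
      (∀ y : H, Tendsto (fun n => (inner ℝ (x (p n)) y : ℝ)) atTop (𝓝 (inner ℝ x' y : ℝ))) →
      Tendsto (fun n => T j (p n) (x (p n)) - x (p n)) atTop (𝓝 0) →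
      (∀ n, idx (p n) = j) → x' ∈ C j)
    (hliminf : Filter.liminf (fun n => Metric.infDist (x n) (⋂ i, C i)) atTop = 0) :
    ∃ x' ∈ ⋂ i, C i, Tendsto x atTop (𝓝 x') := by
  classical
  obtain ⟨μ, hμ⟩ := hbd
  have hμ0 : 0 ≤ μ := (norm_nonneg _).trans (hμ 0)
  have hScl : IsClosed (⋂ i, C i) := isClosed_iInter hCcl
  set Q : ℕ → H → ℝ := fun n v => (inner ℝ (W n v) v : ℝ) with hQdef
  have hsymm : ∀ n (u v : H), (inner ℝ (W n u) v : ℝ) = (inner ℝ (W n v) u : ℝ) := by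
    intro n u v
    calc (inner ℝ (W n u) v : ℝ) = (inner ℝ u (W n v) : ℝ) := (hsa n).isSymmetric u v
      _ = (inner ℝ (W n v) u : ℝ) := real_inner_comm _ _
  have hQ0 : ∀ n v, 0 ≤ Q n v := fun n v => le_trans (by positivity) (hlb n v)
  -- expansion
  have hexp : ∀ n (u v : H) (c : ℝ),
      Q n (u + c • v) = Q n u + 2 * c * (inner ℝ (W n u) v : ℝ) + c ^ 2 * Q n v := by
    intro n u v c
    simp only [hQdef, map_add, map_smul, inner_add_left, inner_add_right,
      real_inner_smul_left, real_inner_smul_right]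
    rw [hsymm n v u]; ring
  -- Cauchy–Schwarz
  have hCS : ∀ n (u v : H), (inner ℝ (W n u) v : ℝ) ≤ Real.sqrt (Q n u) * Real.sqrt (Q n v) := by
    intro n u v
    rcases eq_or_ne v 0 with rfl | hv
    · simp [hQdef]
    · have hQv : 0 < Q n v := by
        refine lt_of_lt_of_le ?_ (hlb n v)
        have : 0 < ‖v‖ := norm_pos_iff.2 hv
        positivity
      have key : (inner ℝ (W n u) v : ℝ) ^ 2 ≤ Q n u * Q n v := by
        have h := hQ0 n (u + (-((inner ℝ (W n u) v : ℝ) / Q n v)) • v)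
        rw [hexp] at h
        have h2 : 0 ≤ Q n u - (inner ℝ (W n u) v : ℝ) ^ 2 / Q n v := by
          have e : 2 * (-((inner ℝ (W n u) v : ℝ) / Q n v)) * (inner ℝ (W n u) v : ℝ)
              + (-((inner ℝ (W n u) v : ℝ) / Q n v)) ^ 2 * Q n v
              = -((inner ℝ (W n u) v : ℝ) ^ 2 / Q n v) := by
            field_simp; ring
          nlinarith [h]
        have := (div_le_iff₀ hQv).1 (by linarith : (inner ℝ (W n u) v : ℝ) ^ 2 / Q n v ≤ Q n u)
        linarith
      calc (inner ℝ (W n u) v : ℝ) ≤ |(inner ℝ (W n u) v : ℝ)| := le_abs_self _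
        _ = Real.sqrt ((inner ℝ (W n u) v : ℝ) ^ 2) := (Real.sqrt_sq_eq_abs _).symm
        _ ≤ Real.sqrt (Q n u * Q n v) := Real.sqrt_le_sqrt key
        _ = Real.sqrt (Q n u) * Real.sqrt (Q n v) := Real.sqrt_mul (hQ0 n u) _
  -- triangle inequality
  have htri : ∀ n (u v : H),
      Real.sqrt (Q n (u + v)) ≤ Real.sqrt (Q n u) + Real.sqrt (Q n v) := by
    intro n u v
    have h1 : Q n (u + v) ≤ (Real.sqrt (Q n u) + Real.sqrt (Q n v)) ^ 2 := by
      have he := hexp n u v 1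
      rw [one_smul] at he
      have hcs := hCS n u v
      have hu := Real.sq_sqrt (hQ0 n u)
      have hv := Real.sq_sqrt (hQ0 n v)
      nlinarith [Real.sqrt_nonneg (Q n u), Real.sqrt_nonneg (Q n v)]
    calc Real.sqrt (Q n (u + v))
        ≤ Real.sqrt ((Real.sqrt (Q n u) + Real.sqrt (Q n v)) ^ 2) := Real.sqrt_le_sqrt h1
      _ = Real.sqrt (Q n u) + Real.sqrt (Q n v) := Real.sqrt_sq (by positivity)
  -- scaling
  have hsc : ∀ n (c : ℝ) (v : H), 0 ≤ c → Real.sqrt (Q n (c • v)) = c * Real.sqrt (Q n v) := by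
    intro n c v hc
    have : Q n (c • v) = c ^ 2 * Q n v := by
      simp only [hQdef, map_smul, real_inner_smul_left, real_inner_smul_right]; ring
    rw [this, Real.sqrt_mul (sq_nonneg c), Real.sqrt_sq hc]
  -- upper and lower bounds against the norm
  have hub : ∀ n (v : H), Real.sqrt (Q n v) ≤ Real.sqrt μ * ‖v‖ := by
    intro n v
    have h1 : Q n v ≤ μ * ‖v‖ ^ 2 := by
      have := real_inner_le_norm (W n v) v
      have h2 : ‖W n v‖ ≤ ‖W n‖ * ‖v‖ := (W n).le_opNorm v
      have h3 : ‖W n‖ ≤ μ := hμ n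
      have h4 : 0 ≤ ‖v‖ := norm_nonneg v
      nlinarith
    calc Real.sqrt (Q n v) ≤ Real.sqrt (μ * ‖v‖ ^ 2) := Real.sqrt_le_sqrt h1
      _ = Real.sqrt μ * ‖v‖ := by
          rw [Real.sqrt_mul hμ0, Real.sqrt_sq (norm_nonneg v)]
  have hlbs : ∀ n (v : H), Real.sqrt α * ‖v‖ ≤ Real.sqrt (Q n v) := by
    intro n v
    calc Real.sqrt α * ‖v‖ = Real.sqrt (α * ‖v‖ ^ 2) := by
          rw [Real.sqrt_mul hα.le, Real.sqrt_sq (norm_nonneg v)]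
      _ ≤ Real.sqrt (Q n v) := Real.sqrt_le_sqrt (hlb n v)
  -- metric monotonicity step
  have hmn : ∀ n (v : H), Real.sqrt (Q (n + 1) v) ≤ Real.exp (η n) * Real.sqrt (Q n v) := by
    intro n v
    have h1 : Q (n + 1) v ≤ (1 + η n) * Q n v := hmono n v
    have h2 : Real.sqrt (1 + η n) ≤ Real.exp (η n) := by
      have h3 : 1 + η n ≤ Real.exp (η n) ^ 2 := by
        have := Real.add_one_le_exp (η n)
        have h4 : 1 ≤ Real.exp (η n) := Real.one_le_exp (hη0 n)
        nlinarith
      calc Real.sqrt (1 + η n) ≤ Real.sqrt (Real.exp (η n) ^ 2) := Real.sqrt_le_sqrt h3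
        _ = Real.exp (η n) := Real.sqrt_sq (Real.exp_pos _).le
    calc Real.sqrt (Q (n + 1) v) ≤ Real.sqrt ((1 + η n) * Q n v) := Real.sqrt_le_sqrt h1
      _ = Real.sqrt (1 + η n) * Real.sqrt (Q n v) := Real.sqrt_mul (by linarith [hη0 n]) _
      _ ≤ Real.exp (η n) * Real.sqrt (Q n v) :=
          mul_le_mul_of_nonneg_right h2 (Real.sqrt_nonneg _)
  -- Fejér step without the error term
  have hfejer : ∀ n, ∀ y ∈ ⋂ i, C i,
      Q n (x n - y + lam n • (T (idx n) n (x n) - x n)) ≤ Q n (x n - y) := by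
    intro n y hy
    set u := x n
    set z := T (idx n) n u with hz
    set l := lam n with hl
    have hyC : y ∈ C (idx n) := by
      exact Set.mem_iInter.1 hy (idx n)
    have hT' : (inner ℝ (W n (y - z)) (u - z) : ℝ) ≤ 0 := hT (idx n) n u y hyC
    have hcross : (inner ℝ (W n (u - y)) (z - u) : ℝ) ≤ -Q n (z - u) := by
      have hsplit : u - y = (u - z) + (z - y) := by abel
      have e1 : (inner ℝ (W n (u - y)) (z - u) : ℝ)
          = (inner ℝ (W n (u - z)) (z - u) : ℝ) + (inner ℝ (W n (z - y)) (z - u) : ℝ) := by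
        rw [hsplit, map_add, inner_add_left]
      have e2 : (inner ℝ (W n (u - z)) (z - u) : ℝ) = -Q n (z - u) := by
        have : u - z = -(z - u) := by abel
        rw [this, map_neg, inner_neg_left]
      have e3 : (inner ℝ (W n (z - y)) (z - u) : ℝ) = (inner ℝ (W n (y - z)) (u - z) : ℝ) := by
        have h1 : z - y = -(y - z) := by abel
        have h2 : z - u = -(u - z) := by abel
        rw [h1, h2, map_neg, inner_neg_left, inner_neg_right, neg_neg]
      rw [e1, e2, e3]
      linarith
    have hexp' := hexp n (u - y) (z - u) l
    have hl1 : ε ≤ l := (hlam n).1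
    have hl2 : l ≤ 2 - ε := (hlam n).2
    have hQzu := hQ0 n (z - u)
    nlinarith [hexp', hcross, hQzu, mul_le_mul_of_nonneg_left hcross (by linarith : (0:ℝ) ≤ 2 * l),
      mul_nonneg (mul_nonneg (by linarith : (0:ℝ) ≤ l) (by linarith : (0:ℝ) ≤ 2 - l)) hQzu]
  -- one-step inequality
  have hstep : ∀ n, ∀ y ∈ ⋂ i, C i,
      Real.sqrt (Q (n + 1) (x (n + 1) - y))
        ≤ Real.exp (η n) * (Real.sqrt (Q n (x n - y)) + 2 * Real.sqrt μ * ‖a n‖) := by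
    intro n y hy
    have hl0 : 0 ≤ lam n := le_trans hε0.le (hlam n).1
    have hdecomp : x (n + 1) - y
        = (x n - y + lam n • (T (idx n) n (x n) - x n)) + lam n • a n := by
      rw [hrec n]
      simp only [smul_add, smul_sub]
      abel
    have h1 : Real.sqrt (Q n (x (n + 1) - y))
        ≤ Real.sqrt (Q n (x n - y)) + 2 * Real.sqrt μ * ‖a n‖ := by
      calc Real.sqrt (Q n (x (n + 1) - y))
          ≤ Real.sqrt (Q n (x n - y + lam n • (T (idx n) n (x n) - x n)))
            + Real.sqrt (Q n (lam n • a n)) := by rw [hdecomp]; exact htri n _ _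
        _ ≤ Real.sqrt (Q n (x n - y)) + lam n * (Real.sqrt μ * ‖a n‖) := by
            gcongr
            · exact hfejer n y hy
            · rw [hsc n (lam n) (a n) hl0]
              exact mul_le_mul_of_nonneg_left (hub n (a n)) hl0
        _ ≤ Real.sqrt (Q n (x n - y)) + 2 * Real.sqrt μ * ‖a n‖ := by
            have : lam n ≤ 2 := by linarith [(hlam n).2, hε0]
            have hμa : 0 ≤ Real.sqrt μ * ‖a n‖ := by positivity
            nlinarith
    calc Real.sqrt (Q (n + 1) (x (n + 1) - y))
        ≤ Real.exp (η n) * Real.sqrt (Q n (x (n + 1) - y)) := hmn n _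
      _ ≤ Real.exp (η n) * (Real.sqrt (Q n (x n - y)) + 2 * Real.sqrt μ * ‖a n‖) :=
          mul_le_mul_of_nonneg_left h1 (Real.exp_pos _).le
  -- iterated inequality
  have hiter : ∀ y ∈ ⋂ i, C i, ∀ n m, n ≤ m →
      Real.sqrt (Q m (x m - y))
        ≤ Real.exp (∑ k ∈ Finset.Ico n m, η k)
          * (Real.sqrt (Q n (x n - y)) + ∑ k ∈ Finset.Ico n m, 2 * Real.sqrt μ * ‖a k‖) := by
    intro y hy n m hnm
    induction m, hnm using Nat.le_induction with
    | base => simp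
    | succ m hnm ih =>
      have hβ : 0 ≤ 2 * Real.sqrt μ * ‖a m‖ := by positivity
      have hsum1 : (0:ℝ) ≤ ∑ k ∈ Finset.Ico n m, η k :=
        Finset.sum_nonneg fun k _ => hη0 k
      have hsum2 : (0:ℝ) ≤ ∑ k ∈ Finset.Ico n m, 2 * Real.sqrt μ * ‖a k‖ :=
        Finset.sum_nonneg fun k _ => by positivity
      rw [Finset.sum_Ico_succ_top hnm, Finset.sum_Ico_succ_top hnm, Real.exp_add]
      have h1 := hstep m y hy
      have h2 : Real.sqrt (Q m (x m - y)) + 2 * Real.sqrt μ * ‖a m‖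
          ≤ Real.exp (∑ k ∈ Finset.Ico n m, η k)
            * (Real.sqrt (Q n (x n - y)) + ∑ k ∈ Finset.Ico n m, 2 * Real.sqrt μ * ‖a k‖)
            + 2 * Real.sqrt μ * ‖a m‖ := by linarith
      have hE1 : 1 ≤ Real.exp (∑ k ∈ Finset.Ico n m, η k) := Real.one_le_exp hsum1
      have hE2 : 0 < Real.exp (η m) := Real.exp_pos _
      have hφ : 0 ≤ Real.sqrt (Q n (x n - y)) := Real.sqrt_nonneg _
      calc Real.sqrt (Q (m + 1) (x (m + 1) - y))
          ≤ Real.exp (η m) * (Real.sqrt (Q m (x m - y)) + 2 * Real.sqrt μ * ‖a m‖) := h1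
        _ ≤ Real.exp (η m) * (Real.exp (∑ k ∈ Finset.Ico n m, η k)
              * (Real.sqrt (Q n (x n - y)) + ∑ k ∈ Finset.Ico n m, 2 * Real.sqrt μ * ‖a k‖)
              + 2 * Real.sqrt μ * ‖a m‖) := mul_le_mul_of_nonneg_left h2 hE2.le
        _ ≤ Real.exp (∑ k ∈ Finset.Ico n m, η k) * Real.exp (η m)
              * (Real.sqrt (Q n (x n - y))
                + (∑ k ∈ Finset.Ico n m, 2 * Real.sqrt μ * ‖a k‖ + 2 * Real.sqrt μ * ‖a m‖)) := by
            nlinarith [mul_le_mul_of_nonneg_left hE1 (mul_nonneg hE2.le hβ)]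
  -- tail sums
  set Gη : ℕ → ℝ := fun n => ∑' k, η (k + n) with hGη
  set Gβ : ℕ → ℝ := fun n => ∑' k, 2 * Real.sqrt μ * ‖a (k + n)‖ with hGβ
  have hβsum : Summable (fun k => 2 * Real.sqrt μ * ‖a k‖) := ha.mul_left _
  have hGηsum : ∀ n, Summable (fun k => η (k + n)) := fun n => (summable_nat_add_iff n).2 hη
  have hGβsum : ∀ n, Summable (fun k => 2 * Real.sqrt μ * ‖a (k + n)‖) := fun n =>
    (summable_nat_add_iff n).2 hβsum
  have hpartη : ∀ n m, ∑ k ∈ Finset.Ico n m, η k ≤ Gη n := by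
    intro n m
    rw [Finset.sum_Ico_eq_sum_range]
    have : ∀ k ∈ Finset.range (m - n), η (n + k) = η (k + n) := fun k _ => by rw [add_comm]
    rw [Finset.sum_congr rfl this]
    exact Summable.sum_le_tsum _ (fun k _ => hη0 _) (hGηsum n)
  have hpartβ : ∀ n m, ∑ k ∈ Finset.Ico n m, 2 * Real.sqrt μ * ‖a k‖ ≤ Gβ n := by
    intro n m
    rw [Finset.sum_Ico_eq_sum_range]
    have : ∀ k ∈ Finset.range (m - n), 2 * Real.sqrt μ * ‖a (n + k)‖
        = 2 * Real.sqrt μ * ‖a (k + n)‖ := fun k _ => by rw [add_comm]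
    rw [Finset.sum_congr rfl this]
    exact Summable.sum_le_tsum _ (fun k _ => by positivity) (hGβsum n)
  have hGη0 : ∀ n, 0 ≤ Gη n := fun n => tsum_nonneg (fun k => hη0 _)
  have hGβ0 : ∀ n, 0 ≤ Gβ n := fun n => tsum_nonneg (fun k => by positivity)
  have hGηlim : Tendsto Gη atTop (𝓝 0) := tendsto_sum_nat_add η
  have hGβlim : Tendsto Gβ atTop (𝓝 0) := tendsto_sum_nat_add (fun k => 2 * Real.sqrt μ * ‖a k‖)
  -- the key claim
  have hα' : 0 < Real.sqrt α := Real.sqrt_pos.2 hα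
  have key : ∀ t : ℝ, 0 < t → ∃ n : ℕ, ∃ y ∈ ⋂ i, C i, ∀ m, n ≤ m → ‖x m - y‖ < t := by
    intro t ht
    set s : ℝ := t * Real.sqrt α / (2 * Real.exp 1 * (2 * Real.sqrt μ + 2)) with hs
    have hspos : 0 < s := by
      apply div_pos (by positivity)
      have := Real.sqrt_nonneg μ
      positivity
    have h1 : ∀ᶠ n in atTop, Gη n < 1 :=
      hGηlim.eventually_lt_const one_pos
    have h2 : ∀ᶠ n in atTop, Gβ n < s :=
      hGβlim.eventually_lt_const hspos
    obtain ⟨N₀, hN₀⟩ := eventually_atTop.1 (h1.and h2)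
    have hC2 := hC
    obtain ⟨y₀, hy₀⟩ := hC2
    have hcob : IsCoboundedUnder (· ≥ ·) atTop (fun n => Metric.infDist (x n) (⋂ i, C i)) := by
      refine isCoboundedUnder_ge_of_le atTop
        (x := Real.exp (Gη 0) * (Real.sqrt (Q 0 (x 0 - y₀)) + Gβ 0) / Real.sqrt α) (fun m => ?_)
      have h1 := hiter y₀ hy₀ 0 m (Nat.zero_le m)
      have h2 : Real.exp (∑ k ∈ Finset.Ico 0 m, η k)
          * (Real.sqrt (Q 0 (x 0 - y₀)) + ∑ k ∈ Finset.Ico 0 m, 2 * Real.sqrt μ * ‖a k‖)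
          ≤ Real.exp (Gη 0) * (Real.sqrt (Q 0 (x 0 - y₀)) + Gβ 0) := by
        apply mul_le_mul (Real.exp_le_exp.2 (hpartη 0 m))
        · linarith [hpartβ 0 m]
        · have : (0:ℝ) ≤ ∑ k ∈ Finset.Ico 0 m, 2 * Real.sqrt μ * ‖a k‖ :=
            Finset.sum_nonneg fun k _ => by positivity
          linarith [Real.sqrt_nonneg (Q 0 (x 0 - y₀))]
        · exact (Real.exp_pos _).le
      have h3 : Real.sqrt α * ‖x m - y₀‖
          ≤ Real.exp (Gη 0) * (Real.sqrt (Q 0 (x 0 - y₀)) + Gβ 0) :=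
        le_trans (hlbs m _) (le_trans h1 h2)
      calc Metric.infDist (x m) (⋂ i, C i) ≤ dist (x m) y₀ :=
            Metric.infDist_le_dist_of_mem hy₀
        _ = ‖x m - y₀‖ := dist_eq_norm _ _
        _ ≤ Real.exp (Gη 0) * (Real.sqrt (Q 0 (x 0 - y₀)) + Gβ 0) / Real.sqrt α :=
            (le_div_iff₀ hα').2 (by linarith [mul_comm (Real.sqrt α) ‖x m - y₀‖])
    have hfreq : ∃ᶠ n in atTop, Metric.infDist (x n) (⋂ i, C i) < s :=
      frequently_lt_of_liminf_lt hcob (by rw [hliminf]; exact hspos)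
    obtain ⟨n, hn, hns⟩ := (hfreq.and_eventually (eventually_ge_atTop N₀)).exists
    obtain ⟨hGη1, hGβs⟩ := hN₀ n hns
    obtain ⟨y, hyS, hyd⟩ := (Metric.infDist_lt_iff hC).1 hn
    rw [dist_eq_norm] at hyd
    refine ⟨n, y, hyS, fun m hm => ?_⟩
    have hchain : Real.sqrt α * ‖x m - y‖ ≤ Real.exp 1 * (Real.sqrt μ * s + s) := by
      calc Real.sqrt α * ‖x m - y‖ ≤ Real.sqrt (Q m (x m - y)) := hlbs m _
        _ ≤ Real.exp (∑ k ∈ Finset.Ico n m, η k)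
            * (Real.sqrt (Q n (x n - y)) + ∑ k ∈ Finset.Ico n m, 2 * Real.sqrt μ * ‖a k‖) :=
            hiter y hyS n m hm
        _ ≤ Real.exp 1 * (Real.sqrt μ * s + s) := by
            have e1 : Real.exp (∑ k ∈ Finset.Ico n m, η k) ≤ Real.exp 1 :=
              Real.exp_le_exp.2 ((hpartη n m).trans hGη1.le)
            have e2 : Real.sqrt (Q n (x n - y)) ≤ Real.sqrt μ * s := by
              calc Real.sqrt (Q n (x n - y)) ≤ Real.sqrt μ * ‖x n - y‖ := hub n _
                _ ≤ Real.sqrt μ * s :=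
                    mul_le_mul_of_nonneg_left hyd.le (Real.sqrt_nonneg μ)
            have e3 : ∑ k ∈ Finset.Ico n m, 2 * Real.sqrt μ * ‖a k‖ ≤ s :=
              (hpartβ n m).trans hGβs.le
            have hpos : 0 ≤ Real.sqrt (Q n (x n - y))
                + ∑ k ∈ Finset.Ico n m, 2 * Real.sqrt μ * ‖a k‖ := by
              have := Real.sqrt_nonneg (Q n (x n - y))
              have : (0:ℝ) ≤ ∑ k ∈ Finset.Ico n m, 2 * Real.sqrt μ * ‖a k‖ :=
                Finset.sum_nonneg fun k _ => by positivity
              linarith [Real.sqrt_nonneg (Q n (x n - y))]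
            have hE : 0 < Real.exp (∑ k ∈ Finset.Ico n m, η k) := Real.exp_pos _
            calc Real.exp (∑ k ∈ Finset.Ico n m, η k)
                  * (Real.sqrt (Q n (x n - y)) + ∑ k ∈ Finset.Ico n m, 2 * Real.sqrt μ * ‖a k‖)
                ≤ Real.exp 1
                  * (Real.sqrt (Q n (x n - y)) + ∑ k ∈ Finset.Ico n m, 2 * Real.sqrt μ * ‖a k‖) :=
                  mul_le_mul_of_nonneg_right e1 hpos
              _ ≤ Real.exp 1 * (Real.sqrt μ * s + s) := by
                  apply mul_le_mul_of_nonneg_left _ (Real.exp_pos 1).le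
                  linarith
    have hval : Real.exp 1 * (Real.sqrt μ * s + s) = t * Real.sqrt α / 4 := by
      rw [hs]
      have hden : 2 * Real.exp 1 * (2 * Real.sqrt μ + 2) ≠ 0 := by
        have := Real.sqrt_nonneg μ
        positivity
      field_simp
      ring
    rw [hval] at hchain
    have : Real.sqrt α * ‖x m - y‖ < Real.sqrt α * t := by
      have ht4 : t * Real.sqrt α / 4 < Real.sqrt α * t := by nlinarith
      linarith
    exact (mul_lt_mul_iff_right₀ hα').1 this
  -- Cauchy and conclusion
  have hcauchy : CauchySeq x := by
    rw [Metric.cauchySeq_iff']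
    intro r hr
    obtain ⟨n, y, hy, hb⟩ := key (r / 2) (by positivity)
    refine ⟨n, fun m hm => ?_⟩
    have h1 := hb m hm
    have h2 := hb n le_rfl
    calc dist (x m) (x n) ≤ dist (x m) y + dist y (x n) := dist_triangle _ _ _
      _ < r / 2 + r / 2 := by
          rw [dist_comm y (x n), dist_eq_norm, dist_eq_norm]
          exact add_lt_add h1 h2
      _ = r := by ring
  obtain ⟨x', hx'⟩ := cauchySeq_tendsto_of_complete hcauchy
  refine ⟨x', ?_, hx'⟩
  rw [← hScl.closure_eq, Metric.mem_closure_iff]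
  intro r hr
  obtain ⟨n, y, hy, hb⟩ := key (r / 2) (by positivity)
  refine ⟨y, hy, ?_⟩
  have hlim : Tendsto (fun m => dist (x m) y) atTop (𝓝 (dist x' y)) :=
    (hx'.dist tendsto_const_nhds)
  have hle : dist x' y ≤ r / 2 :=
    le_of_tendsto hlim (eventually_atTop.2 ⟨n, fun m hm => by
      rw [dist_eq_norm]; exact (hb m hm).le⟩)
  linarith
end
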